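/- arXiv:2502.02852 — 7 statements merged into one kernel-verified Lean document; each statement's English description precedes it below -/
import Mathlib

section
/- Sequential Gronwall bound by iterated integrals: if u : ℕ × [0,t] → ℝ₊ satisfies u(0,r) ≤ B for all r ∈ [0,t] and u(k,r) ≤ 2 ∫_{(r,t]} u(k-1,s) ρ(ds) for all k ≥ 1 and r ∈ [0,t], where ρ is a finite measure on (0,t], then u(k,r) ≤ B (2ρ((0,t]))^k / k! for all k ≥ 0 and r ∈ [0,t]; consequently ∑_{k≥0} u(k,r) ≤ B e^{2ρ((0,t])}. -/
open Real MeasureTheory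

section aux

open Set


lemma tail_bound (ρ : Measure ℝ) [IsFiniteMeasure ρ] (r t x : ℝ) (hx : 0 ≤ x) :
    ρ {s | s ∈ Set.Ioc r t ∧ x ≤ (ρ (Set.Ioc s t)).toReal} ≤
      ENNReal.ofReal ((ρ (Set.Ioc r t)).toReal - x) := by
  set A := {s | s ∈ Set.Ioc r t ∧ x ≤ (ρ (Set.Ioc s t)).toReal} with hA
  rcases A.eq_empty_or_nonempty with h | hne
  · simp [h]
  -- sub-step
  have step : ∀ b ∈ A, ρ (Set.Ioc r b) ≤ ENNReal.ofReal ((ρ (Set.Ioc r t)).toReal - x) := by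
    intro b hb
    obtain ⟨⟨hrb, hbt⟩, hxb⟩ := hb
    have hsum : ρ (Set.Ioc r b) + ENNReal.ofReal x ≤ ρ (Set.Ioc r t) := by
      have h1 : ENNReal.ofReal x ≤ ρ (Set.Ioc b t) :=
        (ENNReal.ofReal_le_iff_le_toReal (measure_ne_top _ _)).2 hxb
      calc ρ (Set.Ioc r b) + ENNReal.ofReal x ≤ ρ (Set.Ioc r b) + ρ (Set.Ioc b t) :=
            by gcongr
        _ = ρ (Set.Ioc r b ∪ Set.Ioc b t) :=
            (measure_union (Set.Ioc_disjoint_Ioc_of_le le_rfl) measurableSet_Ioc).symm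
        _ = ρ (Set.Ioc r t) := by rw [Set.Ioc_union_Ioc_eq_Ioc hrb.le hbt]
    have := ENNReal.le_sub_of_add_le_right ENNReal.ofReal_ne_top hsum
    rwa [← ENNReal.ofReal_toReal (measure_ne_top ρ (Set.Ioc r t)), ← ENNReal.ofReal_sub _ hx] at this
  have hbdd : BddAbove A := ⟨t, fun a ha => ha.1.2⟩
  by_cases hsup : sSup A ∈ A
  · refine le_trans (measure_mono ?_) (step _ hsup)
    intro a ha
    exact ⟨ha.1.1, le_csSup hbdd ha⟩
  · obtain ⟨w, hwmono, hwt, hwA⟩ := exists_seq_tendsto_sSup hne hbdd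
    have hcover : A ⊆ ⋃ n, Set.Ioc r (w n) := by
      intro a ha
      by_contra hcon
      simp only [Set.mem_iUnion, Set.mem_Ioc, not_exists, not_and] at hcon
      have : ∀ n, w n < a := fun n => lt_of_not_ge (hcon n ha.1.1)
      have hle : sSup A ≤ a := le_of_tendsto hwt (Filter.Eventually.of_forall fun n => (this n).le)
      have : a = sSup A := le_antisymm (le_csSup hbdd ha) hle
      exact hsup (this ▸ ha)
    calc ρ A ≤ ρ (⋃ n, Set.Ioc r (w n)) := measure_mono hcover
      _ = ⨆ n, ρ (Set.Ioc r (w n)) :=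
          Directed.measure_iUnion ((Monotone.directed_le (fun m n hmn =>
            Set.Ioc_subset_Ioc_right (hwmono hmn))))
      _ ≤ _ := iSup_le fun n => step _ (hwA n)

lemma key_int (ρ : Measure ℝ) [IsFiniteMeasure ρ] (r t : ℝ) (k : ℕ) :
    ∫⁻ s in Set.Ioc r t, ENNReal.ofReal ((ρ (Set.Ioc s t)).toReal ^ k) ∂ρ ≤
      ENNReal.ofReal ((ρ (Set.Ioc r t)).toReal ^ (k + 1) / ((k : ℝ) + 1)) := by
  set c : ℝ := (ρ (Set.Ioc r t)).toReal with hc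
  have hc0 : 0 ≤ c := ENNReal.toReal_nonneg
  have hf_anti : Antitone (fun s => (ρ (Set.Ioc s t)).toReal) := fun s₁ s₂ h =>
    ENNReal.toReal_mono (measure_ne_top _ _) (measure_mono (Set.Ioc_subset_Ioc_left h))
  have hf_meas : Measurable (fun s => (ρ (Set.Ioc s t)).toReal) := hf_anti.measurable
  rcases Nat.eq_zero_or_pos k with rfl | hk
  · simp only [pow_zero, pow_one, Nat.cast_zero, zero_add, div_one, ENNReal.ofReal_one,
      lintegral_const, one_mul, Measure.restrict_apply MeasurableSet.univ, Set.univ_inter]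
    exact le_of_eq (ENNReal.ofReal_toReal (measure_ne_top ρ (Set.Ioc r t))).symm
  obtain ⟨m, rfl⟩ : ∃ m, k = m + 1 := ⟨k - 1, (Nat.succ_pred_eq_of_pos hk).symm⟩
  set μ := ρ.restrict (Set.Ioc r t) with hμ
  -- layer cake
  have g_int : ∀ x > (0:ℝ), IntervalIntegrable (fun y => ((m:ℝ)+1) * y ^ m) volume 0 x :=
    fun x _ => (Continuous.intervalIntegrable (continuous_const.mul (continuous_pow m)) 0 x)
  have g_nn : ∀ᵐ y ∂(volume.restrict (Set.Ioi (0:ℝ))), 0 ≤ ((m:ℝ)+1) * y ^ m := by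
    rw [ae_restrict_iff' measurableSet_Ioi]
    refine Filter.Eventually.of_forall fun y hy => ?_
    have h0y : (0:ℝ) < y := hy
    positivity
  have comp := lintegral_comp_eq_lintegral_meas_le_mul μ
    (Filter.Eventually.of_forall fun s => ENNReal.toReal_nonneg)
    hf_meas.aemeasurable g_int g_nn
  have lhs_eq : ∫⁻ s, ENNReal.ofReal (∫ y in (0:ℝ)..(ρ (Set.Ioc s t)).toReal, ((m:ℝ)+1) * y ^ m) ∂μ
      = ∫⁻ s, ENNReal.ofReal ((ρ (Set.Ioc s t)).toReal ^ (m + 1)) ∂μ := by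
    apply lintegral_congr fun s => ?_
    congr 1
    rw [intervalIntegral.integral_const_mul, integral_pow]
    have : ((m:ℝ)+1) ≠ 0 := by positivity
    field_simp
    simp
  rw [lhs_eq] at comp
  rw [comp]
  -- split the domain
  have hsplit : Set.Ioi (0:ℝ) = Set.Ioc 0 c ∪ Set.Ioi c := (Set.Ioc_union_Ioi_eq_Ioi hc0).symm
  rw [hsplit, lintegral_union measurableSet_Ioi (Set.Ioc_disjoint_Ioi le_rfl)]
  have hzero : ∫⁻ x in Set.Ioi c,
      μ {a | x ≤ (ρ (Set.Ioc a t)).toReal} * ENNReal.ofReal (((m:ℝ)+1) * x ^ m) = 0 := by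
    rw [setLIntegral_congr_fun measurableSet_Ioi
      (fun x (hx : x ∈ Set.Ioi c) => ?_), lintegral_zero]
    have hempty : {a | x ≤ (ρ (Set.Ioc a t)).toReal} ∩ Set.Ioc r t = ∅ := by
      ext s
      simp only [Set.mem_inter_iff, Set.mem_setOf_eq, Set.mem_empty_iff_false, iff_false, not_and]
      intro hxs hs
      have : (ρ (Set.Ioc s t)).toReal ≤ c := ENNReal.toReal_mono (measure_ne_top _ _)
        (measure_mono (Set.Ioc_subset_Ioc_left hs.1.le))
      have : c < x := hx
      linarith
    rw [hμ, Measure.restrict_apply' measurableSet_Ioc, hempty, measure_empty, zero_mul]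
  rw [hzero, add_zero]
  -- bound on Ioc 0 c
  have hmono : ∫⁻ x in Set.Ioc 0 c,
      μ {a | x ≤ (ρ (Set.Ioc a t)).toReal} * ENNReal.ofReal (((m:ℝ)+1) * x ^ m)
      ≤ ∫⁻ x in Set.Ioc 0 c, ENNReal.ofReal ((c - x) * (((m:ℝ)+1) * x ^ m)) := by
    apply setLIntegral_mono
    · exact ((continuous_const.sub continuous_id).mul
        (continuous_const.mul (continuous_pow m))).measurable.ennreal_ofReal
    · intro x hx
      rw [ENNReal.ofReal_mul (by linarith [hx.2] : (0:ℝ) ≤ c - x)]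
      apply mul_le_mul_left
      have hrw : μ {a | x ≤ (ρ (Set.Ioc a t)).toReal}
          = ρ {s | s ∈ Set.Ioc r t ∧ x ≤ (ρ (Set.Ioc s t)).toReal} := by
        rw [hμ, Measure.restrict_apply' measurableSet_Ioc]
        congr 1
        ext s; simp [and_comm]
      rw [hrw]
      exact tail_bound ρ r t x hx.1.le
  refine hmono.trans ?_
  have hint : IntegrableOn (fun x => (c - x) * (((m:ℝ)+1) * x ^ m)) (Set.Ioc 0 c) volume :=
    ((continuous_const.sub continuous_id).mul
      (continuous_const.mul (continuous_pow m))).integrableOn_Ioc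
  rw [← ofReal_integral_eq_lintegral_ofReal hint ((ae_restrict_iff' measurableSet_Ioc).2
    (Filter.Eventually.of_forall fun x hx => mul_nonneg (by linarith [hx.2])
      (mul_nonneg (by positivity) (pow_nonneg hx.1.le m))))]
  apply ENNReal.ofReal_le_ofReal
  rw [← intervalIntegral.integral_of_le hc0]
  have expand : ∀ x : ℝ, (c - x) * (((m:ℝ)+1) * x ^ m)
      = (((m:ℝ)+1) * c) * x ^ m - ((m:ℝ)+1) * x ^ (m+1) := by
    intro x; ring
  rw [intervalIntegral.integral_congr (fun x _ => expand x)]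
  rw [intervalIntegral.integral_sub (f := fun x => ((m:ℝ)+1) * c * x ^ m) (g := fun x => ((m:ℝ)+1) * x ^ (m+1))
    ((Continuous.intervalIntegrable (continuous_const.mul (continuous_pow m)) 0 c))
    ((Continuous.intervalIntegrable (continuous_const.mul (continuous_pow (m+1))) 0 c)),
    intervalIntegral.integral_const_mul, intervalIntegral.integral_const_mul,
    integral_pow, integral_pow]
  apply le_of_eq
  have h1 : ((m:ℝ)+1) ≠ 0 := by positivity
  have h2 : ((m:ℝ)+2) ≠ 0 := by positivity
  rw [zero_pow (by omega : m+1 ≠ 0), zero_pow (by omega : m+1+1 ≠ 0)]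
  push_cast
  field_simp
  ring

end aux

/-- sequential Gronwall bound by iterated integrals. If
`u : ℕ × [0,t] → ℝ₊` satisfies `u 0 r ≤ B` and
`u k r ≤ 2 ∫_{(r,t]} u (k-1) s ρ(ds)` for `k ≥ 1`, with `ρ` a finite measure on
`(0,t]`, then `u k r ≤ B (2ρ((0,t]))^k / k!` for all `k`, and
`∑_k u k r ≤ B e^{2ρ((0,t])}`. -/
theorem stmt5 (t : ℝ) (ht : 0 < t) (B : ℝ) (hB : 0 ≤ B)
    (ρ : Measure ℝ) [IsFiniteMeasure ρ] (hρ : ρ (Set.Ioc 0 t)ᶜ = 0)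
    (u : ℕ → ℝ → ℝ) (hmeas : ∀ k, Measurable (u k))
    (hpos : ∀ k, ∀ r ∈ Set.Icc (0 : ℝ) t, 0 ≤ u k r)
    (h0 : ∀ r ∈ Set.Icc (0 : ℝ) t, u 0 r ≤ B)
    (hrec : ∀ k : ℕ, ∀ r ∈ Set.Icc (0 : ℝ) t,
      u (k + 1) r ≤ 2 * ∫ s in Set.Ioc r t, u k s ∂ρ) :
    (∀ k : ℕ, ∀ r ∈ Set.Icc (0 : ℝ) t,
      u k r ≤ B * (2 * (ρ (Set.Ioc 0 t)).toReal) ^ k / Nat.factorial k) ∧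
    (∀ r ∈ Set.Icc (0 : ℝ) t,
      ∑' k : ℕ, u k r ≤ B * Real.exp (2 * (ρ (Set.Ioc 0 t)).toReal)) := by
  set M : ℝ := (ρ (Set.Ioc 0 t)).toReal with hM
  have hM0 : 0 ≤ M := ENNReal.toReal_nonneg
  have hf_anti : Antitone (fun s => (ρ (Set.Ioc s t)).toReal) := fun s₁ s₂ h =>
    ENNReal.toReal_mono (measure_ne_top _ _) (measure_mono (Set.Ioc_subset_Ioc_left h))
  have hf_meas : Measurable (fun s => (ρ (Set.Ioc s t)).toReal) := hf_anti.measurable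
  have main : ∀ k : ℕ, ∀ r ∈ Set.Icc (0:ℝ) t,
      u k r ≤ B * 2 ^ k * (ρ (Set.Ioc r t)).toReal ^ k / Nat.factorial k := by
    intro k
    induction k with
    | zero => intro r hr; simpa using h0 r hr
    | succ k ih =>
      intro r hr
      have hsub : Set.Ioc r t ⊆ Set.Icc 0 t := fun s hs => ⟨hr.1.trans hs.1.le, hs.2⟩
      set C : ℝ := B * 2 ^ k / Nat.factorial k with hC
      have hfac : (0:ℝ) < Nat.factorial k := by exact_mod_cast k.factorial_pos
      have hC0 : 0 ≤ C := by positivity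
      set X : ℝ := (ρ (Set.Ioc r t)).toReal with hX
      have hX0 : 0 ≤ X := ENNReal.toReal_nonneg
      have hint_le : ∫ s in Set.Ioc r t, u k s ∂ρ ≤ C * (X ^ (k+1) / ((k:ℝ)+1)) := by
        rw [integral_eq_lintegral_of_nonneg_ae
          ((ae_restrict_iff' measurableSet_Ioc).2 (Filter.Eventually.of_forall
            fun s hs => hpos k s (hsub hs)))
          (hmeas k).aestronglyMeasurable]
        have hb1 : ∫⁻ s in Set.Ioc r t, ENNReal.ofReal (u k s) ∂ρ
            ≤ ∫⁻ s in Set.Ioc r t,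
              ENNReal.ofReal C * ENNReal.ofReal ((ρ (Set.Ioc s t)).toReal ^ k) ∂ρ := by
          apply setLIntegral_mono
          · exact measurable_const.mul (hf_meas.pow_const k).ennreal_ofReal
          · intro s hs
            rw [← ENNReal.ofReal_mul hC0]
            apply ENNReal.ofReal_le_ofReal
            calc u k s ≤ B * 2 ^ k * (ρ (Set.Ioc s t)).toReal ^ k / Nat.factorial k :=
                  ih s (hsub hs)
              _ = C * (ρ (Set.Ioc s t)).toReal ^ k := by rw [hC]; ring
        have hb2 : ∫⁻ s in Set.Ioc r t,
              ENNReal.ofReal C * ENNReal.ofReal ((ρ (Set.Ioc s t)).toReal ^ k) ∂ρ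
            = ENNReal.ofReal C
              * ∫⁻ s in Set.Ioc r t, ENNReal.ofReal ((ρ (Set.Ioc s t)).toReal ^ k) ∂ρ :=
          lintegral_const_mul _ (hf_meas.pow_const k).ennreal_ofReal
        have hb : ∫⁻ s in Set.Ioc r t, ENNReal.ofReal (u k s) ∂ρ
            ≤ ENNReal.ofReal C * ENNReal.ofReal (X ^ (k+1) / ((k:ℝ)+1)) := by
          refine hb1.trans ?_
          rw [hb2]
          exact mul_le_mul_right (key_int ρ r t k) _
        have hne : ENNReal.ofReal C * ENNReal.ofReal (X ^ (k+1) / ((k:ℝ)+1)) ≠ ⊤ :=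
          ENNReal.mul_ne_top ENNReal.ofReal_ne_top ENNReal.ofReal_ne_top
        calc (∫⁻ s in Set.Ioc r t, ENNReal.ofReal (u k s) ∂ρ).toReal
            ≤ (ENNReal.ofReal C * ENNReal.ofReal (X ^ (k+1) / ((k:ℝ)+1))).toReal :=
              ENNReal.toReal_mono hne hb
          _ = C * (X ^ (k+1) / ((k:ℝ)+1)) := by
              rw [← ENNReal.ofReal_mul hC0, ENNReal.toReal_ofReal (by positivity)]
      calc u (k+1) r ≤ 2 * ∫ s in Set.Ioc r t, u k s ∂ρ := hrec k r hr
        _ ≤ 2 * (C * (X ^ (k+1) / ((k:ℝ)+1))) := by linarith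
        _ = B * 2 ^ (k+1) * X ^ (k+1) / Nat.factorial (k+1) := by
            rw [hC, Nat.factorial_succ]
            push_cast
            field_simp
            ring
  have parta : ∀ k : ℕ, ∀ r ∈ Set.Icc (0:ℝ) t,
      u k r ≤ B * (2 * M) ^ k / Nat.factorial k := by
    intro k r hr
    refine (main k r hr).trans ?_
    have hXM : (ρ (Set.Ioc r t)).toReal ≤ M :=
      ENNReal.toReal_mono (measure_ne_top _ _) (measure_mono (Set.Ioc_subset_Ioc_left hr.1))
    have hfac : (0:ℝ) < Nat.factorial k := by exact_mod_cast k.factorial_pos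
    calc B * 2 ^ k * (ρ (Set.Ioc r t)).toReal ^ k / Nat.factorial k
        ≤ B * 2 ^ k * M ^ k / Nat.factorial k := by
          gcongr
      _ = B * (2 * M) ^ k / Nat.factorial k := by rw [mul_pow]; ring
  refine ⟨parta, fun r hr => ?_⟩
  have hsum2 : Summable (fun k : ℕ => B * (2*M) ^ k / Nat.factorial k) := by
    simpa [mul_div_assoc] using (Real.summable_pow_div_factorial (2*M)).mul_left B
  have hsumu : Summable (fun k => u k r) :=
    Summable.of_nonneg_of_le (fun k => hpos k r hr) (fun k => parta k r hr) hsum2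
  calc ∑' k, u k r ≤ ∑' k : ℕ, B * (2*M) ^ k / Nat.factorial k :=
        Summable.tsum_le_tsum (fun k => parta k r hr) hsumu hsum2
    _ = B * Real.exp (2*M) := by
        rw [Real.exp_eq_exp_ℝ, NormedSpace.exp_eq_tsum_div, ← tsum_mul_left]
        congr 1 with k
        rw [mul_div_assoc]
end

section
/- Uniqueness of bounded solutions to the linear backward equation system: if π, π' : [0,t] → ℝ² are bounded measurable functions both satisfying, for i=1,2 and j≠i, π_i(r) = λ_i + ∫_{(r,t]} π_j(s) b̄_ij(ds) - ∫_{(r,t]} π_i(s) b_ii(ds) for all r ∈ [0,t], then π = π' on [0,t]. -/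
open Real MeasureTheory

/-- uniqueness of bounded solutions to the linear backward equation
system. The diagonal coefficient `b i i` is a right-continuous function of locally
bounded variation, represented as the difference `bp i - bn i` of two Stieltjes
functions; `bbar i j` (`i ≠ j`) is an increasing right-continuous function with
`bbar i j 0 = 0`. If two bounded measurable functions `π, π' : [0,t] → ℝ²` both satisfy
`π i r = λ i + ∫_{(r,t]} π j dbbar i j − ∫_{(r,t]} π i db i i` on `[0,t]`,
then they coincide on `[0,t]`. -/
theorem stmt6 (t : ℝ) (ht : 0 < t) (lam : Fin 2 → ℝ)
    (bbar : Fin 2 → Fin 2 → StieltjesFunction ℝ)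
    (hbbar0 : ∀ i j : Fin 2, i ≠ j → bbar i j 0 = 0)
    (bp bn : Fin 2 → StieltjesFunction ℝ)
    (hb0 : ∀ i, bp i 0 - bn i 0 = 0)
    (p q : Fin 2 → ℝ → ℝ)
    (hp_meas : ∀ i, Measurable (p i)) (hq_meas : ∀ i, Measurable (q i))
    (hp_bdd : ∃ C, ∀ i, ∀ r ∈ Set.Icc (0 : ℝ) t, |p i r| ≤ C)
    (hq_bdd : ∃ C, ∀ i, ∀ r ∈ Set.Icc (0 : ℝ) t, |q i r| ≤ C)
    (hp : ∀ i j : Fin 2, i ≠ j → ∀ r ∈ Set.Icc (0 : ℝ) t,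
      p i r = lam i + (∫ s in Set.Ioc r t, p j s ∂(bbar i j).measure) -
        ((∫ s in Set.Ioc r t, p i s ∂(bp i).measure) -
          ∫ s in Set.Ioc r t, p i s ∂(bn i).measure))
    (hq : ∀ i j : Fin 2, i ≠ j → ∀ r ∈ Set.Icc (0 : ℝ) t,
      q i r = lam i + (∫ s in Set.Ioc r t, q j s ∂(bbar i j).measure) -
        ((∫ s in Set.Ioc r t, q i s ∂(bp i).measure) -
          ∫ s in Set.Ioc r t, q i s ∂(bn i).measure)) :
    ∀ i, ∀ r ∈ Set.Icc (0 : ℝ) t, p i r = q i r := by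
  classical
  obtain ⟨Cp, hCp⟩ := hp_bdd
  obtain ⟨Cq, hCq⟩ := hq_bdd
  set f : Fin 2 → ℝ → ℝ := fun i s => p i s - q i s with hfdef
  set g : ℝ → ℝ := fun s => |f 0 s| + |f 1 s| with hgdef
  have hgnn : ∀ s, 0 ≤ g s := fun s => add_nonneg (abs_nonneg _) (abs_nonneg _)
  have hg_meas : Measurable g :=
    (((hp_meas 0).sub (hq_meas 0)).abs.add ((hp_meas 1).sub (hq_meas 1)).abs)
  have hfg : ∀ (i : Fin 2) s, |f i s| ≤ g s := by
    intro i s; fin_cases i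
    · exact le_add_of_nonneg_right (abs_nonneg _)
    · exact le_add_of_nonneg_left (abs_nonneg _)
  have hfbound : ∀ (k : Fin 2), ∀ x ∈ Set.Icc (0:ℝ) t, |f k x| ≤ Cp + Cq := by
    intro k x hx
    calc |f k x| ≤ |p k x| + |q k x| := abs_sub _ _
    _ ≤ Cp + Cq := add_le_add (hCp k x hx) (hCq k x hx)
  have hgbound : ∀ x ∈ Set.Icc (0:ℝ) t, |g x| ≤ 2 * (Cp + Cq) := by
    intro x hx
    rw [abs_of_nonneg (hgnn x)]
    have h0 := hfbound 0 x hx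
    have h1 := hfbound 1 x hx
    simp only [hgdef]; linarith
  -- the combined measure
  set ν : Measure ℝ := (bbar 0 1).measure + (bbar 1 0).measure + (bp 0).measure +
    (bn 0).measure + (bp 1).measure + (bn 1).measure with hνdef
  have hSfin : ∀ (F : StieltjesFunction ℝ) (r : ℝ), F.measure (Set.Ioc r t) ≠ ⊤ := by
    intro F r; rw [StieltjesFunction.measure_Ioc]; exact ENNReal.ofReal_ne_top
  have hνfin : ∀ r : ℝ, ν (Set.Ioc r t) ≠ ⊤ := by
    intro r
    simp only [hνdef, Measure.add_apply]
    simp only [ENNReal.add_ne_top]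
    exact ⟨⟨⟨⟨⟨hSfin _ r, hSfin _ r⟩, hSfin _ r⟩, hSfin _ r⟩, hSfin _ r⟩, hSfin _ r⟩
  -- generic integrability
  have hIntOn : ∀ (u : ℝ → ℝ), Measurable u → ∀ C : ℝ, (∀ x ∈ Set.Icc (0:ℝ) t, |u x| ≤ C) →
      ∀ (μ : Measure ℝ), μ (Set.Ioc 0 t) ≠ ⊤ → ∀ r, 0 ≤ r →
      IntegrableOn u (Set.Ioc r t) μ := by
    intro u hu C hC μ hμ r hr
    refine Measure.integrableOn_of_bounded (M := C)
      (ne_top_of_le_ne_top hμ (measure_mono (Set.Ioc_subset_Ioc_left hr)))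
      hu.aestronglyMeasurable ?_
    filter_upwards [ae_restrict_mem measurableSet_Ioc] with x hx
    rw [Real.norm_eq_abs]
    exact hC x ⟨hr.trans hx.1.le, hx.2⟩
  have hgν_int : ∀ r, 0 ≤ r → IntegrableOn g (Set.Ioc r t) ν :=
    fun r hr => hIntOn g hg_meas _ hgbound ν (hνfin 0) r hr
  -- measure ordering facts
  have h01 : (bbar 0 1).measure ≤ ν := by
    rw [hνdef]
    exact ((((Measure.le_add_right le_rfl).trans (Measure.le_add_right le_rfl)).trans
      (Measure.le_add_right le_rfl)).trans (Measure.le_add_right le_rfl)).trans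
      (Measure.le_add_right le_rfl)
  have h10 : (bbar 1 0).measure ≤ ν := by
    rw [hνdef]
    exact ((((Measure.le_add_left le_rfl).trans (Measure.le_add_right le_rfl)).trans
      (Measure.le_add_right le_rfl)).trans (Measure.le_add_right le_rfl)).trans
      (Measure.le_add_right le_rfl)
  have hbp0 : (bp 0).measure ≤ ν := by
    rw [hνdef]
    exact (((Measure.le_add_left le_rfl).trans (Measure.le_add_right le_rfl)).trans
      (Measure.le_add_right le_rfl)).trans (Measure.le_add_right le_rfl)
  have hbn0 : (bn 0).measure ≤ ν := by
    rw [hνdef]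
    exact ((Measure.le_add_left le_rfl).trans (Measure.le_add_right le_rfl)).trans
      (Measure.le_add_right le_rfl)
  have hbp1 : (bp 1).measure ≤ ν := by
    rw [hνdef]
    exact (Measure.le_add_left le_rfl).trans (Measure.le_add_right le_rfl)
  have hbn1 : (bn 1).measure ≤ ν := by
    rw [hνdef]
    exact Measure.le_add_left le_rfl
  -- key estimate
  have key : ∀ i : Fin 2, ∀ r ∈ Set.Icc (0:ℝ) t,
      |f i r| ≤ 3 * ∫ s in Set.Ioc r t, g s ∂ν := by
    have main : ∀ i j : Fin 2, i ≠ j → (bbar i j).measure ≤ ν → (bp i).measure ≤ ν →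
        (bn i).measure ≤ ν → ∀ r ∈ Set.Icc (0:ℝ) t,
        |f i r| ≤ 3 * ∫ s in Set.Ioc r t, g s ∂ν := by
      intro i j hij h1 h2 h3 r hr
      have hr0 := hr.1
      have habs : ∀ (μ : Measure ℝ), μ ≤ ν → μ (Set.Ioc 0 t) ≠ ⊤ → ∀ k : Fin 2,
          |∫ s in Set.Ioc r t, f k s ∂μ| ≤ ∫ s in Set.Ioc r t, g s ∂ν := by
        intro μ hμν hμfin k
        have ik : IntegrableOn (f k) (Set.Ioc r t) μ :=
          hIntOn _ ((hp_meas k).sub (hq_meas k)) _ (hfbound k) μ hμfin r hr0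
        have igμ : IntegrableOn g (Set.Ioc r t) μ :=
          hIntOn g hg_meas _ hgbound μ hμfin r hr0
        calc |∫ s in Set.Ioc r t, f k s ∂μ| ≤ ∫ s in Set.Ioc r t, |f k s| ∂μ := by
              simpa [Real.norm_eq_abs] using
                norm_integral_le_integral_norm (μ := μ.restrict (Set.Ioc r t))
                  (fun s => f k s)
        _ ≤ ∫ s in Set.Ioc r t, g s ∂μ :=
              setIntegral_mono_on ik.abs igμ measurableSet_Ioc (fun x _ => hfg k x)
        _ ≤ ∫ s in Set.Ioc r t, g s ∂ν :=
              integral_mono_measure (Measure.restrict_mono le_rfl hμν)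
                (ae_of_all _ hgnn) (hgν_int r hr0)
      have ip1 : IntegrableOn (p j) (Set.Ioc r t) (bbar i j).measure :=
        hIntOn _ (hp_meas j) Cp (fun x hx => hCp j x hx) _ (hSfin _ 0) r hr0
      have iq1 : IntegrableOn (q j) (Set.Ioc r t) (bbar i j).measure :=
        hIntOn _ (hq_meas j) Cq (fun x hx => hCq j x hx) _ (hSfin _ 0) r hr0
      have ip2 : IntegrableOn (p i) (Set.Ioc r t) (bp i).measure :=
        hIntOn _ (hp_meas i) Cp (fun x hx => hCp i x hx) _ (hSfin _ 0) r hr0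
      have iq2 : IntegrableOn (q i) (Set.Ioc r t) (bp i).measure :=
        hIntOn _ (hq_meas i) Cq (fun x hx => hCq i x hx) _ (hSfin _ 0) r hr0
      have ip3 : IntegrableOn (p i) (Set.Ioc r t) (bn i).measure :=
        hIntOn _ (hp_meas i) Cp (fun x hx => hCp i x hx) _ (hSfin _ 0) r hr0
      have iq3 : IntegrableOn (q i) (Set.Ioc r t) (bn i).measure :=
        hIntOn _ (hq_meas i) Cq (fun x hx => hCq i x hx) _ (hSfin _ 0) r hr0
      have e1 : ∫ s in Set.Ioc r t, f j s ∂(bbar i j).measure =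
          (∫ s in Set.Ioc r t, p j s ∂(bbar i j).measure) -
          ∫ s in Set.Ioc r t, q j s ∂(bbar i j).measure := integral_sub ip1 iq1
      have e2 : ∫ s in Set.Ioc r t, f i s ∂(bp i).measure =
          (∫ s in Set.Ioc r t, p i s ∂(bp i).measure) -
          ∫ s in Set.Ioc r t, q i s ∂(bp i).measure := integral_sub ip2 iq2
      have e3 : ∫ s in Set.Ioc r t, f i s ∂(bn i).measure =
          (∫ s in Set.Ioc r t, p i s ∂(bn i).measure) -
          ∫ s in Set.Ioc r t, q i s ∂(bn i).measure := integral_sub ip3 iq3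
      have hfir : f i r = (∫ s in Set.Ioc r t, f j s ∂(bbar i j).measure) -
          (∫ s in Set.Ioc r t, f i s ∂(bp i).measure) +
          ∫ s in Set.Ioc r t, f i s ∂(bn i).measure := by
        show p i r - q i r = _
        rw [hp i j hij r hr, hq i j hij r hr, e1, e2, e3]
        ring
      calc |f i r| ≤ |∫ s in Set.Ioc r t, f j s ∂(bbar i j).measure| +
            |∫ s in Set.Ioc r t, f i s ∂(bp i).measure| +
            |∫ s in Set.Ioc r t, f i s ∂(bn i).measure| := by
            rw [hfir]
            exact (abs_add_le _ _).trans (add_le_add_left (abs_sub _ _) _)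
      _ ≤ (∫ s in Set.Ioc r t, g s ∂ν) + (∫ s in Set.Ioc r t, g s ∂ν) +
            ∫ s in Set.Ioc r t, g s ∂ν :=
            add_le_add (add_le_add (habs _ h1 (hSfin _ 0) j) (habs _ h2 (hSfin _ 0) i))
              (habs _ h3 (hSfin _ 0) i)
      _ = 3 * ∫ s in Set.Ioc r t, g s ∂ν := by ring
    intro i r hr
    fin_cases i
    · exact main 0 1 (by decide) h01 hbp0 hbn0 r hr
    · exact main 1 0 (by decide) h10 hbp1 hbn1 r hr
  -- the set where g vanishes up to t
  set S : Set ℝ := {r | r ∈ Set.Icc (0:ℝ) t ∧ ∀ s ∈ Set.Icc r t, g s = 0} with hSdef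
  have hgt' : g t = 0 := by
    have h0 := key 0 t ⟨ht.le, le_rfl⟩
    have h1 := key 1 t ⟨ht.le, le_rfl⟩
    rw [Set.Ioc_self, Measure.restrict_empty, integral_zero_measure] at h0 h1
    have := abs_nonneg (f 0 t); have := abs_nonneg (f 1 t)
    simp only [hgdef]; linarith
  have htS : t ∈ S := by
    refine ⟨⟨ht.le, le_rfl⟩, fun s hs => ?_⟩
    have : s = t := le_antisymm hs.2 hs.1
    rw [this]; exact hgt'
  have hSbdd : BddBelow S := ⟨0, fun r hr => hr.1.1⟩
  have hSne : S.Nonempty := ⟨t, htS⟩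
  set c := sInf S with hcdef
  have hc0 : 0 ≤ c := le_csInf hSne (fun r hr => hr.1.1)
  have hct : c ≤ t := csInf_le hSbdd htS
  have hgt_zero : ∀ s, c < s → s ≤ t → g s = 0 := by
    intro s hcs hst
    obtain ⟨r, hrS, hrs⟩ := (csInf_lt_iff hSbdd hSne).mp hcs
    exact hrS.2 s ⟨hrs.le, hst⟩
  have hintzero : ∫ s in Set.Ioc c t, g s ∂ν = 0 := by
    apply setIntegral_eq_zero_of_forall_eq_zero
    intro x hx; exact hgt_zero x hx.1 hx.2
  have hgc : g c = 0 := by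
    have h0 := key 0 c ⟨hc0, hct⟩
    have h1 := key 1 c ⟨hc0, hct⟩
    rw [hintzero] at h0 h1
    have := abs_nonneg (f 0 c); have := abs_nonneg (f 1 c)
    simp only [hgdef]; linarith
  have hcS : c ∈ S := ⟨⟨hc0, hct⟩, fun s hs =>
    hs.1.eq_or_lt.elim (fun h => h ▸ hgc) (fun h => hgt_zero s h hs.2)⟩
  have hceq : c = 0 := by
    by_contra hne
    have hcpos : 0 < c := hc0.lt_of_ne (Ne.symm hne)
    -- find a small interval to the left of c with small ν-measure
    have hanti : Antitone (fun n : ℕ => Set.Ioo (c - 1/(n+1)) c) := by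
      intro m n hmn
      apply Set.Ioo_subset_Ioo _ le_rfl
      have : (1:ℝ)/(n+1) ≤ 1/(m+1) := by
        apply one_div_le_one_div_of_le
        · positivity
        · exact_mod_cast Nat.succ_le_succ hmn
      linarith
    have hiInter : (⋂ n : ℕ, Set.Ioo (c - 1/(n+1)) c) = ∅ := by
      ext x
      simp only [Set.mem_iInter, Set.mem_Ioo, Set.mem_empty_iff_false, iff_false, not_forall]
      by_contra hcon
      push_neg at hcon
      have hxc : x < c := (hcon 0).2
      obtain ⟨n, hn⟩ := exists_nat_one_div_lt (sub_pos.mpr hxc)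
      have := (hcon n).1
      have : (1:ℝ)/(n+1) < 1/(n+1) := by linarith [hn]
      linarith
    have htend : Filter.Tendsto (fun n : ℕ => ν (Set.Ioo (c - 1/(n+1)) c)) Filter.atTop
        (nhds 0) := by
      have := tendsto_measure_iInter_atTop (μ := ν)
        (fun n => measurableSet_Ioo.nullMeasurableSet) hanti
        ⟨0, ne_top_of_le_ne_top (hνfin (c - 2)) (measure_mono (fun x hx => by
          have h1 := hx.1; have h2 := hx.2
          constructor
          · push_cast at h1; linarith
          · exact h2.le.trans hct))⟩
      rw [hiInter, measure_empty] at this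
      exact this
    obtain ⟨n, hn⟩ := (htend.eventually_lt_const
      (by simp : (0:ENNReal) < ENNReal.ofReal (1/12))).exists
    set δ : ℝ := min (1/(n+1)) c with hδdef
    have hδpos : 0 < δ := lt_min (by positivity) hcpos
    set a : ℝ := c - δ with hadef
    have ha0 : 0 ≤ a := by simp only [hadef, hδdef]; simp [sub_nonneg, min_le_right]
    have hac : a < c := by simp only [hadef]; linarith
    have hat : a ≤ t := hac.le.trans hct
    have hsub : Set.Ioo a c ⊆ Set.Ioo (c - 1/(n+1)) c := by
      apply Set.Ioo_subset_Ioo _ le_rfl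
      simp only [hadef, hδdef]
      have : min (1/(n+1 : ℝ)) c ≤ 1/(n+1) := min_le_left _ _
      linarith
    have hνsmall : ν (Set.Ioo a c) < ENNReal.ofReal (1/12) :=
      lt_of_le_of_lt (measure_mono hsub) hn
    have hνIoo_fin : ν (Set.Ioo a c) ≠ ⊤ := hνsmall.ne_top
    set T : ℝ := sSup (g '' Set.Ico a c) with hTdef
    have hne' : (g '' Set.Ico a c).Nonempty := ⟨g a, a, ⟨le_rfl, hac⟩, rfl⟩
    have hbddT : BddAbove (g '' Set.Ico a c) := by
      refine ⟨2 * (Cp + Cq), ?_⟩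
      rintro y ⟨x, hx, rfl⟩
      have hxIcc : x ∈ Set.Icc (0:ℝ) t := ⟨ha0.trans hx.1, (hx.2.le.trans hct)⟩
      exact (le_abs_self _).trans (hgbound x hxIcc)
    have hTnn : 0 ≤ T := (hgnn a).trans (le_csSup hbddT ⟨a, ⟨le_rfl, hac⟩, rfl⟩)
    set cR : ℝ := (ν (Set.Ioo a c)).toReal with hcRdef
    have hcRnn : 0 ≤ cR := ENNReal.toReal_nonneg
    have hcRlt : cR < 1/12 := ENNReal.toReal_lt_of_lt_ofReal hνsmall
    have hcontr : ∀ r ∈ Set.Ico a c, g r ≤ 6 * (T * cR) := by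
      intro r hr
      have hrIcc : r ∈ Set.Icc (0:ℝ) t := ⟨ha0.trans hr.1, hr.2.le.trans hct⟩
      have h0 := key 0 r hrIcc
      have h1 := key 1 r hrIcc
      have hIbound : ∫ s in Set.Ioc r t, g s ∂ν ≤ T * cR := by
        set G : ℝ → ℝ := (Set.Ioo a c).indicator (fun _ => T) with hGdef
        have hGint : IntegrableOn G (Set.Ioc r t) ν :=
          Integrable.indicator ((integrableOn_const_iff).mpr
            (Or.inr (lt_top_iff_ne_top.mpr (hνfin r)))) measurableSet_Ioo
        have hptwise : ∀ x ∈ Set.Ioc r t, g x ≤ G x := by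
          intro x hx
          by_cases hxc : x < c
          · have hxIoo : x ∈ Set.Ioo a c := ⟨hr.1.trans_lt hx.1, hxc⟩
            rw [hGdef, Set.indicator_of_mem hxIoo]
            exact le_csSup hbddT ⟨x, ⟨hxIoo.1.le, hxc⟩, rfl⟩
          · push_neg at hxc
            have hgx : g x = 0 := hxc.eq_or_lt.elim (fun h => h ▸ hgc)
              (fun h => hgt_zero x h hx.2)
            rw [hGdef, Set.indicator_of_notMem (fun h => absurd h.2 (not_lt.mpr hxc)), hgx]
        have hmono := setIntegral_mono_on (hgν_int r hrIcc.1) hGint measurableSet_Ioc hptwise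
        rw [hGdef, setIntegral_indicator measurableSet_Ioo, setIntegral_const,
          smul_eq_mul] at hmono
        refine hmono.trans ?_
        have hle : (ν (Set.Ioc r t ∩ Set.Ioo a c)).toReal ≤ cR :=
          ENNReal.toReal_mono hνIoo_fin (measure_mono Set.inter_subset_right)
        rw [mul_comm]
        exact mul_le_mul_of_nonneg_left hle hTnn
      have hf0 := hfg 0 r
      simp only [hgdef]
      linarith
    have hTle : T ≤ 6 * (T * cR) := by
      apply csSup_le hne'
      rintro y ⟨x, hx, rfl⟩
      exact hcontr x hx
    have hT0 : T ≤ 0 := by nlinarith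
    have hgz : ∀ r ∈ Set.Ico a c, g r = 0 := fun r hr =>
      le_antisymm ((le_csSup hbddT ⟨r, hr, rfl⟩).trans hT0) (hgnn r)
    have haS : a ∈ S := by
      refine ⟨⟨ha0, hat⟩, fun s hs => ?_⟩
      rcases lt_or_ge s c with h | h
      · exact hgz s ⟨hs.1, h⟩
      · exact h.eq_or_lt.elim (fun e => e ▸ hgc) (fun l => hgt_zero s l hs.2)
    have := csInf_le hSbdd haS
    rw [← hcdef] at this
    linarith
  intro i r hr
  have hg0 : g r = 0 := hcS.2 r (by rw [hceq]; exact hr)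
  have h1 : |f i r| ≤ 0 := (hfg i r).trans_eq hg0
  have h2 : f i r = 0 := abs_eq_zero.mp (le_antisymm h1 (abs_nonneg _))
  exact sub_eq_zero.mp h2
end

section
/- Existence and uniqueness of the bounded solution to the two-type linear (first-moment) backward system: for any t ≥ 0 and λ ∈ ℝ², there exists a unique bounded function r ↦ π(r) = (π₁(r),π₂(r)) ∈ ℝ² on [0,t] satisfying π_i(r) = λ_i + ∫_{(r,t]} π_j(s) b̄_ij(ds) - ∫_{(r,t]} π_i(s) b_ii(ds) for i=1,2, j≠i. -/
open Real MeasureTheory Set Filter Nat Topology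

noncomputable def Hf (ν : Measure ℝ) (t : ℝ) : ℝ → ℝ := fun r => (ν (Set.Ioc r t)).toReal

lemma Hf_nonneg (ν : Measure ℝ) (t r : ℝ) : 0 ≤ Hf ν t r := ENNReal.toReal_nonneg

lemma Hf_anti {ν : Measure ℝ} {t : ℝ} (hfin : ∀ r, ν (Set.Ioc r t) ≠ ⊤) :
    Antitone (Hf ν t) := fun a b hab =>
  ENNReal.toReal_mono (hfin a) (measure_mono (Set.Ioc_subset_Ioc_left hab))

lemma Hf_meas {ν : Measure ℝ} {t : ℝ} (hfin : ∀ r, ν (Set.Ioc r t) ≠ ⊤) :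
    Measurable (Hf ν t) := (Hf_anti hfin).measurable

lemma measM {ν : Measure ℝ} {t : ℝ} (hfin : ∀ r, ν (Set.Ioc r t) ≠ ⊤)
    {x : ℝ} (hx : 0 < x) (r : ℝ) :
    ν ({s | x ≤ Hf ν t s} ∩ Set.Ioc r t) ≤ ENNReal.ofReal (Hf ν t r - x) := by
  set S := {s | x ≤ Hf ν t s} ∩ Set.Ioc r t with hS
  rcases Set.eq_empty_or_nonempty S with hSe | hSn
  · simp [hSe]
  have hbdd : BddAbove S := ⟨t, fun s hs => hs.2.2⟩
  set a := sSup S with ha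
  have haS : ∀ s ∈ S, s ≤ a := fun s hs => le_csSup hbdd hs
  obtain ⟨u, umono, utend, umem⟩ := exists_seq_tendsto_sSup hSn hbdd
  have hat : a ≤ t := csSup_le hSn fun s hs => hs.2.2
  have hra : r < a := lt_of_lt_of_le (umem 0).2.1 (haS _ (umem 0))
  have key : ν S + ENNReal.ofReal x ≤ ν (Set.Ioc r t) := by
    by_cases haInS : x ≤ Hf ν t a
    · -- S ⊆ Ioc r a and x ≤ ν (Ioc a t)
      have h1 : ν S ≤ ν (Set.Ioc r a) :=
        measure_mono (fun s hs => ⟨hs.2.1, haS s hs⟩)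
      have h2 : ENNReal.ofReal x ≤ ν (Set.Ioc a t) := by
        calc ENNReal.ofReal x ≤ ENNReal.ofReal (Hf ν t a) := ENNReal.ofReal_le_ofReal haInS
        _ = ν (Set.Ioc a t) := ENNReal.ofReal_toReal (hfin a)
      calc ν S + ENNReal.ofReal x ≤ ν (Set.Ioc r a) + ν (Set.Ioc a t) := add_le_add h1 h2
      _ = ν (Set.Ioc r t) := by
          rw [← measure_union (Set.Ioc_disjoint_Ioc_of_le le_rfl) measurableSet_Ioc,
            Set.Ioc_union_Ioc_eq_Ioc hra.le hat]
    · -- a ∉ S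
      have haNS : a ∉ S := fun h => haInS h.1
      have hua : ∀ n, u n < a := fun n =>
        lt_of_le_of_ne (haS _ (umem n)) (fun h => haNS (h ▸ umem n))
      have h1 : ν S ≤ ν (Set.Ioo r a) :=
        measure_mono (fun s hs => ⟨hs.2.1, lt_of_le_of_ne (haS s hs) (fun h => haNS (h ▸ hs))⟩)
      have hIcc : Set.Icc a t = ⋂ n, Set.Ioc (u n) t := by
        ext y
        simp only [Set.mem_Icc, Set.mem_iInter, Set.mem_Ioc]
        constructor
        · rintro ⟨h1, h2⟩ n; exact ⟨lt_of_lt_of_le (hua n) h1, h2⟩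
        · intro h
          refine ⟨le_of_tendsto utend (Eventually.of_forall fun n => (h n).1.le), (h 0).2⟩
      have h2 : ENNReal.ofReal x ≤ ν (Set.Icc a t) := by
        rw [hIcc]
        rw [Antitone.measure_iInter
          (fun m n hmn => Set.Ioc_subset_Ioc_left (umono hmn))
          (fun n => (measurableSet_Ioc).nullMeasurableSet)
          ⟨0, hfin (u 0)⟩]
        refine le_iInf fun n => ?_
        calc ENNReal.ofReal x ≤ ENNReal.ofReal (Hf ν t (u n)) :=
              ENNReal.ofReal_le_ofReal (umem n).1
        _ = ν (Set.Ioc (u n) t) := ENNReal.ofReal_toReal (hfin (u n))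
      calc ν S + ENNReal.ofReal x ≤ ν (Set.Ioo r a) + ν (Set.Icc a t) := add_le_add h1 h2
      _ = ν (Set.Ioc r t) := by
          rw [← measure_union (by
            refine Set.disjoint_left.mpr fun y hy1 hy2 => ?_
            exact absurd hy2.1 (not_le.mpr hy1.2)) measurableSet_Icc,
            Set.Ioo_union_Icc_eq_Ioc hra hat]
  have : ν S ≤ ν (Set.Ioc r t) - ENNReal.ofReal x := ENNReal.le_sub_of_add_le_right ENNReal.ofReal_ne_top key
  calc ν S ≤ ν (Set.Ioc r t) - ENNReal.ofReal x := this
  _ = ENNReal.ofReal (Hf ν t r) - ENNReal.ofReal x := by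
      rw [show Hf ν t r = (ν (Set.Ioc r t)).toReal from rfl, ENNReal.ofReal_toReal (hfin r)]
  _ = ENNReal.ofReal (Hf ν t r - x) := (ENNReal.ofReal_sub _ hx.le).symm

lemma lemA {ν : Measure ℝ} {t : ℝ} (hfin : ∀ r, ν (Set.Ioc r t) ≠ ⊤) (n : ℕ) (r : ℝ) :
    ∫⁻ s in Set.Ioc r t, ENNReal.ofReal (Hf ν t s ^ n) ∂ν ≤
      ENNReal.ofReal (Hf ν t r ^ (n + 1) / (n + 1)) := by
  rcases Nat.eq_zero_or_pos n with hn | hn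
  · subst hn
    simp only [pow_zero, ENNReal.ofReal_one, lintegral_one, Measure.restrict_apply,
      Set.univ_inter, MeasurableSet.univ]
    rw [show Hf ν t r ^ (0+1) / ((0:ℕ) + 1 : ℝ) = Hf ν t r by norm_num]
    exact le_of_eq (ENNReal.ofReal_toReal (hfin r)).symm
  have hn1 : 1 ≤ n := hn
  set c := Hf ν t r with hc
  have hc0 : 0 ≤ c := Hf_nonneg ν t r
  have hcastn : ((n - 1 : ℕ) : ℝ) + 1 = (n : ℝ) := by
    push_cast [Nat.cast_sub hn1]; ring
  have hnsub : n - 1 + 1 = n := Nat.succ_pred_eq_of_pos hn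
  have hcomp : ∀ y : ℝ, ∫ x in (0:ℝ)..y, (n : ℝ) * x ^ (n - 1) = y ^ n := by
    intro y
    rw [intervalIntegral.integral_const_mul, integral_pow, hnsub, hcastn]
    rw [zero_pow (by omega : n ≠ 0)]
    field_simp
    simp
  have layer := lintegral_comp_eq_lintegral_meas_le_mul (ν.restrict (Set.Ioc r t))
    (f := Hf ν t) (g := fun x => (n : ℝ) * x ^ (n - 1))
    (Eventually.of_forall fun s => Hf_nonneg ν t s)
    (Hf_meas hfin).aemeasurable
    (fun y _ => (continuous_const.mul (continuous_pow _)).intervalIntegrable 0 y)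
    ((ae_restrict_iff' measurableSet_Ioi).2 (Eventually.of_forall fun x hx => by
      have : (0:ℝ) < x := hx
      positivity))
  have hLHS : ∫⁻ s in Set.Ioc r t, ENNReal.ofReal (Hf ν t s ^ n) ∂ν =
      ∫⁻ x in Ioi (0:ℝ), (ν.restrict (Set.Ioc r t)) {a | x ≤ Hf ν t a} *
        ENNReal.ofReal ((n : ℝ) * x ^ (n - 1)) := by
    rw [← layer]
    exact lintegral_congr fun s => by rw [hcomp (Hf ν t s)]
  rw [hLHS]
  -- bound RHS
  set G : ℝ → ℝ := fun x => max (c - x) 0 * ((n : ℝ) * x ^ (n - 1)) with hG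
  have hGcont : Continuous G :=
    ((continuous_const.sub continuous_id).max continuous_const).mul
      (continuous_const.mul (continuous_pow _))
  have hGnn : ∀ x ∈ Ioi (0:ℝ), 0 ≤ G x := fun x hx => by
    have : (0:ℝ) < x := hx
    positivity
  have step1 : ∫⁻ x in Ioi (0:ℝ), (ν.restrict (Set.Ioc r t)) {a | x ≤ Hf ν t a} *
        ENNReal.ofReal ((n : ℝ) * x ^ (n - 1)) ≤
      ∫⁻ x in Ioi (0:ℝ), ENNReal.ofReal (G x) := by
    refine lintegral_mono_ae ((ae_restrict_iff' measurableSet_Ioi).2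
      (Eventually.of_forall fun x hx => ?_))
    have hms : MeasurableSet {a | x ≤ Hf ν t a} := measurableSet_le measurable_const (Hf_meas hfin)
    rw [Measure.restrict_apply hms]
    have h1 : ν ({a | x ≤ Hf ν t a} ∩ Set.Ioc r t) ≤ ENNReal.ofReal (max (c - x) 0) := by
      refine le_trans (measM hfin hx r) (ENNReal.ofReal_le_ofReal (le_max_left _ _))
    calc ν ({a | x ≤ Hf ν t a} ∩ Set.Ioc r t) * ENNReal.ofReal ((n : ℝ) * x ^ (n - 1)) ≤
        ENNReal.ofReal (max (c - x) 0) * ENNReal.ofReal ((n : ℝ) * x ^ (n - 1)) :=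
          mul_le_mul_left h1 _
    _ = ENNReal.ofReal (G x) := by
        rw [hG, ← ENNReal.ofReal_mul (le_max_right _ _)]
  refine le_trans step1 ?_
  -- integrability of G on Ioi 0
  have hsplit : Set.Ioc (0:ℝ) c ∪ Set.Ioi c = Set.Ioi 0 := Set.Ioc_union_Ioi_eq_Ioi hc0
  have hGzero : Set.EqOn (fun _ => (0:ℝ)) G (Set.Ioi c) := by
    intro x hx
    have : c - x ≤ 0 := by simp only [Set.mem_Ioi] at hx; linarith
    simp [hG, max_eq_right this]
  have hint1 : IntegrableOn G (Set.Ioc 0 c) volume := hGcont.integrableOn_Ioc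
  have hint2 : IntegrableOn G (Set.Ioi c) volume :=
    (integrableOn_zero).congr_fun hGzero measurableSet_Ioi
  have hint : IntegrableOn G (Set.Ioi 0) volume := by
    rw [← hsplit]; exact hint1.union hint2
  have step2 : ∫⁻ x in Ioi (0:ℝ), ENNReal.ofReal (G x) =
      ENNReal.ofReal (∫ x in Ioi (0:ℝ), G x) :=
    (ofReal_integral_eq_lintegral_ofReal hint
      ((ae_restrict_iff' measurableSet_Ioi).2 (Eventually.of_forall hGnn))).symm
  rw [step2]
  refine ENNReal.ofReal_le_ofReal ?_
  have hdisj : Disjoint (Set.Ioc (0:ℝ) c) (Set.Ioi c) := Set.Ioc_disjoint_Ioi le_rfl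
  have hval : ∫ x in Ioi (0:ℝ), G x = ∫ x in Set.Ioc (0:ℝ) c, G x := by
    rw [← hsplit, setIntegral_union hdisj measurableSet_Ioi hint1 hint2]
    rw [setIntegral_congr_fun measurableSet_Ioi hGzero.symm]
    simp
  rw [hval]
  have hGeq : Set.EqOn G (fun x => c * ((n:ℝ) * x ^ (n-1)) - (n:ℝ) * x ^ n) (Set.Ioc (0:ℝ) c) := by
    intro x hx
    have hxc : x ≤ c := hx.2
    have : max (c - x) 0 = c - x := max_eq_left (by linarith)
    simp only [hG, this]
    rw [show x ^ n = x ^ (n-1) * x by rw [← pow_succ, hnsub]]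
    ring
  rw [setIntegral_congr_fun measurableSet_Ioc hGeq, ← intervalIntegral.integral_of_le hc0]
  have hii1 : IntervalIntegrable (fun x => c * ((n:ℝ) * x ^ (n-1))) volume 0 c :=
    (continuous_const.mul (continuous_const.mul (continuous_pow _))).intervalIntegrable 0 c
  have hii2 : IntervalIntegrable (fun x => (n:ℝ) * x ^ n) volume 0 c :=
    (continuous_const.mul (continuous_pow _)).intervalIntegrable 0 c
  rw [intervalIntegral.integral_sub hii1 hii2, intervalIntegral.integral_const_mul, hcomp c,
    intervalIntegral.integral_const_mul, integral_pow]
  rw [zero_pow (by omega : n + 1 ≠ 0)]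
  apply le_of_eq
  have hne : (n : ℝ) + 1 ≠ 0 := by positivity
  field_simp
  ring

lemma factS (n : ℕ) {c H : ℝ} : c / n ! * (H / (n+1)) = c * H / (n+1)! := by
  have hf : ((n+1)! : ℝ) = ((n:ℝ)+1) * (n ! : ℝ) := by
    rw [Nat.factorial_succ]; push_cast; ring
  have h1 : (n ! : ℝ) ≠ 0 := Nat.cast_ne_zero.2 (Nat.factorial_ne_zero n)
  have h2 : ((n:ℝ) + 1) ≠ 0 := by positivity
  rw [hf]
  field_simp

lemma intPhi {ν : Measure ℝ} {t : ℝ} (hfin : ∀ r, ν (Set.Ioc r t) ≠ ⊤)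
    {c : ℝ} (hc : 0 ≤ c) (n : ℕ) (r : ℝ) :
    ∫ s in Set.Ioc r t, c * Hf ν t s ^ n / n ! ∂ν ≤ c * Hf ν t r ^ (n + 1) / (n + 1)! := by
  have hφmeas : Measurable (fun s => c * Hf ν t s ^ n / n !) :=
    (((Hf_meas hfin).pow_const n).const_mul c).div_const _
  have hφnn : ∀ s, 0 ≤ c * Hf ν t s ^ n / n ! := fun s => by
    have := Hf_nonneg ν t s; positivity
  rw [integral_eq_lintegral_of_nonneg_ae (Eventually.of_forall hφnn)
    hφmeas.aestronglyMeasurable]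
  have heq : ∀ s, ENNReal.ofReal (c * Hf ν t s ^ n / n !) =
      ENNReal.ofReal (c / n !) * ENNReal.ofReal (Hf ν t s ^ n) := by
    intro s
    rw [← ENNReal.ofReal_mul (by positivity)]
    congr 1
    ring
  have hkey : ∫⁻ s in Set.Ioc r t, ENNReal.ofReal (c * Hf ν t s ^ n / n !) ∂ν ≤
      ENNReal.ofReal (c / n !) * ENNReal.ofReal (Hf ν t r ^ (n + 1) / (n + 1)) := by
    calc ∫⁻ s in Set.Ioc r t, ENNReal.ofReal (c * Hf ν t s ^ n / n !) ∂ν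
        = ENNReal.ofReal (c / n !) * ∫⁻ s in Set.Ioc r t, ENNReal.ofReal (Hf ν t s ^ n) ∂ν := by
          rw [← lintegral_const_mul _ (((Hf_meas hfin).pow_const n).ennreal_ofReal)]
          exact lintegral_congr fun s => heq s
    _ ≤ _ := mul_le_mul_right (lemA hfin n r) _
  rw [← ENNReal.ofReal_mul (by positivity), factS] at hkey
  refine ENNReal.toReal_le_of_le_ofReal ?_ hkey
  have := Hf_nonneg ν t r
  positivity

lemma absInt {ν : Measure ℝ} {t : ℝ} (hfin : ∀ r, ν (Set.Ioc r t) ≠ ⊤)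
    {μ : Measure ℝ} (hμ : μ ≤ ν) {u : ℝ → ℝ} (hu : Measurable u)
    {c : ℝ} (hc : 0 ≤ c) (n : ℕ) (r : ℝ)
    (hbd : ∀ s ∈ Set.Ioc r t, |u s| ≤ c * Hf ν t s ^ n / n !) :
    |∫ s in Set.Ioc r t, u s ∂μ| ≤ ∫ s in Set.Ioc r t, c * Hf ν t s ^ n / n ! ∂μ := by
  have hμfin : μ (Set.Ioc r t) ≠ ⊤ :=
    fun h => hfin r (top_le_iff.1 (h ▸ Measure.le_iff'.1 hμ _))
  set M := c * Hf ν t r ^ n / n ! with hM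
  have hφleM : ∀ s ∈ Set.Ioc r t, c * Hf ν t s ^ n / n ! ≤ M := by
    intro s hs
    have h1 : Hf ν t s ≤ Hf ν t r := Hf_anti hfin hs.1.le
    have h2 : Hf ν t s ^ n ≤ Hf ν t r ^ n := pow_le_pow_left₀ (Hf_nonneg ν t s) h1 n
    have h3 : (0:ℝ) < n ! := by positivity
    rw [hM, div_le_div_iff_of_pos_right h3]
    exact mul_le_mul_of_nonneg_left h2 hc
  have hIu : IntegrableOn u (Set.Ioc r t) μ := by
    refine Measure.integrableOn_of_bounded (M := M) hμfin hu.aestronglyMeasurable ?_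
    refine (ae_restrict_iff' measurableSet_Ioc).2 (Eventually.of_forall fun s hs => ?_)
    rw [Real.norm_eq_abs]
    exact le_trans (hbd s hs) (hφleM s hs)
  have hφmeas : Measurable (fun s => c * Hf ν t s ^ n / n !) :=
    (((Hf_meas hfin).pow_const n).const_mul c).div_const _
  have hIφ : IntegrableOn (fun s => c * Hf ν t s ^ n / n !) (Set.Ioc r t) μ := by
    refine Measure.integrableOn_of_bounded (M := M) hμfin hφmeas.aestronglyMeasurable ?_
    refine (ae_restrict_iff' measurableSet_Ioc).2 (Eventually.of_forall fun s hs => ?_)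
    rw [Real.norm_eq_abs, abs_of_nonneg (by have := Hf_nonneg ν t s; positivity)]
    exact hφleM s hs
  calc |∫ s in Set.Ioc r t, u s ∂μ| ≤ ∫ s in Set.Ioc r t, |u s| ∂μ := by
        simpa [Real.norm_eq_abs] using
          norm_integral_le_integral_norm (μ := μ.restrict (Set.Ioc r t)) u
  _ ≤ ∫ s in Set.Ioc r t, c * Hf ν t s ^ n / n ! ∂μ :=
      setIntegral_mono_on hIu.abs hIφ measurableSet_Ioc hbd

lemma tri {ν : Measure ℝ} {t : ℝ} (hfin : ∀ r, ν (Set.Ioc r t) ≠ ⊤)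
    {μ1 μ2 μ3 : Measure ℝ} (hsum : μ1 + μ2 + μ3 ≤ ν)
    {u1 u2 u3 : ℝ → ℝ} (h1 : Measurable u1) (h2 : Measurable u2) (h3 : Measurable u3)
    {c : ℝ} (hc : 0 ≤ c) (n : ℕ) (r : ℝ)
    (hb1 : ∀ s ∈ Set.Ioc r t, |u1 s| ≤ c * Hf ν t s ^ n / n !)
    (hb2 : ∀ s ∈ Set.Ioc r t, |u2 s| ≤ c * Hf ν t s ^ n / n !)
    (hb3 : ∀ s ∈ Set.Ioc r t, |u3 s| ≤ c * Hf ν t s ^ n / n !) :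
    |(∫ s in Set.Ioc r t, u1 s ∂μ1) -
      ((∫ s in Set.Ioc r t, u2 s ∂μ2) - (∫ s in Set.Ioc r t, u3 s ∂μ3))| ≤
      c * Hf ν t r ^ (n + 1) / (n + 1)! := by
  have hle1 : μ1 ≤ ν := le_trans (Measure.le_iff'.mpr fun s => by
    simp only [Measure.coe_add, Pi.add_apply]
    exact le_add_right (le_add_right le_rfl)) hsum
  have hle2 : μ2 ≤ ν := le_trans (Measure.le_iff'.mpr fun s => by
    simp only [Measure.coe_add, Pi.add_apply]
    exact le_add_right (le_add_left le_rfl)) hsum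
  have hle3 : μ3 ≤ ν := le_trans (Measure.le_iff'.mpr fun s => by
    simp only [Measure.coe_add, Pi.add_apply]
    exact le_add_left le_rfl) hsum
  set phi : ℝ → ℝ := fun s => c * Hf ν t s ^ n / n ! with hφ
  have hφmeas : Measurable phi := (((Hf_meas hfin).pow_const n).const_mul c).div_const _
  have hφnn : ∀ s, 0 ≤ phi s := fun s => by have := Hf_nonneg ν t s; positivity
  have hIφ : ∀ (μ : Measure ℝ), μ ≤ ν → IntegrableOn phi (Set.Ioc r t) μ := by
    intro μ hμ
    have hμfin : μ (Set.Ioc r t) ≠ ⊤ :=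
      fun h => hfin r (top_le_iff.1 (h ▸ Measure.le_iff'.1 hμ _))
    refine Measure.integrableOn_of_bounded (M := c * Hf ν t r ^ n / n !) hμfin
      hφmeas.aestronglyMeasurable ?_
    refine (ae_restrict_iff' measurableSet_Ioc).2 (Eventually.of_forall fun s hs => ?_)
    rw [Real.norm_eq_abs, abs_of_nonneg (hφnn s)]
    have h1 : Hf ν t s ^ n ≤ Hf ν t r ^ n := pow_le_pow_left₀ (Hf_nonneg ν t s)
      (Hf_anti hfin hs.1.le) n
    have h3 : (0:ℝ) < n ! := by positivity
    rw [hφ, div_le_div_iff_of_pos_right h3]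
    exact mul_le_mul_of_nonneg_left h1 hc
  calc |(∫ s in Set.Ioc r t, u1 s ∂μ1) -
      ((∫ s in Set.Ioc r t, u2 s ∂μ2) - (∫ s in Set.Ioc r t, u3 s ∂μ3))|
      ≤ |∫ s in Set.Ioc r t, u1 s ∂μ1| +
        (|∫ s in Set.Ioc r t, u2 s ∂μ2| + |∫ s in Set.Ioc r t, u3 s ∂μ3|) :=
        le_trans (abs_sub _ _) (by gcongr; exact abs_sub _ _)
  _ ≤ (∫ s in Set.Ioc r t, phi s ∂μ1) +
        ((∫ s in Set.Ioc r t, phi s ∂μ2) + (∫ s in Set.Ioc r t, phi s ∂μ3)) := by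
        gcongr
        · exact absInt hfin hle1 h1 hc n r hb1
        · exact absInt hfin hle2 h2 hc n r hb2
        · exact absInt hfin hle3 h3 hc n r hb3
  _ = ∫ s in Set.Ioc r t, phi s ∂(μ1 + μ2 + μ3) := by
        have i1 := hIφ μ1 hle1
        have i2 := hIφ μ2 hle2
        have i3 := hIφ μ3 hle3
        rw [Measure.restrict_add, Measure.restrict_add,
          integral_add_measure (Integrable.add_measure i1 i2) i3, integral_add_measure i1 i2]
        ring
  _ ≤ ∫ s in Set.Ioc r t, phi s ∂ν := by
        refine integral_mono_measure (Measure.restrict_mono subset_rfl hsum) ?_ ?_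
        · exact (ae_restrict_iff' measurableSet_Ioc).2 (Eventually.of_forall fun s _ => hφnn s)
        · exact hIφ ν le_rfl
  _ ≤ c * Hf ν t r ^ (n + 1) / (n + 1)! := intPhi hfin hc n r

-- integrability of bounded measurable functions on Ioc
lemma intOn {μ : Measure ℝ} {a t : ℝ} (hfin : μ (Set.Ioc a t) ≠ ⊤)
    {g : ℝ → ℝ} (hg : Measurable g) {C : ℝ} (hbd : ∀ s ∈ Set.Ioc a t, |g s| ≤ C) :
    IntegrableOn g (Set.Ioc a t) μ := by
  refine Measure.integrableOn_of_bounded (M := C) hfin hg.aestronglyMeasurable ?_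
  exact (ae_restrict_iff' measurableSet_Ioc).2 (Eventually.of_forall fun s hs => by
    rw [Real.norm_eq_abs]; exact hbd s hs)

-- measurability in r of the truncated set integral
lemma measInt {μ : Measure ℝ} {t : ℝ} (hfin : ∀ r, μ (Set.Ioc r t) ≠ ⊤)
    {g : ℝ → ℝ} (hg : Measurable g) {C : ℝ} (hbd : ∀ s, |g s| ≤ C) :
    Measurable (fun r => ∫ s in Set.Ioc (max r 0) t, g s ∂μ) := by
  have hC0 : 0 ≤ C := le_trans (abs_nonneg _) (hbd 0)
  set gp : ℝ → ℝ := fun s => max (g s) 0 with hgp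
  set gn : ℝ → ℝ := fun s => max (-g s) 0 with hgn
  have hgpm : Measurable gp := hg.max measurable_const
  have hgnm : Measurable gn := hg.neg.max measurable_const
  have hgpb : ∀ a, ∀ s ∈ Set.Ioc a t, |gp s| ≤ C := fun a s _ => by
    rw [abs_of_nonneg (le_max_right _ _)]
    exact max_le (le_trans (le_abs_self _) (hbd s)) hC0
  have hgnb : ∀ a, ∀ s ∈ Set.Ioc a t, |gn s| ≤ C := fun a s _ => by
    rw [abs_of_nonneg (le_max_right _ _)]
    exact max_le (le_trans (neg_le_abs _) (hbd s)) hC0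
  have hIp : ∀ a : ℝ, IntegrableOn gp (Set.Ioc a t) μ :=
    fun a => intOn (hfin a) hgpm (hgpb a)
  have hIn : ∀ a : ℝ, IntegrableOn gn (Set.Ioc a t) μ :=
    fun a => intOn (hfin a) hgnm (hgnb a)
  have hdecomp : (fun r => ∫ s in Set.Ioc (max r 0) t, g s ∂μ) =
      fun r => (∫ s in Set.Ioc (max r 0) t, gp s ∂μ) - ∫ s in Set.Ioc (max r 0) t, gn s ∂μ := by
    funext r
    rw [← integral_sub (hIp _) (hIn _)]
    exact setIntegral_congr_fun measurableSet_Ioc fun s _ =>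
      (max_zero_sub_max_neg_zero_eq_self (g s)).symm
  rw [hdecomp]
  have hanti : ∀ (h : ℝ → ℝ), (∀ s, 0 ≤ h s) → Measurable h →
      (∀ a, IntegrableOn h (Set.Ioc a t) μ) →
      Antitone (fun r => ∫ s in Set.Ioc (max r 0) t, h s ∂μ) := by
    intro h hnn hm hI r1 r2 h12
    refine setIntegral_mono_set (hI _) ?_ ?_
    · exact (ae_restrict_iff' measurableSet_Ioc).2 (Eventually.of_forall fun s _ => hnn s)
    · exact HasSubset.Subset.eventuallyLE (Set.Ioc_subset_Ioc_left (max_le_max h12 le_rfl))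
  exact ((hanti gp (fun s => le_max_right _ _) hgpm hIp).measurable).sub
    ((hanti gn (fun s => le_max_right _ _) hgnm hIn).measurable)

def Jf : Fin 2 → Fin 2 := ![1, 0]

theorem mainAux (t : ℝ) (ht : 0 ≤ t) (lam : Fin 2 → ℝ) (μb μp μn : Fin 2 → Measure ℝ)
    (hfb : ∀ i r, μb i (Set.Ioc r t) ≠ ⊤) (hfp : ∀ i r, μp i (Set.Ioc r t) ≠ ⊤)
    (hfn : ∀ i r, μn i (Set.Ioc r t) ≠ ⊤) :
    ∃ p : Fin 2 → ℝ → ℝ,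
      (∀ i, Measurable (p i)) ∧ (∃ C, ∀ i, ∀ r ∈ Set.Icc (0:ℝ) t, |p i r| ≤ C) ∧
      (∀ i, ∀ r ∈ Set.Icc (0:ℝ) t,
        p i r = lam i + (∫ s in Set.Ioc r t, p (Jf i) s ∂μb i) -
          ((∫ s in Set.Ioc r t, p i s ∂μp i) - ∫ s in Set.Ioc r t, p i s ∂μn i)) ∧
      (∀ q : Fin 2 → ℝ → ℝ, (∀ i, Measurable (q i)) →
        (∃ C, ∀ i, ∀ r ∈ Set.Icc (0:ℝ) t, |q i r| ≤ C) →
        (∀ i, ∀ r ∈ Set.Icc (0:ℝ) t,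
          q i r = lam i + (∫ s in Set.Ioc r t, q (Jf i) s ∂μb i) -
            ((∫ s in Set.Ioc r t, q i s ∂μp i) - ∫ s in Set.Ioc r t, q i s ∂μn i)) →
        ∀ i, ∀ r ∈ Set.Icc (0:ℝ) t, q i r = p i r) := by
  classical
  set νm : Measure ℝ :=
    (μb 0 + μp 0 + μn 0) + (μb 1 + μp 1 + μn 1) with hνm
  have hfin : ∀ r, νm (Set.Ioc r t) ≠ ⊤ := by
    intro r
    simp only [hνm, Measure.coe_add, Pi.add_apply]
    exact ENNReal.add_ne_top.2 ⟨ENNReal.add_ne_top.2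
      ⟨ENNReal.add_ne_top.2 ⟨hfb 0 r, hfp 0 r⟩, hfn 0 r⟩,
      ENNReal.add_ne_top.2 ⟨ENNReal.add_ne_top.2 ⟨hfb 1 r, hfp 1 r⟩, hfn 1 r⟩⟩
  have hsum_i : ∀ i : Fin 2, μb i + μp i + μn i ≤ νm := by
    intro i
    fin_cases i
    · exact Measure.le_iff'.mpr fun s => by
        simp only [hνm, Measure.coe_add, Pi.add_apply]
        exact le_add_right le_rfl
    · exact Measure.le_iff'.mpr fun s => by
        simp only [hνm, Measure.coe_add, Pi.add_apply]
        exact le_add_left le_rfl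
  -- the Picard operator (with truncation at 0 for global definedness)
  set T : (Fin 2 → ℝ → ℝ) → (Fin 2 → ℝ → ℝ) := fun f i r =>
    lam i + (∫ s in Set.Ioc (max r 0) t, f (Jf i) s ∂(μb i)) -
      ((∫ s in Set.Ioc (max r 0) t, f i s ∂(μp i)) -
        (∫ s in Set.Ioc (max r 0) t, f i s ∂(μn i))) with hT
  have hH0 : ∀ r : ℝ, Hf νm t (max r 0) ≤ Hf νm t 0 := fun r => Hf_anti hfin (le_max_right r 0)
  have hHnn : ∀ r, 0 ≤ Hf νm t r := fun r => Hf_nonneg νm t r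
  -- L bounds lam
  set L : ℝ := max |lam 0| |lam 1| with hL
  have hLnn : 0 ≤ L := le_trans (abs_nonneg _) (le_max_left _ _)
  have hlamL : ∀ i : Fin 2, |lam i| ≤ L := by
    intro i; fin_cases i
    · exact le_max_left _ _
    · exact le_max_right _ _
  -- T of a measurable bounded family is measurable
  have hTmeas : ∀ f : Fin 2 → ℝ → ℝ, (∀ i, Measurable (f i)) →
      ∀ C : ℝ, (∀ i s, |f i s| ≤ C) → ∀ i, Measurable (T f i) := by
    intro f hf C hC i
    simp only [hT]
    exact ((measurable_const.add (measInt (hfb i) (hf (Jf i)) (hC (Jf i)))).sub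
      ((measInt (hfp i) (hf i) (hC i)).sub (measInt (hfn i) (hf i) (hC i))))
  -- T f i r - lam i expansion bound via tri
  have hTlam : ∀ f : Fin 2 → ℝ → ℝ, ∀ i r, T f i r - lam i =
      (∫ s in Set.Ioc (max r 0) t, f (Jf i) s ∂(μb i)) -
        ((∫ s in Set.Ioc (max r 0) t, f i s ∂(μp i)) -
          (∫ s in Set.Ioc (max r 0) t, f i s ∂(μn i))) := by
    intro f i r; simp only [hT]; ring
  have hTbd : ∀ f : Fin 2 → ℝ → ℝ, (∀ i, Measurable (f i)) →
      ∀ C : ℝ, 0 ≤ C → (∀ i s, |f i s| ≤ C) →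
      ∀ i r, |T f i r| ≤ L + C * Hf νm t 0 := by
    intro f hf C hC0 hC i r
    have h1 : |T f i r - lam i| ≤ C * Hf νm t (max r 0) ^ (0+1) / (0+1)! := by
      rw [hTlam]
      refine tri hfin (hsum_i i) (hf (Jf i)) (hf i) (hf i) hC0 0 (max r 0) ?_ ?_ ?_ <;>
        · intro s _
          simpa using hC _ s
    simp only [zero_add, pow_one, Nat.factorial_one, Nat.cast_one, div_one] at h1
    calc |T f i r| ≤ |lam i| + |T f i r - lam i| := by
          have := abs_add_le (lam i) (T f i r - lam i)
          simpa using this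
    _ ≤ L + C * Hf νm t (max r 0) := add_le_add (hlamL i) h1
    _ ≤ L + C * Hf νm t 0 := by
        have := hH0 r
        nlinarith [hHnn (max r 0)]
  -- Picard iterates
  set P : ℕ → Fin 2 → ℝ → ℝ := fun n => T^[n] (fun i _ => lam i) with hP
  have hP0 : P 0 = fun i _ => lam i := rfl
  have hPsucc : ∀ n, P (n+1) = T (P n) := fun n => Function.iterate_succ_apply' T n _
  have hgood : ∀ n, (∀ i, Measurable (P n i)) ∧ ∃ C, 0 ≤ C ∧ ∀ i s, |P n i s| ≤ C := by
    intro n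
    induction n with
    | zero => exact ⟨fun i => measurable_const, L, hLnn, fun i s => hlamL i⟩
    | succ n ih =>
      obtain ⟨hm, C, hC0, hC⟩ := ih
      refine ⟨?_, L + C * Hf νm t 0, ?_, ?_⟩
      · rw [hPsucc]; exact hTmeas (P n) hm C hC
      · have := hHnn 0; positivity
      · rw [hPsucc]; exact fun i s => hTbd (P n) hm C hC0 hC i s
  -- the difference expansion
  have hTsub : ∀ f g : Fin 2 → ℝ → ℝ, (∀ i, Measurable (f i)) → (∀ i, Measurable (g i)) →
      ∀ Cf : ℝ, (∀ i s, |f i s| ≤ Cf) → ∀ Cg : ℝ, (∀ i s, |g i s| ≤ Cg) →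
      ∀ i r, T f i r - T g i r =
        (∫ s in Set.Ioc (max r 0) t, (f (Jf i) s - g (Jf i) s) ∂(μb i)) -
          ((∫ s in Set.Ioc (max r 0) t, (f i s - g i s) ∂(μp i)) -
            (∫ s in Set.Ioc (max r 0) t, (f i s - g i s) ∂(μn i))) := by
    intro f g hf hg Cf hCf Cg hCg i r
    rw [integral_sub (intOn (hfb i _) (hf (Jf i)) (fun s _ => hCf (Jf i) s))
        (intOn (hfb i _) (hg (Jf i)) (fun s _ => hCg (Jf i) s)),
      integral_sub (intOn (hfp i _) (hf i) (fun s _ => hCf i s))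
        (intOn (hfp i _) (hg i) (fun s _ => hCg i s)),
      integral_sub (intOn (hfn i _) (hf i) (fun s _ => hCf i s))
        (intOn (hfn i _) (hg i) (fun s _ => hCg i s))]
    simp only [hT]
    ring
  -- geometric-factorial bound on increments
  set c0 : ℝ := L * Hf νm t 0 with hc0
  have hc0nn : 0 ≤ c0 := mul_nonneg hLnn (hHnn 0)
  have hΔ : ∀ n, ∀ i, ∀ r : ℝ, |P (n+1) i r - P n i r| ≤ c0 * Hf νm t (max r 0) ^ n / n ! := by
    intro n
    induction n with
    | zero =>
      intro i r
      simp only [pow_zero, Nat.factorial_zero, Nat.cast_one, mul_one, div_one]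
      have h1 : |P 1 i r - P 0 i r| ≤ L * Hf νm t (max r 0) ^ (0+1) / (0+1)! := by
        rw [hPsucc 0, hP0]
        rw [show T (fun i _ => lam i) i r - lam i =
          (∫ s in Set.Ioc (max r 0) t, lam (Jf i) ∂(μb i)) -
            ((∫ s in Set.Ioc (max r 0) t, lam i ∂(μp i)) -
              (∫ s in Set.Ioc (max r 0) t, lam i ∂(μn i))) from hTlam (fun i _ => lam i) i r]
        refine tri hfin (hsum_i i) measurable_const measurable_const measurable_const hLnn 0
          (max r 0) ?_ ?_ ?_ <;>
          · intro s _
            simpa using hlamL _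
      simp only [zero_add, pow_one, Nat.factorial_one, Nat.cast_one, div_one] at h1
      refine le_trans h1 ?_
      have := hH0 r
      nlinarith [hHnn (max r 0), hHnn 0]
    | succ n ih =>
      intro i r
      obtain ⟨hmn, Cn, hCn0, hCn⟩ := hgood n
      obtain ⟨hmn1, Cn1, hCn10, hCn1⟩ := hgood (n+1)
      have hrw : P (n+2) i r - P (n+1) i r = T (P (n+1)) i r - T (P n) i r := by
        rw [hPsucc (n+1), hPsucc n]
      rw [hrw, hTsub (P (n+1)) (P n) hmn1 hmn Cn1 hCn1 Cn hCn i r]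
      refine tri hfin (hsum_i i) ((hmn1 _).sub (hmn _)) ((hmn1 i).sub (hmn i))
        ((hmn1 i).sub (hmn i)) hc0nn n (max r 0) ?_ ?_ ?_ <;>
      · intro s hs
        have hs0 : max s 0 = s := max_eq_left (le_trans (le_max_right r 0) hs.1.le)
        rw [show Hf νm t s = Hf νm t (max s 0) from by rw [hs0]]
        exact ih _ s
  -- summability
  have hsummand_nn : ∀ n : ℕ, (0:ℝ) ≤ c0 * Hf νm t 0 ^ n / n ! := by
    intro n
    have := hHnn 0
    positivity
  have hsumm : Summable (fun n : ℕ => c0 * Hf νm t 0 ^ n / n !) := by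
    have := (Real.summable_pow_div_factorial (Hf νm t 0)).mul_left c0
    simpa [mul_div_assoc] using this
  have hΔ' : ∀ n i (r : ℝ), |P (n+1) i r - P n i r| ≤ c0 * Hf νm t 0 ^ n / n ! := by
    intro n i r
    refine le_trans (hΔ n i r) ?_
    gcongr
    · exact hHnn _
    · exact hH0 r
  have hcauchy : ∀ i (r : ℝ), CauchySeq (fun n => P n i r) := by
    intro i r
    refine cauchySeq_of_summable_dist ?_
    refine Summable.of_nonneg_of_le (fun n => dist_nonneg) (fun n => ?_) hsumm
    rw [Real.dist_eq, abs_sub_comm]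
    exact hΔ' n i r
  set p : Fin 2 → ℝ → ℝ := fun i r => limUnder atTop (fun n => P n i r) with hp
  have htend : ∀ i (r : ℝ), Tendsto (fun n => P n i r) atTop (𝓝 (p i r)) :=
    fun i r => (hcauchy i r).tendsto_limUnder
  have hpmeas : ∀ i, Measurable (p i) := by
    intro i
    refine measurable_of_tendsto_metrizable (fun n => (hgood n).1 i) ?_
    rw [tendsto_pi_nhds]
    exact fun r => htend i r
  -- uniform bound
  set E : ℝ := ∑' n : ℕ, c0 * Hf νm t 0 ^ n / n ! with hE
  have hEnn : 0 ≤ E := tsum_nonneg hsummand_nn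
  have hPbd : ∀ n i (r : ℝ), |P n i r| ≤ L + E := by
    have key : ∀ n i (r : ℝ), |P n i r| ≤ L + ∑ k ∈ Finset.range n, c0 * Hf νm t 0 ^ k / k ! := by
      intro n
      induction n with
      | zero => intro i r; simpa [hP0] using hlamL i
      | succ n ih =>
        intro i r
        have h1 : |P (n+1) i r| ≤ |P n i r| + |P (n+1) i r - P n i r| := by
          have := abs_add_le (P n i r) (P (n+1) i r - P n i r)
          simpa using this
        refine le_trans h1 ?_
        rw [Finset.sum_range_succ, ← add_assoc]
        exact add_le_add (ih i r) (hΔ' n i r)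
    intro n i r
    refine le_trans (key n i r) ?_
    gcongr
    exact Summable.sum_le_tsum (Finset.range n) (fun k _ => hsummand_nn k) hsumm
  have hpbd : ∀ i (r : ℝ), |p i r| ≤ L + E := by
    intro i r
    exact le_of_tendsto ((htend i r).abs) (Eventually.of_forall fun n => hPbd n i r)
  -- the equation for p
  have heqp : ∀ i, ∀ r ∈ Set.Icc (0:ℝ) t,
      p i r = lam i + (∫ s in Set.Ioc r t, p (Jf i) s ∂μb i) -
        ((∫ s in Set.Ioc r t, p i s ∂μp i) - ∫ s in Set.Ioc r t, p i s ∂μn i) := by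
    intro i r hr
    have hmax : max r 0 = r := max_eq_left hr.1
    have hDCT : ∀ (μ : Measure ℝ), (∀ a, μ (Set.Ioc a t) ≠ ⊤) → ∀ k : Fin 2,
        Tendsto (fun n => ∫ s in Set.Ioc r t, P n k s ∂μ) atTop
          (𝓝 (∫ s in Set.Ioc r t, p k s ∂μ)) := by
      intro μ hμ k
      refine tendsto_integral_of_dominated_convergence (fun _ => L + E)
        (fun n => ((hgood n).1 k).aestronglyMeasurable) ?_ ?_ ?_
      · exact integrableOn_const (hμ r)
      · intro n
        exact Eventually.of_forall fun s => by
          rw [Real.norm_eq_abs]; exact hPbd n k s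
      · exact Eventually.of_forall fun s => htend k s
    have h1 : Tendsto (fun n => P (n+1) i r) atTop (𝓝 (p i r)) :=
      (htend i r).comp (tendsto_add_atTop_nat 1)
    have h3 : ∀ n, P (n+1) i r = lam i + (∫ s in Set.Ioc r t, P n (Jf i) s ∂μb i) -
        ((∫ s in Set.Ioc r t, P n i s ∂μp i) - ∫ s in Set.Ioc r t, P n i s ∂μn i) := by
      intro n
      rw [hPsucc n]
      simp only [hT, hmax]
    have h2 : Tendsto (fun n => P (n+1) i r) atTop
        (𝓝 (lam i + (∫ s in Set.Ioc r t, p (Jf i) s ∂μb i) -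
          ((∫ s in Set.Ioc r t, p i s ∂μp i) - ∫ s in Set.Ioc r t, p i s ∂μn i))) := by
      simp only [h3]
      exact ((tendsto_const_nhds.add (hDCT (μb i) (hfb i) (Jf i))).sub
        ((hDCT (μp i) (hfp i) i).sub (hDCT (μn i) (hfn i) i)))
    exact tendsto_nhds_unique h1 h2
  refine ⟨p, hpmeas, ⟨L + E, fun i r _ => hpbd i r⟩, heqp, ?_⟩
  -- uniqueness
  intro q hqm ⟨Cq, hqb⟩ hqeq
  have hCq0 : 0 ≤ Cq := le_trans (abs_nonneg _) (hqb 0 0 ⟨le_refl 0, ht⟩)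
  set D : ℝ := Cq + (L + E) with hD
  have hDnn : 0 ≤ D := by positivity
  have hsub : ∀ k : Fin 2, Measurable (fun s => q k s - p k s) :=
    fun k => (hqm k).sub (hpmeas k)
  have hIccmem : ∀ (r : ℝ), r ∈ Set.Icc (0:ℝ) t → ∀ s ∈ Set.Ioc r t, s ∈ Set.Icc (0:ℝ) t :=
    fun r hr s hs => ⟨le_trans hr.1 hs.1.le, hs.2⟩
  have hd : ∀ n, ∀ i, ∀ r ∈ Set.Icc (0:ℝ) t, |q i r - p i r| ≤ D * Hf νm t r ^ n / n ! := by
    intro n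
    induction n with
    | zero =>
      intro i r hr
      simp only [pow_zero, Nat.factorial_zero, Nat.cast_one, mul_one, div_one]
      calc |q i r - p i r| ≤ |q i r| + |p i r| := abs_sub _ _
      _ ≤ Cq + (L + E) := add_le_add (hqb i r hr) (hpbd i r)
    | succ n ih =>
      intro i r hr
      have hexp : q i r - p i r =
          (∫ s in Set.Ioc r t, (q (Jf i) s - p (Jf i) s) ∂μb i) -
            ((∫ s in Set.Ioc r t, (q i s - p i s) ∂μp i) -
              (∫ s in Set.Ioc r t, (q i s - p i s) ∂μn i)) := by
        have hIq : ∀ (μ : Measure ℝ), (∀ a, μ (Set.Ioc a t) ≠ ⊤) → ∀ k : Fin 2,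
            IntegrableOn (q k) (Set.Ioc r t) μ := fun μ hμ k =>
          intOn (hμ r) (hqm k) (fun s hs => hqb k s (hIccmem r hr s hs))
        have hIp : ∀ (μ : Measure ℝ), (∀ a, μ (Set.Ioc a t) ≠ ⊤) → ∀ k : Fin 2,
            IntegrableOn (p k) (Set.Ioc r t) μ := fun μ hμ k =>
          intOn (hμ r) (hpmeas k) (fun s _ => hpbd k s)
        rw [integral_sub (hIq (μb i) (hfb i) (Jf i)) (hIp (μb i) (hfb i) (Jf i)),
          integral_sub (hIq (μp i) (hfp i) i) (hIp (μp i) (hfp i) i),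
          integral_sub (hIq (μn i) (hfn i) i) (hIp (μn i) (hfn i) i)]
        rw [hqeq i r hr, heqp i r hr]
        ring
      rw [hexp]
      refine tri hfin (hsum_i i) (hsub (Jf i)) (hsub i) (hsub i) hDnn n r ?_ ?_ ?_ <;>
      · intro s hs
        exact ih _ s (hIccmem r hr s hs)
  intro i r hr
  have hto0 : Tendsto (fun n : ℕ => D * Hf νm t r ^ n / n !) atTop (𝓝 0) := by
    have h := FloorSemiring.tendsto_pow_div_factorial_atTop (Hf νm t r)
    have h2 := h.const_mul D
    simpa [mul_div_assoc] using h2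
  have : |q i r - p i r| ≤ 0 :=
    ge_of_tendsto hto0 (Eventually.of_forall fun n => hd n i r hr)
  have h0 : |q i r - p i r| = 0 := le_antisymm this (abs_nonneg _)
  exact sub_eq_zero.1 (abs_eq_zero.1 h0)

/-- existence and uniqueness of the bounded solution to the two-type
linear (first-moment) backward system. With `b i i` of locally bounded variation
represented as `bp i - bn i` for Stieltjes functions `bp i, bn i`, and `bbar i j`
(`i ≠ j`) increasing right continuous with `bbar i j 0 = 0`: for any `t ≥ 0` and
`λ ∈ ℝ²` there exists a bounded measurable solution on `[0,t]` of
`π i r = λ i + ∫_{(r,t]} π j dbbar i j − ∫_{(r,t]} π i db i i`, unique on `[0,t]`. -/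
theorem stmt7 (t : ℝ) (ht : 0 ≤ t) (lam : Fin 2 → ℝ)
    (bbar : Fin 2 → Fin 2 → StieltjesFunction ℝ)
    (hbbar0 : ∀ i j : Fin 2, i ≠ j → bbar i j 0 = 0)
    (bp bn : Fin 2 → StieltjesFunction ℝ)
    (hb0 : ∀ i, bp i 0 - bn i 0 = 0) :
    ∃ p : Fin 2 → ℝ → ℝ,
      ((∀ i, Measurable (p i)) ∧
       (∃ C, ∀ i, ∀ r ∈ Set.Icc (0 : ℝ) t, |p i r| ≤ C) ∧
       (∀ i j : Fin 2, i ≠ j → ∀ r ∈ Set.Icc (0 : ℝ) t,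
         p i r = lam i + (∫ s in Set.Ioc r t, p j s ∂(bbar i j).measure) -
           ((∫ s in Set.Ioc r t, p i s ∂(bp i).measure) -
             ∫ s in Set.Ioc r t, p i s ∂(bn i).measure))) ∧
      ∀ q : Fin 2 → ℝ → ℝ,
        ((∀ i, Measurable (q i)) ∧
         (∃ C, ∀ i, ∀ r ∈ Set.Icc (0 : ℝ) t, |q i r| ≤ C) ∧
         (∀ i j : Fin 2, i ≠ j → ∀ r ∈ Set.Icc (0 : ℝ) t,
           q i r = lam i + (∫ s in Set.Ioc r t, q j s ∂(bbar i j).measure) -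
             ((∫ s in Set.Ioc r t, q i s ∂(bp i).measure) -
               ∫ s in Set.Ioc r t, q i s ∂(bn i).measure))) →
        ∀ i, ∀ r ∈ Set.Icc (0 : ℝ) t, q i r = p i r := by
  have hJ : ∀ i j : Fin 2, i ≠ j → j = Jf i := by decide
  have hJne : ∀ i : Fin 2, i ≠ Jf i := by decide
  obtain ⟨p, hmeas, hCbd, heq, huniq⟩ := mainAux t ht lam
    (fun i => (bbar i (Jf i)).measure) (fun i => (bp i).measure) (fun i => (bn i).measure)
    (fun i r => by rw [StieltjesFunction.measure_Ioc]; exact ENNReal.ofReal_ne_top)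
    (fun i r => by rw [StieltjesFunction.measure_Ioc]; exact ENNReal.ofReal_ne_top)
    (fun i r => by rw [StieltjesFunction.measure_Ioc]; exact ENNReal.ofReal_ne_top)
  refine ⟨p, ⟨hmeas, hCbd, ?_⟩, ?_⟩
  · intro i j hij r hr
    rw [hJ i j hij]
    exact heq i r hr
  · rintro q ⟨hqm, hqb, hqe⟩ i r hr
    exact huniq q hqm hqb (fun i r hr => hqe i (Jf i) (hJne i) r hr) i r hr
end

section
/- A priori bound for positive solutions: if v : [0,t] → ℝ₊² is a bounded solution of the backward system v_i(r) ≤ λ_i + ∫_{(r,t]} v_i(s) ‖b_ii‖(ds) + ∫_{(r,t]} v_j(s) b̄_ij(ds) (which any positive solution of the full backward equation satisfies), then v_i(r) ≤ ‖λ‖ (1 + b̄_ij(t)) exp( e^{‖b_jj‖(t)} b̄_12(t) b̄_21(t) + ‖b_11‖(t) + ‖b_22‖(t) ) for all r ∈ [0,t]. -/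
open Real MeasureTheory

section auxiliary

open Set

lemma aux_measure_Ioo_le (μ : Measure ℝ) (r u : ℝ) (y : ℝ)
    (h : ∀ w, w < u → μ (Set.Ioc r w) ≤ ENNReal.ofReal y) :
    μ (Set.Ioo r u) ≤ ENNReal.ofReal y := by
  have hsub : Set.Ioo r u ⊆ ⋃ n : ℕ, Set.Ioc r (u - 1 / (n + 1)) := by
    intro w hw
    obtain ⟨n, hn⟩ := exists_nat_one_div_lt (sub_pos.mpr hw.2)
    exact Set.mem_iUnion.mpr ⟨n, hw.1, by linarith [hn]⟩
  have hmono : Monotone (fun n : ℕ => Set.Ioc r (u - 1 / (n + 1))) := by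
    intro m n hmn
    apply Set.Ioc_subset_Ioc_right
    have h1 : (1 : ℝ) / (n + 1) ≤ 1 / (m + 1) := by
      have : (m : ℝ) ≤ n := Nat.cast_le.mpr hmn
      apply one_div_le_one_div_of_le
      · positivity
      · linarith
    linarith
  calc μ (Set.Ioo r u) ≤ μ (⋃ n : ℕ, Set.Ioc r (u - 1 / (n + 1))) := measure_mono hsub
    _ = ⨆ n : ℕ, μ (Set.Ioc r (u - 1 / (n + 1))) := (hmono.directed_le).measure_iUnion
    _ ≤ ENNReal.ofReal y := iSup_le fun n => h _ (by
        have : (0:ℝ) < 1 / (n + 1) := by positivity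
        linarith)

lemma aux_meas_level (μ : Measure ℝ) (r t y : ℝ)
    (hfin : ∀ s, s ≤ t → μ (Set.Ioc r s) ≠ ⊤) :
    μ {s | s ∈ Set.Ioc r t ∧ (μ (Set.Ioc r s)).toReal < y} ≤ ENNReal.ofReal y := by
  set S := {s | s ∈ Set.Ioc r t ∧ (μ (Set.Ioc r s)).toReal < y} with hS
  rcases Set.eq_empty_or_nonempty S with hemp | hne
  · simp [hemp]
  have hy : 0 < y := by
    obtain ⟨s, hs⟩ := hne
    exact lt_of_le_of_lt ENNReal.toReal_nonneg hs.2
  have hbdd : BddAbove S := ⟨t, fun s hs => hs.1.2⟩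
  set u := sSup S with hu
  have key : ∀ w, w < u → μ (Set.Ioc r w) ≤ ENNReal.ofReal y := by
    intro w hw
    obtain ⟨s, hsS, hws⟩ := exists_lt_of_lt_csSup hne hw
    calc μ (Set.Ioc r w) ≤ μ (Set.Ioc r s) := measure_mono (Set.Ioc_subset_Ioc_right hws.le)
      _ ≤ ENNReal.ofReal y := by
          rw [ENNReal.le_ofReal_iff_toReal_le (hfin s hsS.1.2) hy.le]
          exact hsS.2.le
  by_cases hmem : u ∈ S
  · calc μ S ≤ μ (Set.Ioc r u) := measure_mono (fun s hs => ⟨hs.1.1, le_csSup hbdd hs⟩)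
      _ ≤ ENNReal.ofReal y := by
          rw [ENNReal.le_ofReal_iff_toReal_le (hfin u hmem.1.2) hy.le]
          exact hmem.2.le
  · have hsub : S ⊆ Set.Ioo r u := by
      intro s hs
      exact ⟨hs.1.1, lt_of_le_of_ne (le_csSup hbdd hs) (fun h => hmem (h ▸ hs))⟩
    exact le_trans (measure_mono hsub) (aux_measure_Ioo_le μ r u y key)

lemma aux_exp_integral (μ : Measure ℝ) (r t : ℝ) (hrt : r ≤ t)
    (hfin : μ (Set.Ioc r t) ≠ ⊤) :
    ∫ s in Set.Ioc r t, Real.exp ((μ (Set.Ioc s t)).toReal) ∂μ ≤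
      Real.exp ((μ (Set.Ioc r t)).toReal) - 1 := by
  set g : ℝ := (μ (Set.Ioc r t)).toReal with hgdef
  have hg : 0 ≤ g := ENNReal.toReal_nonneg
  set E : ℝ := Real.exp g with hEdef
  have hE1 : 1 ≤ E := Real.one_le_exp hg
  have hE0 : (0:ℝ) < E := lt_of_lt_of_le one_pos hE1
  set G : ℝ → ℝ := fun s => (μ (Set.Ioc (max s r) t)).toReal with hGdef
  have hGfin : ∀ s, μ (Set.Ioc (max s r) t) ≠ ⊤ := fun s =>
    ne_top_of_le_ne_top hfin (measure_mono (Set.Ioc_subset_Ioc_left (le_max_right s r)))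
  have hG_anti : Antitone G := by
    intro s s' hss'
    exact ENNReal.toReal_mono (hGfin s)
      (measure_mono (Set.Ioc_subset_Ioc_left (max_le_max hss' le_rfl)))
  have hG_le : ∀ s, G s ≤ g :=
    fun s => ENNReal.toReal_mono hfin (measure_mono (Set.Ioc_subset_Ioc_left (le_max_right s r)))
  set f : ℝ → ℝ := fun s => Real.exp (G s) with hfdef
  have hf_meas : Measurable f := (hG_anti.measurable).exp
  have hf_pos : ∀ s, 0 < f s := fun s => Real.exp_pos _
  have hf_le : ∀ s, f s ≤ E := fun s => Real.exp_le_exp.mpr (hG_le s)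
  set ν : Measure ℝ := μ.restrict (Set.Ioc r t) with hνdef
  haveI : IsFiniteMeasure ν := by
    constructor
    rw [hνdef, Measure.restrict_apply_univ]
    exact lt_top_iff_ne_top.mpr hfin
  have hf_int : Integrable f ν := by
    refine Integrable.mono' (integrable_const E) hf_meas.aestronglyMeasurable ?_
    exact Filter.Eventually.of_forall fun s => by
      rw [Real.norm_eq_abs, abs_of_pos (hf_pos s)]; exact hf_le s
  have key : ∫ s, f s ∂ν = ∫ x in Set.Ioi (0:ℝ), (ν {s | x < f s}).toReal :=
    hf_int.integral_eq_integral_meas_lt (Filter.Eventually.of_forall fun s => (hf_pos s).le)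
  -- pointwise bound
  set φ : ℝ → ℝ := fun x => min g (max (g - Real.log x) 0) with hφdef
  have hbound : ∀ x ∈ Set.Ioi (0:ℝ), (ν {s | x < f s}).toReal ≤ φ x := by
    intro x hx
    have hx0 : (0:ℝ) < x := hx
    refine le_min ?_ ?_
    · refine ENNReal.toReal_mono hfin ?_
      calc ν {s | x < f s} ≤ ν Set.univ := measure_mono (Set.subset_univ _)
        _ = μ (Set.Ioc r t) := Measure.restrict_apply_univ _
    · rcases le_or_gt (Real.log x) 0 with hlog | hlog
      · calc (ν {s | x < f s}).toReal ≤ g := by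
              refine ENNReal.toReal_mono hfin ?_
              calc ν {s | x < f s} ≤ ν Set.univ := measure_mono (Set.subset_univ _)
                _ = μ (Set.Ioc r t) := Measure.restrict_apply_univ _
          _ ≤ g - Real.log x := by linarith
          _ ≤ max (g - Real.log x) 0 := le_max_left _ _
      · rcases lt_or_ge g (Real.log x) with hgx | hgx
        · -- empty set
          have hempty : {s | x < f s} ∩ Set.Ioc r t = ∅ := by
            ext s
            simp only [Set.mem_inter_iff, Set.mem_setOf_eq, Set.mem_empty_iff_false, iff_false,
              not_and]
            intro hxs hs
            have : x < E := lt_of_lt_of_le hxs (hf_le s)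
            have : Real.log x < g := by
              rw [hEdef] at this
              have := Real.log_lt_log hx0 this
              rwa [Real.log_exp] at this
            linarith
          have : ν {s | x < f s} = 0 := by
            rw [hνdef, Measure.restrict_apply' measurableSet_Ioc, hempty, measure_empty]
          rw [this]
          simp [le_max_iff]
        · have hsub : {s | x < f s} ∩ Set.Ioc r t ⊆
              {s | s ∈ Set.Ioc r t ∧ (μ (Set.Ioc r s)).toReal < g - Real.log x} := by
            intro s hs
            obtain ⟨hxs, hsIoc⟩ := hs
            have hmax : max s r = s := max_eq_left hsIoc.1.le
            have hGs : Real.log x < G s := by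
              have : Real.exp (Real.log x) < Real.exp (G s) := by
                rw [Real.exp_log hx0]; exact hxs
              exact Real.exp_lt_exp.mp this
            have hsplit : μ (Set.Ioc r s) + μ (Set.Ioc s t) = μ (Set.Ioc r t) := by
              rw [← measure_union (Set.Ioc_disjoint_Ioc_of_le le_rfl) measurableSet_Ioc,
                Set.Ioc_union_Ioc_eq_Ioc hsIoc.1.le hsIoc.2]
            have hfin1 : μ (Set.Ioc r s) ≠ ⊤ :=
              ne_top_of_le_ne_top hfin (measure_mono (Set.Ioc_subset_Ioc_right hsIoc.2))
            have hfin2 : μ (Set.Ioc s t) ≠ ⊤ :=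
              ne_top_of_le_ne_top hfin (measure_mono (Set.Ioc_subset_Ioc_left hsIoc.1.le))
            have htr : (μ (Set.Ioc r s)).toReal + (μ (Set.Ioc s t)).toReal = g := by
              rw [← ENNReal.toReal_add hfin1 hfin2, hsplit]
            have hGs' : G s = (μ (Set.Ioc s t)).toReal := by rw [hGdef]; simp [hmax]
            refine ⟨hsIoc, ?_⟩
            rw [hGs'] at hGs
            linarith
          have hν : ν {s | x < f s} ≤ ENNReal.ofReal (g - Real.log x) := by
            rw [hνdef, Measure.restrict_apply' measurableSet_Ioc]
            refine le_trans (measure_mono hsub) ?_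
            exact aux_meas_level μ r t (g - Real.log x) fun s hs =>
              ne_top_of_le_ne_top hfin (measure_mono (Set.Ioc_subset_Ioc_right hs))
          calc (ν {s | x < f s}).toReal ≤ (ENNReal.ofReal (g - Real.log x)).toReal :=
                ENNReal.toReal_mono ENNReal.ofReal_ne_top hν
            _ = g - Real.log x := ENNReal.toReal_ofReal (by linarith)
            _ ≤ max (g - Real.log x) 0 := le_max_left _ _
  -- φ pieces
  have hφ1 : Set.EqOn φ (fun _ => g) (Set.Ioc 0 1) := by
    intro x hx
    have hlog : Real.log x ≤ 0 := Real.log_nonpos hx.1.le hx.2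
    simp only [hφdef]
    rw [max_eq_left (by linarith), min_eq_left (by linarith)]
  have hφ2 : Set.EqOn φ (fun x => g - Real.log x) (Set.Ioc 1 E) := by
    intro x hx
    obtain ⟨hx1, hxE⟩ := hx
    have hlog0 : 0 < Real.log x := Real.log_pos hx1
    have hlogE : Real.log x ≤ g := by
      have := Real.log_le_log (by linarith) hxE
      rwa [hEdef, Real.log_exp] at this
    simp only [hφdef]
    rw [max_eq_left (by linarith), min_eq_right (by linarith)]
  have hφ3 : Set.EqOn φ (fun _ => (0:ℝ)) (Set.Ioi E) := by
    intro x hx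
    have : g < Real.log x := by
      have := Real.log_lt_log hE0 hx
      rwa [hEdef, Real.log_exp] at this
    simp only [hφdef]
    rw [max_eq_right (by linarith), min_eq_right hg]
  have hi1 : IntegrableOn φ (Set.Ioc 0 1) volume := by
    rw [integrableOn_congr_fun hφ1 measurableSet_Ioc]
    exact (integrableOn_const_iff).mpr (Or.inr (by rw [Real.volume_Ioc]; exact ENNReal.ofReal_lt_top))
  have hi2 : IntegrableOn φ (Set.Ioc 1 E) volume := by
    rw [integrableOn_congr_fun hφ2 measurableSet_Ioc]
    refine IntegrableOn.mono_set ?_ Set.Ioc_subset_Icc_self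
    refine ContinuousOn.integrableOn_Icc ?_
    refine (continuousOn_const).sub (Real.continuousOn_log.mono ?_)
    intro x hx
    simp only [Set.mem_compl_iff, Set.mem_singleton_iff]
    intro h
    rw [h] at hx
    exact absurd hx.1 (by norm_num)
  have hi3 : IntegrableOn φ (Set.Ioi E) volume := by
    rw [integrableOn_congr_fun hφ3 measurableSet_Ioi]
    exact (integrableOn_const_iff).mpr (Or.inl (by simp))
  have hsplit1 : Set.Ioc (0:ℝ) 1 ∪ Set.Ioc 1 E = Set.Ioc 0 E :=
    Set.Ioc_union_Ioc_eq_Ioc (by norm_num) hE1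
  have hsplit2 : Set.Ioc (0:ℝ) E ∪ Set.Ioi E = Set.Ioi 0 :=
    Set.Ioc_union_Ioi_eq_Ioi hE0.le
  have hφ_int : IntegrableOn φ (Set.Ioi 0) volume := by
    rw [← hsplit2, ← hsplit1]
    exact (hi1.union hi2).union hi3
  -- compute integral of φ
  have hval1 : ∫ x in Set.Ioc (0:ℝ) 1, φ x = g := by
    rw [setIntegral_congr_fun measurableSet_Ioc hφ1, setIntegral_const]
    simp [Real.volume_Ioc]
  have hval2 : ∫ x in Set.Ioc (1:ℝ) E, φ x = E - g - 1 := by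
    rw [setIntegral_congr_fun measurableSet_Ioc hφ2,
      ← intervalIntegral.integral_of_le hE1]
    have hlogint : ∫ x in (1:ℝ)..E, Real.log x = E * Real.log E - 1 * Real.log 1 - E + 1 :=
      integral_log
    have : ∫ x in (1:ℝ)..E, (g - Real.log x) =
        (∫ x in (1:ℝ)..E, g) - ∫ x in (1:ℝ)..E, Real.log x := by
      refine intervalIntegral.integral_sub intervalIntegrable_const ?_
      refine ContinuousOn.intervalIntegrable ?_
      refine Real.continuousOn_log.mono ?_
      intro x hx
      rw [Set.uIcc_of_le hE1] at hx
      simp only [Set.mem_compl_iff, Set.mem_singleton_iff]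
      intro h; rw [h] at hx; exact absurd hx.1 (by norm_num)
    rw [this, hlogint, intervalIntegral.integral_const]
    rw [hEdef, Real.log_exp]
    simp [Real.log_one]
    ring
  have hval3 : ∫ x in Set.Ioi E, φ x = 0 := by
    rw [setIntegral_congr_fun measurableSet_Ioi hφ3]
    simp
  have hφ_val : ∫ x in Set.Ioi (0:ℝ), φ x = E - 1 := by
    rw [← hsplit2, setIntegral_union Set.Ioc_disjoint_Ioi_same measurableSet_Ioi
      (hsplit1 ▸ (hi1.union hi2)) hi3]
    rw [← hsplit1, setIntegral_union (Set.Ioc_disjoint_Ioc_of_le le_rfl) measurableSet_Ioc hi1 hi2]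
    rw [hval1, hval2, hval3]
    ring
  -- combine
  have hmono : ∫ x in Set.Ioi (0:ℝ), (ν {s | x < f s}).toReal ≤ ∫ x in Set.Ioi (0:ℝ), φ x := by
    refine integral_mono_of_nonneg ?_ hφ_int ?_
    · exact Filter.Eventually.of_forall fun x => ENNReal.toReal_nonneg
    · rw [Filter.EventuallyLE, ae_restrict_iff' measurableSet_Ioi]
      exact Filter.Eventually.of_forall hbound
  have heqfin : ∫ s in Set.Ioc r t, Real.exp ((μ (Set.Ioc s t)).toReal) ∂μ = ∫ s, f s ∂ν := by
    refine setIntegral_congr_fun measurableSet_Ioc ?_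
    intro s hs
    simp only [hfdef, hGdef, max_eq_left hs.1.le]
  rw [heqfin, key]
  calc ∫ x in Set.Ioi (0:ℝ), (ν {s | x < f s}).toReal ≤ ∫ x in Set.Ioi (0:ℝ), φ x := hmono
    _ = E - 1 := hφ_val

lemma aux_gronwall_pos (μ : Measure ℝ) (c t : ℝ) (hct : c ≤ t)
    (hfin : μ (Set.Ioc c t) ≠ ⊤)
    (v : ℝ → ℝ) (hv : Measurable v)
    (hnn : ∀ r ∈ Set.Icc c t, 0 ≤ v r)
    (C : ℝ) (hC : ∀ r ∈ Set.Icc c t, v r ≤ C)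
    (a : ℝ) (ha : 0 < a)
    (h : ∀ r ∈ Set.Icc c t, v r ≤ a + ∫ s in Set.Ioc r t, v s ∂μ) :
    ∀ r ∈ Set.Icc c t, v r ≤ a * Real.exp ((μ (Set.Ioc r t)).toReal) := by
  set G : ℝ → ℝ := fun r => (μ (Set.Ioc r t)).toReal with hGdef
  have hfin' : ∀ r ∈ Set.Icc c t, μ (Set.Ioc r t) ≠ ⊤ := fun r hr =>
    ne_top_of_le_ne_top hfin (measure_mono (Set.Ioc_subset_Ioc_left hr.1))
  have hG_nn : ∀ r, 0 ≤ G r := fun r => ENNReal.toReal_nonneg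
  have hG_le : ∀ r ∈ Set.Icc c t, G r ≤ G c := fun r hr =>
    ENNReal.toReal_mono hfin (measure_mono (Set.Ioc_subset_Ioc_left hr.1))
  set T : Set ℝ := (fun r => v r * Real.exp (-(G r)) / a) '' Set.Icc c t with hTdef
  have hTne : T.Nonempty := ⟨_, ⟨c, ⟨le_rfl, hct⟩, rfl⟩⟩
  have hTbdd : BddAbove T := by
    refine ⟨C / a, ?_⟩
    rintro m ⟨r, hr, rfl⟩
    have h1 : Real.exp (-(G r)) ≤ 1 := Real.exp_le_one_iff.mpr (by linarith [hG_nn r])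
    have h2 : v r * Real.exp (-(G r)) ≤ C :=
      le_trans (mul_le_of_le_one_right (hnn r hr) h1) (hC r hr)
    exact (div_le_div_iff_of_pos_right ha).mpr h2
  set M : ℝ := sSup T with hMdef
  have hM0 : 0 ≤ M := by
    refine le_trans ?_ (le_csSup hTbdd ⟨c, ⟨le_rfl, hct⟩, rfl⟩)
    have hvc := hnn c ⟨le_rfl, hct⟩
    positivity
  have hkey : ∀ s ∈ Set.Icc c t, v s ≤ M * a * Real.exp (G s) := by
    intro s hs
    have h1 : v s * Real.exp (-(G s)) / a ≤ M := le_csSup hTbdd ⟨s, hs, rfl⟩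
    have h2 : v s * Real.exp (-(G s)) ≤ M * a := (div_le_iff₀ ha).mp h1
    have h3 : Real.exp (-(G s)) * Real.exp (G s) = 1 := by
      rw [← Real.exp_add]; simp
    calc v s = v s * (Real.exp (-(G s)) * Real.exp (G s)) := by rw [h3, mul_one]
      _ = (v s * Real.exp (-(G s))) * Real.exp (G s) := by ring
      _ ≤ (M * a) * Real.exp (G s) := mul_le_mul_of_nonneg_right h2 (Real.exp_pos _).le
  -- main inequality
  have hmain : ∀ r ∈ Set.Icc c t, v r ≤ a + M * a * (Real.exp (G r) - 1) := by
    intro r hr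
    have hint : ∫ s in Set.Ioc r t, v s ∂μ ≤
        ∫ s in Set.Ioc r t, M * a * Real.exp (G s) ∂μ := by
      refine integral_mono_of_nonneg ?_ ?_ ?_
      · rw [Filter.EventuallyLE, ae_restrict_iff' measurableSet_Ioc]
        refine Filter.Eventually.of_forall fun s hs => hnn s ⟨hr.1.trans hs.1.le, hs.2⟩
      · -- integrability of dominating function
        have hmeas : Measurable fun s => M * a * Real.exp (G s) := by
          have hanti : Antitone fun s => μ (Set.Ioc s t) := fun x y hxy =>
            measure_mono (Set.Ioc_subset_Ioc_left hxy)
          exact (measurable_const.mul (hanti.measurable.ennreal_toReal.exp))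
        haveI : IsFiniteMeasure (μ.restrict (Set.Ioc r t)) := by
          constructor
          rw [Measure.restrict_apply_univ]
          exact lt_top_iff_ne_top.mpr (hfin' r hr)
        refine Integrable.mono' (integrable_const (|M * a| * Real.exp (G r)))
          hmeas.aestronglyMeasurable ?_
        rw [ae_restrict_iff' measurableSet_Ioc]
        refine Filter.Eventually.of_forall fun s hs => ?_
        rw [Real.norm_eq_abs, abs_mul, abs_of_pos (Real.exp_pos _)]
        have : G s ≤ G r := ENNReal.toReal_mono (hfin' r hr)
          (measure_mono (Set.Ioc_subset_Ioc_left hs.1.le))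
        exact mul_le_mul_of_nonneg_left (Real.exp_le_exp.mpr this) (abs_nonneg _)
      · rw [Filter.EventuallyLE, ae_restrict_iff' measurableSet_Ioc]
        exact Filter.Eventually.of_forall fun s hs =>
          hkey s ⟨hr.1.trans hs.1.le, hs.2⟩
    have hexp : ∫ s in Set.Ioc r t, M * a * Real.exp (G s) ∂μ ≤ M * a * (Real.exp (G r) - 1) := by
      rw [integral_const_mul]
      have := aux_exp_integral μ r t hr.2 (hfin' r hr)
      have hMa : 0 ≤ M * a := mul_nonneg hM0 ha.le
      exact mul_le_mul_of_nonneg_left this hMa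
    calc v r ≤ a + ∫ s in Set.Ioc r t, v s ∂μ := h r hr
      _ ≤ a + M * a * (Real.exp (G r) - 1) := by linarith [hint.trans hexp]
  -- M ≤ 1
  have hM1 : M ≤ 1 := by
    by_contra hM
    push_neg at hM
    have hsup : M ≤ M + (1 - M) * Real.exp (-(G c)) := by
      refine csSup_le hTne ?_
      rintro m ⟨r, hr, rfl⟩
      have h1 := hmain r hr
      have hexp3 : Real.exp (-(G r)) * Real.exp (G r) = 1 := by
        rw [← Real.exp_add]; simp
      have h2 : v r * Real.exp (-(G r)) / a ≤ M + (1 - M) * Real.exp (-(G r)) := by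
        rw [div_le_iff₀ ha]
        have h4 := mul_le_mul_of_nonneg_right h1 (Real.exp_pos (-(G r))).le
        have heq : (a + M * a * (Real.exp (G r) - 1)) * Real.exp (-(G r)) =
            (M + (1 - M) * Real.exp (-(G r))) * a := by
          linear_combination M * a * hexp3
        exact h4.trans_eq heq
      refine h2.trans ?_
      have hle : Real.exp (-(G c)) ≤ Real.exp (-(G r)) :=
        Real.exp_le_exp.mpr (by linarith [hG_le r hr])
      have hprod := mul_le_mul_of_nonpos_left hle (by linarith : 1 - M ≤ 0)
      linarith
    nlinarith [Real.exp_pos (-(G c))]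
  intro r hr
  calc v r ≤ M * a * Real.exp (G r) := hkey r hr
    _ ≤ 1 * a * Real.exp (G r) :=
        mul_le_mul_of_nonneg_right (mul_le_mul_of_nonneg_right hM1 ha.le) (Real.exp_pos _).le
    _ = a * Real.exp (G r) := by ring

lemma aux_gronwall (μ : Measure ℝ) (c t : ℝ) (hct : c ≤ t)
    (hfin : μ (Set.Ioc c t) ≠ ⊤)
    (v : ℝ → ℝ) (hv : Measurable v)
    (hnn : ∀ r ∈ Set.Icc c t, 0 ≤ v r)
    (C : ℝ) (hC : ∀ r ∈ Set.Icc c t, v r ≤ C)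
    (a : ℝ) (ha : 0 ≤ a)
    (h : ∀ r ∈ Set.Icc c t, v r ≤ a + ∫ s in Set.Ioc r t, v s ∂μ) :
    ∀ r ∈ Set.Icc c t, v r ≤ a * Real.exp ((μ (Set.Ioc r t)).toReal) := by
  intro r hr
  refine le_of_forall_pos_le_add ?_
  intro ε hε
  have hexp : 0 < Real.exp ((μ (Set.Ioc r t)).toReal) := Real.exp_pos _
  set δ : ℝ := ε / Real.exp ((μ (Set.Ioc r t)).toReal) with hδdef
  have hδ : 0 < δ := by positivity
  have := aux_gronwall_pos μ c t hct hfin v hv hnn C hC (a + δ) (by linarith)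
    (fun r' hr' => le_trans (h r' hr') (by linarith)) r hr
  calc v r ≤ (a + δ) * Real.exp ((μ (Set.Ioc r t)).toReal) := this
    _ = a * Real.exp ((μ (Set.Ioc r t)).toReal) + ε := by
        rw [hδdef]; field_simp

lemma final_arith (L li lj Bi Bj cij cji : ℝ) (hL : 0 ≤ L) (hli : li ≤ L) (hlj : lj ≤ L)
    (hli0 : 0 ≤ li) (hlj0 : 0 ≤ lj) (hBi : 0 ≤ Bi) (hBj : 0 ≤ Bj)
    (hcij : 0 ≤ cij) (hcji : 0 ≤ cji) :
    (li + Real.exp Bj * lj * cij) * Real.exp (Bi + Real.exp Bj * cij * cji) ≤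
      L * (1 + cij) * Real.exp (Real.exp Bj * (cij * cji) + Bi + Bj) := by
  set X := Real.exp (Bi + Real.exp Bj * cij * cji) with hX
  set Y := Real.exp (Real.exp Bj * (cij * cji) + Bi + Bj) with hY
  have hXpos : 0 < X := Real.exp_pos _
  have hYpos : 0 < Y := Real.exp_pos _
  have he1 : X ≤ Y := by
    rw [hX, hY]
    apply Real.exp_le_exp.mpr
    nlinarith
  have he2 : Real.exp Bj * X = Y := by
    rw [hX, hY, ← Real.exp_add]
    ring_nf
  have h1 : li * X ≤ L * Y := by
    calc li * X ≤ L * X := mul_le_mul_of_nonneg_right hli hXpos.le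
      _ ≤ L * Y := mul_le_mul_of_nonneg_left he1 hL
  have h2 : Real.exp Bj * lj * cij * X ≤ L * cij * Y := by
    have : Real.exp Bj * lj * cij * X = lj * cij * (Real.exp Bj * X) := by ring
    rw [this, he2]
    have : lj * cij ≤ L * cij := mul_le_mul_of_nonneg_right hlj hcij
    exact mul_le_mul_of_nonneg_right this hYpos.le
  calc (li + Real.exp Bj * lj * cij) * X = li * X + Real.exp Bj * lj * cij * X := by ring
    _ ≤ L * Y + L * cij * Y := add_le_add h1 h2
    _ = L * (1 + cij) * Y := by ring

end auxiliary

/-- a priori bound for positive solutions. Here `b i i = bp i - bn i`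
with `bp i, bn i` Stieltjes functions, so that the total variation function is
`‖b i i‖ = (bp i - bp i 0) + (bn i - bn i 0)`; `bbar i j` (`i ≠ j`) is increasing
right continuous with `bbar i j 0 = 0`; `‖λ‖` is the Euclidean norm of
`λ = (λ₁,λ₂) ∈ ℝ₊²`. If a bounded measurable `v : [0,t] → ℝ₊²` satisfies
`v i r ≤ λ i + ∫_{(r,t]} v i d‖b i i‖ + ∫_{(r,t]} v j dbbar i j`, then
`v i r ≤ ‖λ‖ (1 + bbar i j t) exp( e^{‖b j j‖(t)} bbar 0 1 t · bbar 1 0 t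
  + ‖b 0 0‖(t) + ‖b 1 1‖(t) )` on `[0,t]`. -/
theorem stmt8 (t : ℝ) (ht : 0 < t) (lam : Fin 2 → ℝ) (hlam : ∀ i, 0 ≤ lam i)
    (bbar : Fin 2 → Fin 2 → StieltjesFunction ℝ)
    (hbbar0 : ∀ i j : Fin 2, i ≠ j → bbar i j 0 = 0)
    (bp bn : Fin 2 → StieltjesFunction ℝ)
    (v : Fin 2 → ℝ → ℝ)
    (hv_meas : ∀ i, Measurable (v i))
    (hv_nonneg : ∀ i, ∀ r ∈ Set.Icc (0 : ℝ) t, 0 ≤ v i r)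
    (hv_bdd : ∃ C, ∀ i, ∀ r ∈ Set.Icc (0 : ℝ) t, |v i r| ≤ C)
    (hineq : ∀ i j : Fin 2, i ≠ j → ∀ r ∈ Set.Icc (0 : ℝ) t,
      v i r ≤ lam i +
        ((∫ s in Set.Ioc r t, v i s ∂(bp i).measure) +
          ∫ s in Set.Ioc r t, v i s ∂(bn i).measure) +
        ∫ s in Set.Ioc r t, v j s ∂(bbar i j).measure) :
    ∀ i j : Fin 2, i ≠ j → ∀ r ∈ Set.Icc (0 : ℝ) t,
      v i r ≤
        Real.sqrt (lam 0 ^ 2 + lam 1 ^ 2) * (1 + bbar i j t) *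
          Real.exp
            (Real.exp ((bp j t - bp j 0) + (bn j t - bn j 0)) *
                (bbar 0 1 t * bbar 1 0 t) +
              ((bp 0 t - bp 0 0) + (bn 0 t - bn 0 0)) +
              ((bp 1 t - bp 1 0) + (bn 1 t - bn 1 0))) := by
  obtain ⟨C, hC⟩ := hv_bdd
  -- generic facts about Stieltjes measures
  have hst_fin : ∀ (f : StieltjesFunction ℝ) (r : ℝ), f.measure (Set.Ioc r t) ≠ ⊤ := by
    intro f r
    rw [f.measure_Ioc]
    exact ENNReal.ofReal_ne_top
  have hst_toReal : ∀ (f : StieltjesFunction ℝ) (r : ℝ), r ≤ t →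
      (f.measure (Set.Ioc r t)).toReal = f t - f r := by
    intro f r hr
    rw [f.measure_Ioc, ENNReal.toReal_ofReal (sub_nonneg.mpr (f.mono hr))]
  have hvC : ∀ (k : Fin 2), ∀ r ∈ Set.Icc (0:ℝ) t, v k r ≤ C :=
    fun k r hr => le_of_abs_le (hC k r hr)
  have hIntOn : ∀ (k : Fin 2) (f : StieltjesFunction ℝ) (r : ℝ), 0 ≤ r →
      IntegrableOn (v k) (Set.Ioc r t) f.measure := by
    intro k f r hr
    refine Measure.integrableOn_of_bounded (M := C) (hst_fin f r) (hv_meas k).aestronglyMeasurable ?_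
    rw [ae_restrict_iff' measurableSet_Ioc]
    exact Filter.Eventually.of_forall fun s hs => by
      rw [Real.norm_eq_abs]; exact hC k s ⟨hr.trans hs.1.le, hs.2⟩
  have hint_nonneg : ∀ (k : Fin 2) (f : StieltjesFunction ℝ) (r : ℝ), 0 ≤ r →
      0 ≤ ∫ s in Set.Ioc r t, v k s ∂f.measure := by
    intro k f r hr
    exact setIntegral_nonneg measurableSet_Ioc fun s hs => hv_nonneg k s ⟨hr.trans hs.1.le, hs.2⟩
  have hint_mono : ∀ (k : Fin 2) (f : StieltjesFunction ℝ) (r r' : ℝ), 0 ≤ r' → r' ≤ r →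
      (∫ s in Set.Ioc r t, v k s ∂f.measure) ≤ ∫ s in Set.Ioc r' t, v k s ∂f.measure := by
    intro k f r r' hr' hrr'
    refine setIntegral_mono_set (hIntOn k f r' hr') ?_ ?_
    · rw [Filter.EventuallyLE, ae_restrict_iff' measurableSet_Ioc]
      exact Filter.Eventually.of_forall fun s hs => hv_nonneg k s ⟨hr'.trans hs.1.le, hs.2⟩
    · exact (Set.Ioc_subset_Ioc_left hrr').eventuallyLE
  intro i j hij
  -- notation
  set Bj : ℝ := (bp j t - bp j 0) + (bn j t - bn j 0) with hBjdef
  set Bi : ℝ := (bp i t - bp i 0) + (bn i t - bn i 0) with hBidef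
  have hBj0 : 0 ≤ Bj := by
    have h1 := (bp j).mono ht.le
    have h2 := (bn j).mono ht.le
    simp only [hBjdef]; linarith
  have hBi0 : 0 ≤ Bi := by
    have h1 := (bp i).mono ht.le
    have h2 := (bn i).mono ht.le
    simp only [hBidef]; linarith
  set ej : ℝ := Real.exp Bj with hejdef
  set cij : ℝ := bbar i j t with hcijdef
  set cji : ℝ := bbar j i t with hcjidef
  have hcij0 : 0 ≤ cij := by
    rw [hcijdef, ← hbbar0 i j hij]; exact (bbar i j).mono ht.le
  have hcji0 : 0 ≤ cji := by
    rw [hcjidef, ← hbbar0 j i hij.symm]; exact (bbar j i).mono ht.le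
  -- Step 2: bound on v j
  have claim2 : ∀ s' ∈ Set.Icc (0:ℝ) t,
      v j s' ≤ (lam j + ∫ u in Set.Ioc s' t, v i u ∂(bbar j i).measure) * ej := by
    intro s' hs'
    set μj : Measure ℝ := (bp j).measure + (bn j).measure with hμjdef
    have hfinμj : μj (Set.Ioc s' t) ≠ ⊤ := by
      rw [hμjdef, Measure.add_apply]
      exact ENNReal.add_ne_top.mpr ⟨hst_fin _ _, hst_fin _ _⟩
    set a : ℝ := lam j + ∫ u in Set.Ioc s' t, v i u ∂(bbar j i).measure with hadef
    have ha0 : 0 ≤ a := add_nonneg (hlam j) (hint_nonneg i (bbar j i) s' hs'.1)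
    have hmain : ∀ r' ∈ Set.Icc s' t, v j r' ≤ a + ∫ s in Set.Ioc r' t, v j s ∂μj := by
      intro r' hr'
      have hr'0 : 0 ≤ r' := hs'.1.trans hr'.1
      have h0 := hineq j i hij.symm r' ⟨hr'0, hr'.2⟩
      have hsum : ∫ s in Set.Ioc r' t, v j s ∂μj =
          (∫ s in Set.Ioc r' t, v j s ∂(bp j).measure) +
            ∫ s in Set.Ioc r' t, v j s ∂(bn j).measure := by
        rw [hμjdef, Measure.restrict_add,
          integral_add_measure (hIntOn j (bp j) r' hr'0) (hIntOn j (bn j) r' hr'0)]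
      have hmono := hint_mono i (bbar j i) r' s' hs'.1 hr'.1
      rw [hsum]
      linarith
    have happ := aux_gronwall μj s' t hs'.2 hfinμj (v j) (hv_meas j)
      (fun r'' hr'' => hv_nonneg j r'' ⟨hs'.1.trans hr''.1, hr''.2⟩) C
      (fun r'' hr'' => hvC j r'' ⟨hs'.1.trans hr''.1, hr''.2⟩) a ha0 hmain s' ⟨le_rfl, hs'.2⟩
    refine happ.trans ?_
    refine mul_le_mul_of_nonneg_left ?_ ha0
    rw [hejdef]
    apply Real.exp_le_exp.mpr
    have htr : (μj (Set.Ioc s' t)).toReal =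
        (bp j t - bp j s') + (bn j t - bn j s') := by
      rw [hμjdef, Measure.add_apply, ENNReal.toReal_add (hst_fin _ _) (hst_fin _ _),
        hst_toReal _ _ hs'.2, hst_toReal _ _ hs'.2]
    rw [htr, hBjdef]
    have h1 := (bp j).mono hs'.1
    have h2 := (bn j).mono hs'.1
    linarith
  -- Step 3: closed inequality for v i
  set κ : Measure ℝ := (bp i).measure + (bn i).measure +
    (ENNReal.ofReal (ej * cij)) • (bbar j i).measure with hκdef
  set A : ℝ := lam i + ej * lam j * cij with hAdef
  have hejcij0 : 0 ≤ ej * cij := mul_nonneg (Real.exp_pos _).le hcij0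
  have hA0 : 0 ≤ A := by
    have : 0 ≤ ej * lam j * cij := mul_nonneg (mul_nonneg (Real.exp_pos _).le (hlam j)) hcij0
    rw [hAdef]; linarith [hlam i]
  have hκfin : κ (Set.Ioc 0 t) ≠ ⊤ := by
    rw [hκdef, Measure.add_apply, Measure.smul_apply, smul_eq_mul, Measure.add_apply]
    exact ENNReal.add_ne_top.mpr ⟨ENNReal.add_ne_top.mpr ⟨hst_fin _ _, hst_fin _ _⟩,
      ENNReal.mul_ne_top ENNReal.ofReal_ne_top (hst_fin _ _)⟩
  have hκmain : ∀ r' ∈ Set.Icc (0:ℝ) t, v i r' ≤ A + ∫ s in Set.Ioc r' t, v i s ∂κ := by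
    intro r' hr'
    have h0 := hineq i j hij r' hr'
    set I : ℝ := ∫ u in Set.Ioc r' t, v i u ∂(bbar j i).measure with hIdef
    have hI0 : 0 ≤ I := hint_nonneg i (bbar j i) r' hr'.1
    have hvj_bound : ∀ s ∈ Set.Ioc r' t, v j s ≤ (lam j + I) * ej := by
      intro s hs
      have h1 := claim2 s ⟨hr'.1.trans hs.1.le, hs.2⟩
      refine h1.trans (mul_le_mul_of_nonneg_right ?_ (Real.exp_pos _).le)
      have := hint_mono i (bbar j i) s r' hr'.1 hs.1.le
      rw [hIdef]; linarith
    have hjint : (∫ s in Set.Ioc r' t, v j s ∂(bbar i j).measure) ≤ (lam j + I) * ej * cij := by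
      have hconst : IntegrableOn (fun _ => (lam j + I) * ej) (Set.Ioc r' t) (bbar i j).measure :=
        (integrableOn_const_iff).mpr (Or.inr (lt_top_iff_ne_top.mpr (hst_fin _ _)))
      calc (∫ s in Set.Ioc r' t, v j s ∂(bbar i j).measure) ≤
            ∫ _ in Set.Ioc r' t, (lam j + I) * ej ∂(bbar i j).measure := by
            refine integral_mono_of_nonneg ?_ hconst ?_
            · rw [Filter.EventuallyLE, ae_restrict_iff' measurableSet_Ioc]
              exact Filter.Eventually.of_forall fun s hs =>
                hv_nonneg j s ⟨hr'.1.trans hs.1.le, hs.2⟩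
            · rw [Filter.EventuallyLE, ae_restrict_iff' measurableSet_Ioc]
              exact Filter.Eventually.of_forall hvj_bound
        _ = (lam j + I) * ej * ((bbar i j).measure (Set.Ioc r' t)).toReal := by
            rw [setIntegral_const, smul_eq_mul, mul_comm]; rfl
        _ ≤ (lam j + I) * ej * cij := by
            refine mul_le_mul_of_nonneg_left ?_ (mul_nonneg (by linarith [hlam j]) (Real.exp_pos _).le)
            rw [hst_toReal _ _ hr'.2, hcijdef]
            have : 0 ≤ bbar i j r' := by
              rw [← hbbar0 i j hij]; exact (bbar i j).mono hr'.1
            linarith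
    have hκint : ∫ s in Set.Ioc r' t, v i s ∂κ =
        ((∫ s in Set.Ioc r' t, v i s ∂(bp i).measure) +
          ∫ s in Set.Ioc r' t, v i s ∂(bn i).measure) + (ej * cij) * I := by
      have ha1 : Integrable (v i)
          ((bp i).measure.restrict (Set.Ioc r' t) + (bn i).measure.restrict (Set.Ioc r' t)) :=
        Integrable.add_measure (hIntOn i (bp i) r' hr'.1) (hIntOn i (bn i) r' hr'.1)
      have ha2 : Integrable (v i)
          (ENNReal.ofReal (ej * cij) • (bbar j i).measure.restrict (Set.Ioc r' t)) :=
        Integrable.smul_measure (hIntOn i (bbar j i) r' hr'.1) ENNReal.ofReal_ne_top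
      rw [hκdef, Measure.restrict_add, Measure.restrict_add, Measure.restrict_smul]
      rw [integral_add_measure ha1 ha2,
        integral_add_measure (hIntOn i (bp i) r' hr'.1) (hIntOn i (bn i) r' hr'.1),
        integral_smul_measure, ENNReal.toReal_ofReal hejcij0]
      rw [hIdef, smul_eq_mul]
    have hexpand : (lam j + I) * ej * cij = ej * lam j * cij + ej * cij * I := by ring
    rw [hκint, hAdef]
    linarith
  have final := aux_gronwall κ 0 t ht.le hκfin (v i) (hv_meas i) (hv_nonneg i) C (hvC i)
    A hA0 hκmain
  intro r hr
  have hexp_bound : (κ (Set.Ioc r t)).toReal ≤ Bi + ej * cij * cji := by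
    have happly : κ (Set.Ioc r t) = (bp i).measure (Set.Ioc r t) + (bn i).measure (Set.Ioc r t)
        + ENNReal.ofReal (ej * cij) * (bbar j i).measure (Set.Ioc r t) := by
      rw [hκdef, Measure.add_apply, Measure.smul_apply, smul_eq_mul]
      rw [Measure.add_apply]
    rw [happly, ENNReal.toReal_add (ENNReal.add_ne_top.mpr ⟨hst_fin _ _, hst_fin _ _⟩)
        (ENNReal.mul_ne_top ENNReal.ofReal_ne_top (hst_fin _ _)),
      ENNReal.toReal_add (hst_fin _ _) (hst_fin _ _), ENNReal.toReal_mul,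
      ENNReal.toReal_ofReal hejcij0, hst_toReal _ _ hr.2, hst_toReal _ _ hr.2,
      hst_toReal _ _ hr.2]
    have h1 := (bp i).mono hr.1
    have h2 := (bn i).mono hr.1
    have h3 : 0 ≤ bbar j i r := by
      rw [← hbbar0 j i hij.symm]; exact (bbar j i).mono hr.1
    have h4 : (ej * cij) * (bbar j i t - bbar j i r) ≤ ej * cij * cji := by
      refine mul_le_mul_of_nonneg_left ?_ hejcij0
      rw [hcjidef]; linarith
    rw [hBidef]
    linarith
  have hvi : v i r ≤ A * Real.exp (Bi + ej * cij * cji) := by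
    refine (final r hr).trans ?_
    exact mul_le_mul_of_nonneg_left (Real.exp_le_exp.mpr hexp_bound) hA0
  -- final arithmetic
  set L : ℝ := Real.sqrt (lam 0 ^ 2 + lam 1 ^ 2) with hLdef
  have hL0 : 0 ≤ L := Real.sqrt_nonneg _
  have hLk : ∀ k : Fin 2, lam k ≤ L := by
    intro k
    have h01 : lam k = lam 0 ∨ lam k = lam 1 := by
      fin_cases k
      · exact Or.inl rfl
      · exact Or.inr rfl
    rw [hLdef, show lam k = Real.sqrt (lam k ^ 2) from (Real.sqrt_sq (hlam k)).symm]
    refine Real.sqrt_le_sqrt ?_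
    rcases h01 with h | h <;> rw [h] <;> nlinarith [sq_nonneg (lam 0), sq_nonneg (lam 1)]
  have hcase : (i = 0 ∧ j = 1) ∨ (i = 1 ∧ j = 0) := by
    have hi := i.isLt
    have hj := j.isLt
    have hne : i.val ≠ j.val := fun h => hij (Fin.ext h)
    have h0 : i.val = 0 ∧ j.val = 1 ∨ i.val = 1 ∧ j.val = 0 := by omega
    rcases h0 with ⟨h1, h2⟩ | ⟨h1, h2⟩
    · exact Or.inl ⟨Fin.ext h1, Fin.ext h2⟩
    · exact Or.inr ⟨Fin.ext h1, Fin.ext h2⟩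
  have hprod : bbar 0 1 t * bbar 1 0 t = cij * cji := by
    rw [hcijdef, hcjidef]
    rcases hcase with ⟨h1, h2⟩ | ⟨h1, h2⟩ <;> rw [h1, h2] <;> ring
  refine hvi.trans ?_
  rw [hAdef, hejdef]
  have hBsum : ((bp 0 t - bp 0 0) + (bn 0 t - bn 0 0)) + ((bp 1 t - bp 1 0) + (bn 1 t - bn 1 0))
      = Bi + Bj := by
    rw [hBidef, hBjdef]
    rcases hcase with ⟨h1, h2⟩ | ⟨h1, h2⟩ <;> rw [h1, h2] <;> ring
  calc (lam i + Real.exp Bj * lam j * cij) * Real.exp (Bi + Real.exp Bj * cij * cji)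
      ≤ L * (1 + cij) * Real.exp (Real.exp Bj * (cij * cji) + Bi + Bj) :=
        final_arith L (lam i) (lam j) Bi Bj cij cji hL0 (hLk i) (hLk j)
          (hlam i) (hlam j) hBi0 hBj0 hcij0 hcji0
    _ = L * (1 + cij) * Real.exp (Real.exp Bj * (bbar 0 1 t * bbar 1 0 t) +
          ((bp 0 t - bp 0 0) + (bn 0 t - bn 0 0)) + ((bp 1 t - bp 1 0) + (bn 1 t - bn 1 0))) := by
        rw [hprod]
        congr 1
        rw [Real.exp_eq_exp]
        linarith [hBsum]
end

section
/- Lipschitz estimate for the nonlinear integral term: for λ, μ ∈ [0,M]² and a measure m on ℝ₊²\{0} with ∫ (z₁² 1_{‖z‖≤1} + z₁ 1_{‖z‖>1} + z₂) m(dz) < ∞, one has |∫ K₁(λ,z) m(dz) − ∫ K₁(μ,z) m(dz)| ≤ (2M+1) ( |λ₁−μ₁| ∫ (z₁ 1_{‖z‖>1} + z₁² 1_{‖z‖≤1} + z₂) m(dz) + |λ₂−μ₂| ∫ z₂ m(dz) ), where K₁(λ,z) = e^{-⟨λ,z⟩} − 1 + λ₁ z₁. -/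
open Real MeasureTheory

set_option maxHeartbeats 1000000


open Real MeasureTheory

private lemma exp_neg_ge (x : ℝ) : 1 - x ≤ Real.exp (-x) := by
  linarith [Real.add_one_le_exp (-x)]

private lemma exp_neg_le_one {x : ℝ} (hx : 0 ≤ x) : Real.exp (-x) ≤ 1 := by
  rw [← Real.exp_zero]; exact Real.exp_le_exp.2 (by linarith)

private lemma exp_quad {x : ℝ} (hx : 0 ≤ x) : Real.exp (-x) - 1 + x ≤ x ^ 2 := by
  have h := Real.add_one_le_exp x
  have hp := Real.exp_pos x
  rw [Real.exp_neg]
  have hinv : (Real.exp x)⁻¹ * Real.exp x = 1 := inv_mul_cancel₀ hp.ne'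
  nlinarith [inv_pos.2 hp, sq_nonneg x, mul_nonneg (le_of_lt (inv_pos.2 hp)) hx]

private lemma sqrt_bd1 {z1 z2 : ℝ} (hz1 : 0 ≤ z1) : z1 ≤ Real.sqrt (z1 ^ 2 + z2 ^ 2) := by
  nlinarith [Real.sq_sqrt (show (0:ℝ) ≤ z1^2+z2^2 by positivity),
    Real.sqrt_nonneg (z1^2+z2^2), sq_nonneg z2]

private lemma deriv_bound (M d1 d2 z1 z2 u E : ℝ) (hM : 0 < M) (hz1 : 0 ≤ z1) (hz2 : 0 ≤ z2)
    (hE0 : 0 < E) (hE1 : E ≤ 1) (hEu : 1 - u ≤ E) (huM : u ≤ M * z1 + M * z2) :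
    |d1 * z1 * (1 - E) - d2 * z2 * E| ≤
      (2 * M + 1) * (|d1| * ((if 1 < Real.sqrt (z1 ^ 2 + z2 ^ 2) then z1 else 0) +
        (if Real.sqrt (z1 ^ 2 + z2 ^ 2) ≤ 1 then z1 ^ 2 else 0) + z2) + |d2| * z2) := by
  have habs : |d1 * z1 * (1 - E) - d2 * z2 * E| ≤ |d1| * (z1 * (1 - E)) + |d2| * z2 := by
    refine (abs_sub _ _).trans ?_
    rw [abs_mul, abs_mul, abs_mul, abs_mul]
    rw [abs_of_nonneg hz1, abs_of_nonneg hz2, abs_of_nonneg (by linarith : (0:ℝ) ≤ 1 - E),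
      abs_of_pos hE0]
    have h2 : |d2| * z2 * E ≤ |d2| * z2 * 1 :=
      mul_le_mul_of_nonneg_left hE1 (by positivity)
    nlinarith [abs_nonneg d1, mul_nonneg hz1 (by linarith : (0:ℝ) ≤ 1 - E)]
  refine habs.trans ?_
  rcases le_or_gt (Real.sqrt (z1 ^ 2 + z2 ^ 2)) 1 with hcase | hcase
  · rw [if_neg (not_lt.2 hcase), if_pos hcase]
    have hz1le : z1 ≤ 1 := (sqrt_bd1 hz1 (z2 := z2)).trans hcase
    have h1E : z1 * (1 - E) ≤ M * z1 ^ 2 + M * z2 := by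
      nlinarith [mul_le_mul_of_nonneg_left huM hz1,
        mul_le_mul_of_nonneg_left (show 1 - E ≤ u by linarith) hz1,
        mul_nonneg (mul_nonneg hM.le hz2) (sub_nonneg.2 hz1le)]
    nlinarith [abs_nonneg d1, abs_nonneg d2,
      mul_le_mul_of_nonneg_left h1E (abs_nonneg d1),
      mul_nonneg (abs_nonneg d2) hz2, sq_nonneg z1,
      mul_nonneg (abs_nonneg d1) (sq_nonneg z1), mul_nonneg (abs_nonneg d1) hz2]
  · rw [if_pos hcase, if_neg (not_le.2 hcase)]
    have h1E : z1 * (1 - E) ≤ z1 := by nlinarith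
    nlinarith [abs_nonneg d1, abs_nonneg d2,
      mul_le_mul_of_nonneg_left h1E (abs_nonneg d1),
      mul_nonneg (abs_nonneg d2) hz2, mul_nonneg (abs_nonneg d1) hz1,
      mul_nonneg (abs_nonneg d1) hz2]

private lemma mvt_exp (c0 c1 b C : ℝ)
    (hbd : ∀ t ∈ Set.Ico (0:ℝ) 1, |(-c1) * Real.exp (-(c0 + t * c1)) + b| ≤ C) :
    |Real.exp (-(c0 + c1)) + b - Real.exp (-c0)| ≤ C := by
  have hderiv : ∀ t ∈ Set.Icc (0:ℝ) 1,
      HasDerivWithinAt (fun t => Real.exp (-(c0 + t * c1)) + t * b)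
        (-c1 * Real.exp (-(c0 + t * c1)) + b) (Set.Icc 0 1) t := by
    intro t _
    have h1 : HasDerivAt (fun t : ℝ => -(c0 + t * c1)) (-c1) t := by
      have h := (((hasDerivAt_id t).mul_const c1).const_add c0).neg
      rw [one_mul] at h
      exact h
    have h2 : HasDerivAt (fun t : ℝ => Real.exp (-(c0 + t * c1)))
        (-c1 * Real.exp (-(c0 + t * c1))) t := by
      simpa [mul_comm] using h1.exp
    have h3 : HasDerivAt (fun t : ℝ => t * b) b t := by
      simpa using (hasDerivAt_id t).mul_const b
    exact (h2.add h3).hasDerivWithinAt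
  have := norm_image_sub_le_of_norm_deriv_le_segment_01' hderiv
    (by simpa [Real.norm_eq_abs] using hbd)
  simpa [Real.norm_eq_abs] using this

private lemma key_pointwise (M l1 l2 m1 m2 z1 z2 : ℝ) (hM : 0 < M)
    (hz1 : 0 ≤ z1) (hz2 : 0 ≤ z2)
    (hl1 : l1 ∈ Set.Icc 0 M) (hl2 : l2 ∈ Set.Icc 0 M)
    (hm1 : m1 ∈ Set.Icc 0 M) (hm2 : m2 ∈ Set.Icc 0 M) :
    |(Real.exp (-(l1 * z1 + l2 * z2)) - 1 + l1 * z1) -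
      (Real.exp (-(m1 * z1 + m2 * z2)) - 1 + m1 * z1)| ≤
      (2 * M + 1) * (|l1 - m1| * ((if 1 < Real.sqrt (z1 ^ 2 + z2 ^ 2) then z1 else 0) +
        (if Real.sqrt (z1 ^ 2 + z2 ^ 2) ≤ 1 then z1 ^ 2 else 0) + z2) + |l2 - m2| * z2) := by
  have hmain := mvt_exp (m1 * z1 + m2 * z2) ((l1 - m1) * z1 + (l2 - m2) * z2)
    ((l1 - m1) * z1)
    ((2 * M + 1) * (|l1 - m1| * ((if 1 < Real.sqrt (z1 ^ 2 + z2 ^ 2) then z1 else 0) +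
        (if Real.sqrt (z1 ^ 2 + z2 ^ 2) ≤ 1 then z1 ^ 2 else 0) + z2) + |l2 - m2| * z2))
    (by
      intro t ht
      obtain ⟨ht0, ht1⟩ := ht
      have ha1n : 0 ≤ m1 + t * (l1 - m1) := by nlinarith [hm1.1, hl1.1]
      have ha2n : 0 ≤ m2 + t * (l2 - m2) := by nlinarith [hm2.1, hl2.1]
      have ha1M : m1 + t * (l1 - m1) ≤ M := by nlinarith [hm1.2, hl1.2]
      have ha2M : m2 + t * (l2 - m2) ≤ M := by nlinarith [hm2.2, hl2.2]
      have hu : m1 * z1 + m2 * z2 + t * ((l1 - m1) * z1 + (l2 - m2) * z2) =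
          (m1 + t * (l1 - m1)) * z1 + (m2 + t * (l2 - m2)) * z2 := by ring
      have hun : 0 ≤ (m1 + t * (l1 - m1)) * z1 + (m2 + t * (l2 - m2)) * z2 := by positivity
      have huM : (m1 + t * (l1 - m1)) * z1 + (m2 + t * (l2 - m2)) * z2 ≤
          M * z1 + M * z2 := by nlinarith
      rw [hu]
      have heq : -((l1 - m1) * z1 + (l2 - m2) * z2) *
          Real.exp (-((m1 + t * (l1 - m1)) * z1 + (m2 + t * (l2 - m2)) * z2)) +
          (l1 - m1) * z1 = (l1 - m1) * z1 *
            (1 - Real.exp (-((m1 + t * (l1 - m1)) * z1 + (m2 + t * (l2 - m2)) * z2))) -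
          (l2 - m2) * z2 *
            Real.exp (-((m1 + t * (l1 - m1)) * z1 + (m2 + t * (l2 - m2)) * z2)) := by
        ring
      rw [heq]
      exact deriv_bound M (l1 - m1) (l2 - m2) z1 z2 _ _ hM hz1 hz2 (Real.exp_pos _)
        (exp_neg_le_one hun) (exp_neg_ge _) huM)
  have harg : l1 * z1 + l2 * z2 =
      m1 * z1 + m2 * z2 + ((l1 - m1) * z1 + (l2 - m2) * z2) := by ring
  rw [harg]
  have hlhs : (Real.exp (-(m1 * z1 + m2 * z2 + ((l1 - m1) * z1 + (l2 - m2) * z2))) - 1 + l1 * z1) -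
      (Real.exp (-(m1 * z1 + m2 * z2)) - 1 + m1 * z1) =
      Real.exp (-(m1 * z1 + m2 * z2 + ((l1 - m1) * z1 + (l2 - m2) * z2))) + (l1 - m1) * z1 -
      Real.exp (-(m1 * z1 + m2 * z2)) := by ring
  rw [hlhs]
  exact hmain

private lemma integK (M : ℝ) (hM : 0 < M) (m : Measure (ℝ × ℝ))
    (hsupp : ∀ᵐ z ∂m, 0 ≤ z.1 ∧ 0 ≤ z.2 ∧ z ≠ (0, 0))
    (hmom : Integrable (fun z : ℝ × ℝ =>
      (if Real.sqrt (z.1 ^ 2 + z.2 ^ 2) ≤ 1 then z.1 ^ 2 else 0) +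
      (if 1 < Real.sqrt (z.1 ^ 2 + z.2 ^ 2) then z.1 else 0) + z.2) m)
    (l1 l2 : ℝ) (hl1 : l1 ∈ Set.Icc 0 M) (hl2 : l2 ∈ Set.Icc 0 M) :
    Integrable (fun z : ℝ × ℝ => Real.exp (-(l1 * z.1 + l2 * z.2)) - 1 + l1 * z.1) m := by
  have hc : Continuous (fun z : ℝ × ℝ => Real.exp (-(l1 * z.1 + l2 * z.2)) - 1 + l1 * z.1) :=
    ((Real.continuous_exp.comp ((continuous_const.mul continuous_fst).add
      (continuous_const.mul continuous_snd)).neg).sub continuous_const).add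
      (continuous_const.mul continuous_fst)
  refine (hmom.const_mul (M ^ 2 + M)).mono' hc.aestronglyMeasurable ?_
  filter_upwards [hsupp] with z hz
  obtain ⟨hz1, hz2, -⟩ := hz
  rw [Real.norm_eq_abs]
  have ha : 0 ≤ l1 * z.1 := mul_nonneg hl1.1 hz1
  have hb : 0 ≤ l2 * z.2 := mul_nonneg hl2.1 hz2
  have hsplit : Real.exp (-(l1 * z.1 + l2 * z.2)) =
      Real.exp (-(l1 * z.1)) * Real.exp (-(l2 * z.2)) := by
    rw [← Real.exp_add]; ring_nf
  have h1 := exp_neg_ge (l1 * z.1)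
  have h2 := exp_neg_le_one ha
  have h3 := exp_neg_le_one hb
  have h4 := exp_neg_ge (l2 * z.2)
  have h5 := exp_quad ha
  have h6 := Real.exp_pos (-(l1 * z.1))
  have h7 := Real.exp_pos (-(l2 * z.2))
  have hK : |Real.exp (-(l1 * z.1 + l2 * z.2)) - 1 + l1 * z.1| ≤
      (Real.exp (-(l1 * z.1)) - 1 + l1 * z.1) + l2 * z.2 := by
    rw [hsplit, abs_le]
    constructor
    · nlinarith [mul_le_mul_of_nonneg_left h4 h6.le]
    · nlinarith [mul_le_mul_of_nonneg_left h3 h6.le]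
  refine hK.trans ?_
  have haM : l1 * z.1 ≤ M * z.1 := mul_le_mul_of_nonneg_right hl1.2 hz1
  have hbM : l2 * z.2 ≤ M * z.2 := mul_le_mul_of_nonneg_right hl2.2 hz2
  rcases le_or_gt (Real.sqrt (z.1 ^ 2 + z.2 ^ 2)) 1 with hcase | hcase
  · rw [if_pos hcase, if_neg (not_lt.2 hcase)]
    have hz1le : z.1 ≤ 1 := (sqrt_bd1 hz1 (z2 := z.2)).trans hcase
    have hsq : (l1 * z.1) ^ 2 ≤ M ^ 2 * z.1 ^ 2 := by nlinarith [mul_nonneg hM.le hz1]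
    nlinarith [sq_nonneg z.1, mul_nonneg hM.le hz2, sq_nonneg M]
  · rw [if_neg (not_le.2 hcase), if_pos hcase]
    nlinarith [mul_nonneg hM.le hz1, mul_nonneg hM.le hz2, sq_nonneg M,
      mul_nonneg (mul_nonneg hM.le hM.le) hz1, mul_nonneg (mul_nonneg hM.le hM.le) hz2]

/-- Lipschitz estimate for the nonlinear integral term. For
`λ, μ ∈ [0,M]²` and a measure `m` on `ℝ₊²\{0}` with
`∫ (z₁² 1_{‖z‖≤1} + z₁ 1_{‖z‖>1} + z₂) m(dz) < ∞`,
`|∫ K₁(λ,z) m(dz) − ∫ K₁(μ,z) m(dz)| ≤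
  (2M+1)( |λ₁−μ₁| ∫ (z₁ 1_{‖z‖>1} + z₁² 1_{‖z‖≤1} + z₂) m(dz) + |λ₂−μ₂| ∫ z₂ m(dz) )`,
where `K₁(λ,z) = e^{-⟨λ,z⟩} − 1 + λ₁z₁` and `‖z‖` is the Euclidean norm. -/
theorem stmt11 (M : ℝ) (hM : 0 < M) (m : Measure (ℝ × ℝ))
    (hsupp : ∀ᵐ z ∂m, 0 ≤ z.1 ∧ 0 ≤ z.2 ∧ z ≠ (0, 0))
    (hmom : Integrable (fun z : ℝ × ℝ =>
      (if Real.sqrt (z.1 ^ 2 + z.2 ^ 2) ≤ 1 then z.1 ^ 2 else 0) +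
      (if 1 < Real.sqrt (z.1 ^ 2 + z.2 ^ 2) then z.1 else 0) + z.2) m)
    (l1 l2 m1 m2 : ℝ)
    (hl : l1 ∈ Set.Icc 0 M ∧ l2 ∈ Set.Icc 0 M)
    (hm : m1 ∈ Set.Icc 0 M ∧ m2 ∈ Set.Icc 0 M) :
    Integrable (fun z : ℝ × ℝ => Real.exp (-(l1 * z.1 + l2 * z.2)) - 1 + l1 * z.1) m ∧
    Integrable (fun z : ℝ × ℝ => Real.exp (-(m1 * z.1 + m2 * z.2)) - 1 + m1 * z.1) m ∧
    |(∫ z, (Real.exp (-(l1 * z.1 + l2 * z.2)) - 1 + l1 * z.1) ∂m) -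
        ∫ z, (Real.exp (-(m1 * z.1 + m2 * z.2)) - 1 + m1 * z.1) ∂m| ≤
      (2 * M + 1) *
        (|l1 - m1| * ∫ z, ((if 1 < Real.sqrt (z.1 ^ 2 + z.2 ^ 2) then z.1 else 0) +
            (if Real.sqrt (z.1 ^ 2 + z.2 ^ 2) ≤ 1 then z.1 ^ 2 else 0) + z.2) ∂m +
         |l2 - m2| * ∫ z, z.2 ∂m) := by
  obtain ⟨hl1, hl2⟩ := hl
  obtain ⟨hm1, hm2⟩ := hm
  have hIl := integK M hM m hsupp hmom l1 l2 hl1 hl2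
  have hIm := integK M hM m hsupp hmom m1 m2 hm1 hm2
  refine ⟨hIl, hIm, ?_⟩
  -- integrability of the moment functions
  have hH : Integrable (fun z : ℝ × ℝ =>
      (if 1 < Real.sqrt (z.1 ^ 2 + z.2 ^ 2) then z.1 else 0) +
      (if Real.sqrt (z.1 ^ 2 + z.2 ^ 2) ≤ 1 then z.1 ^ 2 else 0) + z.2) m :=
    hmom.congr (ae_of_all _ fun z => by ring)
  have hz2meas : AEStronglyMeasurable (fun z : ℝ × ℝ => z.2) m :=
    continuous_snd.aestronglyMeasurable
  have hIz2 : Integrable (fun z : ℝ × ℝ => z.2) m := by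
    refine hmom.mono' hz2meas ?_
    filter_upwards [hsupp] with z hz
    obtain ⟨hz1, hz2, -⟩ := hz
    rw [Real.norm_eq_abs, abs_of_nonneg hz2]
    split_ifs <;> nlinarith [sq_nonneg z.1]
  -- pointwise bound a.e.
  have hptwise : ∀ᵐ z ∂m,
      |(Real.exp (-(l1 * z.1 + l2 * z.2)) - 1 + l1 * z.1) -
        (Real.exp (-(m1 * z.1 + m2 * z.2)) - 1 + m1 * z.1)| ≤
      (2 * M + 1) * (|l1 - m1| * ((if 1 < Real.sqrt (z.1 ^ 2 + z.2 ^ 2) then z.1 else 0) +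
        (if Real.sqrt (z.1 ^ 2 + z.2 ^ 2) ≤ 1 then z.1 ^ 2 else 0) + z.2) + |l2 - m2| * z.2) := by
    filter_upwards [hsupp] with z hz
    obtain ⟨hz1, hz2, -⟩ := hz
    exact key_pointwise M l1 l2 m1 m2 z.1 z.2 hM hz1 hz2 hl1 hl2 hm1 hm2
  have hIbound : Integrable (fun z : ℝ × ℝ =>
      (2 * M + 1) * (|l1 - m1| * ((if 1 < Real.sqrt (z.1 ^ 2 + z.2 ^ 2) then z.1 else 0) +
        (if Real.sqrt (z.1 ^ 2 + z.2 ^ 2) ≤ 1 then z.1 ^ 2 else 0) + z.2) + |l2 - m2| * z.2)) m :=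
    (((hH.const_mul |l1 - m1|).add (hIz2.const_mul |l2 - m2|)).const_mul (2 * M + 1))
  calc |(∫ z, (Real.exp (-(l1 * z.1 + l2 * z.2)) - 1 + l1 * z.1) ∂m) -
        ∫ z, (Real.exp (-(m1 * z.1 + m2 * z.2)) - 1 + m1 * z.1) ∂m|
      = |∫ z, ((Real.exp (-(l1 * z.1 + l2 * z.2)) - 1 + l1 * z.1) -
          (Real.exp (-(m1 * z.1 + m2 * z.2)) - 1 + m1 * z.1)) ∂m| := by
        rw [integral_sub hIl hIm]
    _ ≤ ∫ z, |(Real.exp (-(l1 * z.1 + l2 * z.2)) - 1 + l1 * z.1) -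
          (Real.exp (-(m1 * z.1 + m2 * z.2)) - 1 + m1 * z.1)| ∂m :=
      by
        simpa [Real.norm_eq_abs] using norm_integral_le_integral_norm (μ := m)
          (fun z : ℝ × ℝ => (Real.exp (-(l1 * z.1 + l2 * z.2)) - 1 + l1 * z.1) -
            (Real.exp (-(m1 * z.1 + m2 * z.2)) - 1 + m1 * z.1))
    _ ≤ ∫ z, (2 * M + 1) * (|l1 - m1| * ((if 1 < Real.sqrt (z.1 ^ 2 + z.2 ^ 2) then z.1 else 0) +
          (if Real.sqrt (z.1 ^ 2 + z.2 ^ 2) ≤ 1 then z.1 ^ 2 else 0) + z.2) +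
          |l2 - m2| * z.2) ∂m := by
        refine integral_mono_ae ((hIl.sub hIm).abs) hIbound hptwise
    _ = (2 * M + 1) *
        (|l1 - m1| * ∫ z, ((if 1 < Real.sqrt (z.1 ^ 2 + z.2 ^ 2) then z.1 else 0) +
            (if Real.sqrt (z.1 ^ 2 + z.2 ^ 2) ≤ 1 then z.1 ^ 2 else 0) + z.2) ∂m +
         |l2 - m2| * ∫ z, z.2 ∂m) := by
        rw [integral_const_mul, integral_add (hH.const_mul _) (hIz2.const_mul _),
          integral_const_mul, integral_const_mul]
end

section
/- Uniqueness of positive bounded solutions to the special (affine-in-jump) backward system: for fixed t and λ ∈ ℝ₊², any two bounded positive solutions r ↦ u(r) of u_i(r) = λ_i + ∫_{(r,t]} u_i(s) γ_ii(ds) + ∫_{(r,t]} u_j(s) γ_ij(ds) + ∫_{(r,t]} ∫ (1 − e^{-⟨u(s),z⟩}) μ_i(ds,dz) (i=1,2, j≠i) coincide on [0,t]. -/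
open Real MeasureTheory
open scoped ENNReal NNReal

private lemma myIntOn {ν : Measure ℝ} {s : Set ℝ} (hs : MeasurableSet s)
    (hν : ν s ≠ ⊤) {f : ℝ → ℝ} (hf : Measurable f) {C : ℝ}
    (hC : ∀ x ∈ s, |f x| ≤ C) : IntegrableOn f s ν := by
  haveI : IsFiniteMeasure (ν.restrict s) :=
    ⟨by rwa [Measure.restrict_apply_univ, lt_top_iff_ne_top]⟩
  refine ⟨hf.aestronglyMeasurable, HasFiniteIntegral.of_bounded (C := C) ?_⟩
  filter_upwards [ae_restrict_mem hs] with x hx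
  simpa [Real.norm_eq_abs] using hC x hx

private lemma myExpLip {a b : ℝ} (ha : 0 ≤ a) (hb : 0 ≤ b) :
    |Real.exp (-a) - Real.exp (-b)| ≤ |a - b| := by
  wlog h : a ≤ b generalizing a b
  · rw [abs_sub_comm, abs_sub_comm a b]; exact this hb ha (le_of_not_ge h)
  have h1 : Real.exp (-b) ≤ Real.exp (-a) := Real.exp_le_exp.2 (by linarith)
  have h2 : Real.exp (-a) ≤ 1 := Real.exp_le_one_iff.2 (by linarith)
  have h3 : (-(b - a)) + 1 ≤ Real.exp (-(b - a)) := Real.add_one_le_exp _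
  have h4 : Real.exp (-a) * Real.exp (-(b - a)) = Real.exp (-b) := by
    rw [← Real.exp_add]; ring_nf
  rw [abs_of_nonneg (by linarith), abs_of_nonpos (by linarith)]
  nlinarith [Real.exp_pos (-a), Real.exp_pos (-(b - a))]

private lemma myGronwall (t : ℝ) (ht : 0 ≤ t) (ν : Measure ℝ) (hν : ν (Set.Ioc 0 t) ≠ ⊤)
    (D : ℝ → ℝ) (hD : Measurable D) (hD0 : ∀ r, 0 ≤ D r) (M : ℝ)
    (hDM : ∀ r ∈ Set.Icc (0:ℝ) t, D r ≤ M)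
    (hkey : ∀ r ∈ Set.Icc (0:ℝ) t, D r ≤ ∫ s in Set.Ioc r t, D s ∂ν) :
    ∀ r ∈ Set.Icc (0:ℝ) t, D r = 0 := by
  set S : Set ℝ := {r | r ∈ Set.Icc (0:ℝ) t ∧ ∀ s ∈ Set.Icc r t, D s = 0} with hSdef
  have htS : t ∈ S := by
    have h0 : D t = 0 := by
      have h := hkey t ⟨ht, le_refl t⟩
      simp only [Set.Ioc_self, Measure.restrict_empty, integral_zero_measure] at h
      exact le_antisymm h (hD0 t)
    exact ⟨⟨ht, le_refl t⟩, fun s hs => by rw [le_antisymm hs.2 hs.1]; exact h0⟩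
  have hSne : S.Nonempty := ⟨t, htS⟩
  have hbdd : BddBelow S := ⟨0, fun x hx => hx.1.1⟩
  set a := sInf S with ha
  have ha0 : 0 ≤ a := le_csInf hSne fun x hx => hx.1.1
  have hat : a ≤ t := csInf_le hbdd htS
  have key0 : ∀ s, a < s → s ≤ t → D s = 0 := by
    intro s hs hst
    obtain ⟨r₀, hr₀S, hr₀⟩ := exists_lt_of_csInf_lt hSne hs
    exact hr₀S.2 s ⟨le_of_lt hr₀, hst⟩
  have hDa : D a = 0 := by
    have h1 : ∫ s in Set.Ioc a t, D s ∂ν = 0 := by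
      refine integral_eq_zero_of_ae ?_
      filter_upwards [ae_restrict_mem measurableSet_Ioc] with s hs
      exact key0 s hs.1 hs.2
    have h := hkey a ⟨ha0, hat⟩
    rw [h1] at h
    exact le_antisymm h (hD0 a)
  have haS : ∀ s ∈ Set.Icc a t, D s = 0 := fun s hs =>
    hs.1.lt_or_eq.elim (fun h => key0 s h hs.2) (fun h => h ▸ hDa)
  have ha_eq : a = 0 := by
    by_contra hne
    have hapos : 0 < a := lt_of_le_of_ne ha0 (Ne.symm hne)
    obtain ⟨n, hn⟩ : ∃ n : ℕ, ν (Set.Ioo (max 0 (a - 1/((n:ℝ)+1))) a) < ENNReal.ofReal (1/2) := by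
      have hsub : ∀ n : ℕ, Set.Ioo (max 0 (a - 1/((n:ℝ)+1))) a ⊆ Set.Ioc 0 t := fun n x hx =>
        ⟨lt_of_le_of_lt (le_max_left _ _) hx.1, le_trans (le_of_lt hx.2) hat⟩
      have hanti : Antitone (fun n : ℕ => Set.Ioo (max 0 (a - 1/((n:ℝ)+1))) a) := by
        intro m n hmn
        apply Set.Ioo_subset_Ioo_left
        apply max_le_max (le_refl (0:ℝ))
        have h1 : (1:ℝ)/((n:ℝ)+1) ≤ 1/((m:ℝ)+1) := by
          apply one_div_le_one_div_of_le (by positivity)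
          have := (Nat.cast_le (α := ℝ)).2 hmn
          linarith
        linarith
      have hempty : ⋂ n : ℕ, Set.Ioo (max 0 (a - 1/((n:ℝ)+1))) a = ∅ := by
        ext x
        simp only [Set.mem_iInter, Set.mem_empty_iff_false, iff_false, not_forall]
        rcases lt_or_ge x a with hx | hx
        · obtain ⟨n, hn⟩ := exists_nat_one_div_lt (show (0:ℝ) < a - x by linarith)
          exact ⟨n, fun h => absurd h.1 (not_lt.2 (le_max_of_le_right (by linarith)))⟩
        · exact ⟨0, fun h => absurd h.2 (not_lt.2 hx)⟩
      have htend := tendsto_measure_iInter_atTop (μ := ν)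
        (fun n => measurableSet_Ioo.nullMeasurableSet) hanti
        ⟨0, ne_top_of_le_ne_top hν (measure_mono (hsub 0))⟩
      rw [hempty, measure_empty] at htend
      exact (htend.eventually_lt_const (by simp : (0:ℝ≥0∞) < ENNReal.ofReal (1/2))).exists
    set r' := max 0 (a - 1/((n:ℝ)+1)) with hr'def
    have hr'lt : r' < a := max_lt hapos (sub_lt_self a (by positivity))
    have hr'0 : 0 ≤ r' := le_max_left _ _
    set m := sSup (D '' Set.Ico r' a) with hm
    have hmemr' : D r' ∈ D '' Set.Ico r' a := ⟨r', ⟨le_refl r', hr'lt⟩, rfl⟩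
    have hne' : (D '' Set.Ico r' a).Nonempty := ⟨D r', hmemr'⟩
    have hbdd' : BddAbove (D '' Set.Ico r' a) := by
      refine ⟨M, ?_⟩
      rintro x ⟨s, hs, rfl⟩
      exact hDM s ⟨le_trans hr'0 hs.1, le_trans (le_of_lt hs.2) hat⟩
    have hm0 : 0 ≤ m := le_trans (hD0 r') (le_csSup hbdd' hmemr')
    have hfin2 : ν (Set.Ioo r' a) ≠ ⊤ := hn.ne_top
    have hhalf : (ν (Set.Ioo r' a)).toReal ≤ 1/2 := by
      calc (ν (Set.Ioo r' a)).toReal ≤ (ENNReal.ofReal (1/2)).toReal :=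
            ENNReal.toReal_mono ENNReal.ofReal_ne_top (le_of_lt hn)
        _ = 1/2 := by rw [ENNReal.toReal_ofReal]; norm_num
    have hstep : ∀ r ∈ Set.Ico r' a, D r ≤ m * (1/2) := by
      intro r hrm
      have hrI : r ∈ Set.Icc (0:ℝ) t := ⟨le_trans hr'0 hrm.1, le_trans (le_of_lt hrm.2) hat⟩
      have hDle : ∀ s ∈ Set.Ioc r t, D s ≤ Set.indicator (Set.Ioo r' a) (fun _ => m) s := by
        intro s hs
        rcases lt_or_ge s a with h | h
        · have hsmem : s ∈ Set.Ioo r' a := ⟨lt_of_le_of_lt hrm.1 hs.1, h⟩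
          rw [Set.indicator_of_mem hsmem]
          exact le_csSup hbdd' ⟨s, ⟨le_of_lt hsmem.1, h⟩, rfl⟩
        · rw [haS s ⟨h, hs.2⟩]
          exact Set.indicator_nonneg (fun _ _ => hm0) s
      have hνr : ν (Set.Ioc r t) ≠ ⊤ :=
        ne_top_of_le_ne_top hν (measure_mono (Set.Ioc_subset_Ioc_left hrI.1))
      have hint1 : IntegrableOn D (Set.Ioc r t) ν :=
        myIntOn measurableSet_Ioc hνr hD (C := M) fun x hx => by
          rw [abs_of_nonneg (hD0 x)]
          exact hDM x ⟨le_trans hrI.1 (le_of_lt hx.1), hx.2⟩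
      haveI hfinm : IsFiniteMeasure (ν.restrict (Set.Ioc r t)) :=
        ⟨by rwa [Measure.restrict_apply_univ, lt_top_iff_ne_top]⟩
      have hint2 : IntegrableOn (Set.indicator (Set.Ioo r' a) (fun _ => m)) (Set.Ioc r t) ν :=
        (integrable_const m).indicator measurableSet_Ioo
      have h6 : ((ν.restrict (Set.Ioc r t)) (Set.Ioo r' a)).toReal ≤ 1/2 := by
        rw [Measure.restrict_apply measurableSet_Ioo]
        exact le_trans (ENNReal.toReal_mono hfin2 (measure_mono Set.inter_subset_left)) hhalf
      calc D r ≤ ∫ s in Set.Ioc r t, D s ∂ν := hkey r hrI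
        _ ≤ ∫ s in Set.Ioc r t, Set.indicator (Set.Ioo r' a) (fun _ => m) s ∂ν :=
            setIntegral_mono_on hint1 hint2 measurableSet_Ioc hDle
        _ = ∫ s in Set.Ioo r' a, m ∂(ν.restrict (Set.Ioc r t)) :=
            integral_indicator measurableSet_Ioo
        _ = ((ν.restrict (Set.Ioc r t)) (Set.Ioo r' a)).toReal * m := by
            rw [setIntegral_const, smul_eq_mul]; rfl
        _ ≤ m * (1/2) := by
            nlinarith [ENNReal.toReal_nonneg (a := (ν.restrict (Set.Ioc r t)) (Set.Ioo r' a))]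
    have hmle : m ≤ m * (1/2) := by
      refine csSup_le hne' ?_
      rintro x ⟨s, hs, rfl⟩
      exact hstep s hs
    have hm00 : m ≤ 0 := by linarith
    have hr'S : r' ∈ S := by
      refine ⟨⟨hr'0, le_trans (le_of_lt hr'lt) hat⟩, fun s hs => ?_⟩
      rcases lt_or_ge s a with h | h
      · have h7 : D s ≤ m * (1/2) := hstep s ⟨hs.1, h⟩
        exact le_antisymm (by linarith) (hD0 s)
      · exact haS s ⟨h, hs.2⟩
    exact absurd (csInf_le hbdd hr'S) (not_le.2 hr'lt)
  intro r hr
  exact haS r ⟨ha_eq ▸ hr.1, hr.2⟩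

set_option maxHeartbeats 2000000 in
/-- uniqueness of positive bounded solutions to the special
(affine-in-jump) backward system. `γ i i = gp i - gn i` with `gp i, gn i` Stieltjes
functions and jumps `Δγ i i > −1`; `gam i j` (`i ≠ j`) increasing right continuous;
`μ i` measures on `(0,∞) × (ℝ₊²\{0})` with finite first moments on bounded time sets.
Any two bounded nonnegative solutions of
`u i r = λ i + ∫_{(r,t]} u i dγ i i + ∫_{(r,t]} u j dgam i j
  + ∫_{(r,t]}∫ (1 − e^{-⟨u(s),z⟩}) μ i (ds,dz)` coincide on `[0,t]`. -/
theorem stmt13 (t : ℝ) (ht : 0 < t) (lam : Fin 2 → ℝ) (hlam : ∀ i, 0 ≤ lam i)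
    (gp gn : Fin 2 → StieltjesFunction ℝ)
    (hjump : ∀ i, ∀ s : ℝ,
      (-1 : ℝ) < ((gp i).measure {s}).toReal - ((gn i).measure {s}).toReal)
    (gam : Fin 2 → Fin 2 → StieltjesFunction ℝ)
    (μ : Fin 2 → Measure (ℝ × (ℝ × ℝ)))
    (hμsupp : ∀ i, ∀ᵐ p ∂(μ i), 0 < p.1 ∧ 0 ≤ p.2.1 ∧ 0 ≤ p.2.2 ∧ p.2 ≠ (0, 0))
    (hμmom : ∀ i, ∀ T : ℝ, IntegrableOn (fun p : ℝ × (ℝ × ℝ) => p.2.1 + p.2.2)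
      (Set.Ioc 0 T ×ˢ (Set.univ : Set (ℝ × ℝ))) (μ i))
    (u w : Fin 2 → ℝ → ℝ)
    (hu_meas : ∀ i, Measurable (u i)) (hw_meas : ∀ i, Measurable (w i))
    (hu_nonneg : ∀ i, ∀ r ∈ Set.Icc (0 : ℝ) t, 0 ≤ u i r)
    (hw_nonneg : ∀ i, ∀ r ∈ Set.Icc (0 : ℝ) t, 0 ≤ w i r)
    (hu_bdd : ∃ C, ∀ i, ∀ r ∈ Set.Icc (0 : ℝ) t, u i r ≤ C)
    (hw_bdd : ∃ C, ∀ i, ∀ r ∈ Set.Icc (0 : ℝ) t, w i r ≤ C)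
    (hu : ∀ i j : Fin 2, i ≠ j → ∀ r ∈ Set.Icc (0 : ℝ) t,
      u i r = lam i +
        ((∫ s in Set.Ioc r t, u i s ∂(gp i).measure) -
          ∫ s in Set.Ioc r t, u i s ∂(gn i).measure) +
        (∫ s in Set.Ioc r t, u j s ∂(gam i j).measure) +
        ∫ p in Set.Ioc r t ×ˢ (Set.univ : Set (ℝ × ℝ)),
          (1 - Real.exp (-(u 0 p.1 * p.2.1 + u 1 p.1 * p.2.2))) ∂(μ i))
    (hw : ∀ i j : Fin 2, i ≠ j → ∀ r ∈ Set.Icc (0 : ℝ) t,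
      w i r = lam i +
        ((∫ s in Set.Ioc r t, w i s ∂(gp i).measure) -
          ∫ s in Set.Ioc r t, w i s ∂(gn i).measure) +
        (∫ s in Set.Ioc r t, w j s ∂(gam i j).measure) +
        ∫ p in Set.Ioc r t ×ˢ (Set.univ : Set (ℝ × ℝ)),
          (1 - Real.exp (-(w 0 p.1 * p.2.1 + w 1 p.1 * p.2.2))) ∂(μ i)) :
    ∀ i, ∀ r ∈ Set.Icc (0 : ℝ) t, u i r = w i r := by
  obtain ⟨Cu, hCu⟩ := hu_bdd
  obtain ⟨Cw, hCw⟩ := hw_bdd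
  have ht0 : (0:ℝ) ∈ Set.Icc (0:ℝ) t := ⟨le_refl 0, le_of_lt ht⟩
  have hCu0 : 0 ≤ Cu := le_trans (hu_nonneg 0 0 ht0) (hCu 0 0 ht0)
  have hCw0 : 0 ≤ Cw := le_trans (hw_nonneg 0 0 ht0) (hCw 0 0 ht0)
  set B : ℝ := Cu + Cw with hB
  have hB0 : 0 ≤ B := by simp only [hB]; linarith
  set d : Fin 2 → ℝ → ℝ := fun i s => u i s - w i s with hd
  set D : ℝ → ℝ := fun s => |d 0 s| + |d 1 s| with hDdef
  have hd_meas : ∀ i, Measurable (d i) := fun i => (hu_meas i).sub (hw_meas i)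
  have hD_meas : Measurable D := (hd_meas 0).abs.add (hd_meas 1).abs
  have hD0 : ∀ s, 0 ≤ D s := by
    intro s; simp only [hDdef]; positivity
  have habs : ∀ i : Fin 2, ∀ s ∈ Set.Icc (0:ℝ) t, |d i s| ≤ B := by
    intro i s hs
    simp only [hd, hB]
    rw [abs_sub_le_iff]
    constructor
    · nlinarith [hw_nonneg i s hs, hCu i s hs]
    · nlinarith [hu_nonneg i s hs, hCw i s hs]
  have hdleD : ∀ i : Fin 2, ∀ s, |d i s| ≤ D s := by
    intro i s
    simp only [hDdef]
    fin_cases i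
    · exact le_add_of_nonneg_right (abs_nonneg _)
    · exact le_add_of_nonneg_left (abs_nonneg _)
  have hDM : ∀ s ∈ Set.Icc (0:ℝ) t, D s ≤ 2*B := by
    intro s hs
    have h0 := habs 0 s hs
    have h1 := habs 1 s hs
    simp only [hDdef]; linarith
  have hb_D : ∀ s ∈ Set.Icc (0:ℝ) t, |D s| ≤ 2*B := fun s hs => by
    rw [abs_of_nonneg (hD0 s)]; exact hDM s hs
  set ξ : Fin 2 → Measure (ℝ × (ℝ × ℝ)) :=
    fun i => (μ i).withDensity (fun p => (((p.2.1 + p.2.2).toNNReal : ℝ≥0) : ℝ≥0∞)) with hξ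
  set κ : Fin 2 → Measure ℝ := fun i => Measure.map Prod.fst (ξ i) with hκ
  have hg_meas : Measurable (fun p : ℝ × (ℝ × ℝ) => (p.2.1 + p.2.2).toNNReal) :=
    (measurable_snd.fst.add measurable_snd.snd).real_toNNReal
  have hpre : ∀ r : ℝ, Prod.fst ⁻¹' (Set.Ioc r t) = Set.Ioc r t ×ˢ (Set.univ : Set (ℝ × ℝ)) := by
    intro r; ext p; simp
  have hA_meas : ∀ r : ℝ, MeasurableSet (Set.Ioc r t ×ˢ (Set.univ : Set (ℝ × ℝ))) :=
    fun r => measurableSet_Ioc.prod MeasurableSet.univ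
  have hκ_apply : ∀ i : Fin 2, ∀ r : ℝ, κ i (Set.Ioc r t) =
      ∫⁻ p in Set.Ioc r t ×ˢ (Set.univ : Set (ℝ × ℝ)),
        ENNReal.ofReal (p.2.1 + p.2.2) ∂(μ i) := by
    intro i r
    simp only [hκ, hξ]
    rw [Measure.map_apply measurable_fst measurableSet_Ioc, hpre r,
      withDensity_apply _ (hA_meas r)]
    rfl
  have hκ_fin : ∀ i : Fin 2, κ i (Set.Ioc 0 t) ≠ ⊤ := by
    intro i
    rw [hκ_apply i 0]
    exact ne_of_lt (hμmom i t).lintegral_lt_top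
  set ν : Measure ℝ := (gp 0).measure + (gn 0).measure + (gam 0 1).measure + κ 0 +
      ((gp 1).measure + (gn 1).measure + (gam 1 0).measure + κ 1) with hν
  have hSt_fin : ∀ f : StieltjesFunction ℝ, ∀ r : ℝ, f.measure (Set.Ioc r t) ≠ ⊤ := by
    intro f r; rw [StieltjesFunction.measure_Ioc]; exact ENNReal.ofReal_ne_top
  have hν_fin : ν (Set.Ioc 0 t) ≠ ⊤ := by
    simp only [hν, Measure.add_apply]
    exact ENNReal.add_ne_top.2 ⟨ENNReal.add_ne_top.2 ⟨ENNReal.add_ne_top.2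
      ⟨ENNReal.add_ne_top.2 ⟨hSt_fin _ _, hSt_fin _ _⟩, hSt_fin _ _⟩, hκ_fin 0⟩,
      ENNReal.add_ne_top.2 ⟨ENNReal.add_ne_top.2
      ⟨ENNReal.add_ne_top.2 ⟨hSt_fin _ _, hSt_fin _ _⟩, hSt_fin _ _⟩, hκ_fin 1⟩⟩
  have hkey : ∀ r ∈ Set.Icc (0:ℝ) t, D r ≤ ∫ s in Set.Ioc r t, D s ∂ν := by
    intro r hr
    have hsubIcc : Set.Ioc r t ⊆ Set.Icc (0:ℝ) t := fun x hx =>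
      ⟨le_trans hr.1 (le_of_lt hx.1), hx.2⟩
    have hSt_int : ∀ (f : StieltjesFunction ℝ) (φ : ℝ → ℝ), Measurable φ →
        (∀ s ∈ Set.Icc (0:ℝ) t, |φ s| ≤ 2*B) → IntegrableOn φ (Set.Ioc r t) f.measure :=
      fun f φ hφ hφb => myIntOn measurableSet_Ioc (hSt_fin f r) hφ
        (fun x hx => hφb x (hsubIcc hx))
    have hb_u : ∀ k : Fin 2, ∀ s ∈ Set.Icc (0:ℝ) t, |u k s| ≤ 2*B := by
      intro k s hs
      rw [abs_of_nonneg (hu_nonneg k s hs)]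
      have := hCu k s hs
      simp only [hB]; linarith
    have hb_w : ∀ k : Fin 2, ∀ s ∈ Set.Icc (0:ℝ) t, |w k s| ≤ 2*B := by
      intro k s hs
      rw [abs_of_nonneg (hw_nonneg k s hs)]
      have := hCw k s hs
      simp only [hB]; linarith
    have hb_d : ∀ k : Fin 2, ∀ s ∈ Set.Icc (0:ℝ) t, |d k s| ≤ 2*B := fun k s hs =>
      le_trans (habs k s hs) (by linarith)
    have hIκ : ∀ i : Fin 2, IntegrableOn D (Set.Ioc r t) (κ i) := fun i =>
      myIntOn measurableSet_Ioc
        (ne_top_of_le_ne_top (hκ_fin i) (measure_mono (Set.Ioc_subset_Ioc_left hr.1)))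
        hD_meas (fun x hx => hb_D x (hsubIcc hx))
    have hmom : ∀ i : Fin 2, IntegrableOn (fun p : ℝ × (ℝ × ℝ) => p.2.1 + p.2.2)
        (Set.Ioc r t ×ˢ (Set.univ : Set (ℝ × ℝ))) (μ i) := fun i =>
      (hμmom i t).mono_set (Set.prod_mono_left (Set.Ioc_subset_Ioc_left hr.1))
    have hE : ∀ i : Fin 2, ∫ s in Set.Ioc r t, D s ∂(κ i) =
        ∫ p in Set.Ioc r t ×ˢ (Set.univ : Set (ℝ × ℝ)),
          (max (p.2.1 + p.2.2) 0) * D p.1 ∂(μ i) := by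
      intro i
      simp only [hκ, hξ]
      rw [Measure.restrict_map measurable_fst measurableSet_Ioc,
        integral_map measurable_fst.aemeasurable hD_meas.aestronglyMeasurable,
        hpre r, restrict_withDensity (hA_meas r),
        integral_withDensity_eq_integral_smul hg_meas]
      refine integral_congr_ae (Filter.Eventually.of_forall fun p => ?_)
      simp [NNReal.smul_def, Real.coe_toNNReal']
    have perI : ∀ i j : Fin 2, i ≠ j →
        |d i r| ≤ (∫ s in Set.Ioc r t, D s ∂(gp i).measure) +
          (∫ s in Set.Ioc r t, D s ∂(gn i).measure) +
          (∫ s in Set.Ioc r t, D s ∂(gam i j).measure) +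
          (∫ s in Set.Ioc r t, D s ∂(κ i)) := by
      intro i j hij
      have hui := hu i j hij r hr
      have hwi := hw i j hij r hr
      have Iu : ∀ (f : StieltjesFunction ℝ) (k : Fin 2),
          IntegrableOn (u k) (Set.Ioc r t) f.measure :=
        fun f k => hSt_int f (u k) (hu_meas k) (hb_u k)
      have Iw : ∀ (f : StieltjesFunction ℝ) (k : Fin 2),
          IntegrableOn (w k) (Set.Ioc r t) f.measure :=
        fun f k => hSt_int f (w k) (hw_meas k) (hb_w k)
      have Idd : ∀ (f : StieltjesFunction ℝ) (k : Fin 2),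
          IntegrableOn (d k) (Set.Ioc r t) f.measure :=
        fun f k => hSt_int f (d k) (hd_meas k) (hb_d k)
      have ID : ∀ f : StieltjesFunction ℝ, IntegrableOn D (Set.Ioc r t) f.measure :=
        fun f => hSt_int f D hD_meas hb_D
      have hFu_meas : Measurable (fun p : ℝ × (ℝ × ℝ) =>
          1 - Real.exp (-(u 0 p.1 * p.2.1 + u 1 p.1 * p.2.2))) :=
        measurable_const.sub (((((hu_meas 0).comp measurable_fst).mul measurable_snd.fst).add
          (((hu_meas 1).comp measurable_fst).mul measurable_snd.snd)).neg.exp)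
      have hFw_meas : Measurable (fun p : ℝ × (ℝ × ℝ) =>
          1 - Real.exp (-(w 0 p.1 * p.2.1 + w 1 p.1 * p.2.2))) :=
        measurable_const.sub (((((hw_meas 0).comp measurable_fst).mul measurable_snd.fst).add
          (((hw_meas 1).comp measurable_fst).mul measurable_snd.snd)).neg.exp)
      have haeA := ae_restrict_mem (μ := μ i) (hA_meas r)
      have haez : ∀ᵐ p ∂((μ i).restrict (Set.Ioc r t ×ˢ (Set.univ : Set (ℝ × ℝ)))),
          0 < p.1 ∧ 0 ≤ p.2.1 ∧ 0 ≤ p.2.2 ∧ p.2 ≠ (0,0) := ae_restrict_of_ae (hμsupp i)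
      have IFu : IntegrableOn (fun p : ℝ × (ℝ × ℝ) =>
          1 - Real.exp (-(u 0 p.1 * p.2.1 + u 1 p.1 * p.2.2)))
          (Set.Ioc r t ×ˢ (Set.univ : Set (ℝ × ℝ))) (μ i) := by
        refine Integrable.mono' ((hmom i).const_mul Cu) hFu_meas.aestronglyMeasurable ?_
        filter_upwards [haeA, haez] with p hpA hpz
        have hp1 : p.1 ∈ Set.Icc (0:ℝ) t := hsubIcc hpA.1
        have h0u := hu_nonneg 0 p.1 hp1
        have h1u := hu_nonneg 1 p.1 hp1
        have hc0 := hCu 0 p.1 hp1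
        have hc1 := hCu 1 p.1 hp1
        have hz1 := hpz.2.1
        have hz2 := hpz.2.2.1
        have hexp1 : Real.exp (-(u 0 p.1 * p.2.1 + u 1 p.1 * p.2.2)) ≤ 1 :=
          Real.exp_le_one_iff.2 (by nlinarith)
        have hexp2 : 1 - (u 0 p.1 * p.2.1 + u 1 p.1 * p.2.2) ≤
            Real.exp (-(u 0 p.1 * p.2.1 + u 1 p.1 * p.2.2)) := by
          have := Real.add_one_le_exp (-(u 0 p.1 * p.2.1 + u 1 p.1 * p.2.2)); linarith
        rw [Real.norm_eq_abs, abs_of_nonneg (by linarith)]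
        nlinarith [mul_le_mul_of_nonneg_right hc0 hz1, mul_le_mul_of_nonneg_right hc1 hz2]
      have IFw : IntegrableOn (fun p : ℝ × (ℝ × ℝ) =>
          1 - Real.exp (-(w 0 p.1 * p.2.1 + w 1 p.1 * p.2.2)))
          (Set.Ioc r t ×ˢ (Set.univ : Set (ℝ × ℝ))) (μ i) := by
        refine Integrable.mono' ((hmom i).const_mul Cw) hFw_meas.aestronglyMeasurable ?_
        filter_upwards [haeA, haez] with p hpA hpz
        have hp1 : p.1 ∈ Set.Icc (0:ℝ) t := hsubIcc hpA.1
        have h0w := hw_nonneg 0 p.1 hp1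
        have h1w := hw_nonneg 1 p.1 hp1
        have hc0 := hCw 0 p.1 hp1
        have hc1 := hCw 1 p.1 hp1
        have hz1 := hpz.2.1
        have hz2 := hpz.2.2.1
        have hexp1 : Real.exp (-(w 0 p.1 * p.2.1 + w 1 p.1 * p.2.2)) ≤ 1 :=
          Real.exp_le_one_iff.2 (by nlinarith)
        have hexp2 : 1 - (w 0 p.1 * p.2.1 + w 1 p.1 * p.2.2) ≤
            Real.exp (-(w 0 p.1 * p.2.1 + w 1 p.1 * p.2.2)) := by
          have := Real.add_one_le_exp (-(w 0 p.1 * p.2.1 + w 1 p.1 * p.2.2)); linarith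
        rw [Real.norm_eq_abs, abs_of_nonneg (by linarith)]
        nlinarith [mul_le_mul_of_nonneg_right hc0 hz1, mul_le_mul_of_nonneg_right hc1 hz2]
      have hG_meas : Measurable (fun p : ℝ × (ℝ × ℝ) => max (p.2.1 + p.2.2) 0 * D p.1) :=
        ((measurable_snd.fst.add measurable_snd.snd).max measurable_const).mul
          (hD_meas.comp measurable_fst)
      have IG : IntegrableOn (fun p : ℝ × (ℝ × ℝ) => max (p.2.1 + p.2.2) 0 * D p.1)
          (Set.Ioc r t ×ˢ (Set.univ : Set (ℝ × ℝ))) (μ i) := by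
        refine Integrable.mono' ((hmom i).const_mul (2*B)) hG_meas.aestronglyMeasurable ?_
        filter_upwards [haeA, haez] with p hpA hpz
        have hp1 : p.1 ∈ Set.Icc (0:ℝ) t := hsubIcc hpA.1
        have hz1 := hpz.2.1
        have hz2 := hpz.2.2.1
        have hDp := hDM p.1 hp1
        have hD0p := hD0 p.1
        rw [Real.norm_eq_abs, abs_of_nonneg (mul_nonneg (le_max_right _ _) hD0p),
          max_eq_left (by linarith)]
        nlinarith [mul_le_mul_of_nonneg_left hDp (show (0:ℝ) ≤ p.2.1 + p.2.2 by linarith)]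
      have hae : ∀ᵐ p ∂((μ i).restrict (Set.Ioc r t ×ˢ (Set.univ : Set (ℝ × ℝ)))),
          ‖(1 - Real.exp (-(u 0 p.1 * p.2.1 + u 1 p.1 * p.2.2))) -
            (1 - Real.exp (-(w 0 p.1 * p.2.1 + w 1 p.1 * p.2.2)))‖ ≤
          max (p.2.1 + p.2.2) 0 * D p.1 := by
        filter_upwards [haeA, haez] with p hpA hpz
        have hp1 : p.1 ∈ Set.Icc (0:ℝ) t := hsubIcc hpA.1
        have hz1 := hpz.2.1
        have hz2 := hpz.2.2.1
        have hau : 0 ≤ u 0 p.1 * p.2.1 + u 1 p.1 * p.2.2 :=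
          add_nonneg (mul_nonneg (hu_nonneg 0 p.1 hp1) hz1)
            (mul_nonneg (hu_nonneg 1 p.1 hp1) hz2)
        have haw : 0 ≤ w 0 p.1 * p.2.1 + w 1 p.1 * p.2.2 :=
          add_nonneg (mul_nonneg (hw_nonneg 0 p.1 hp1) hz1)
            (mul_nonneg (hw_nonneg 1 p.1 hp1) hz2)
        have e1 : (1 - Real.exp (-(u 0 p.1 * p.2.1 + u 1 p.1 * p.2.2))) -
            (1 - Real.exp (-(w 0 p.1 * p.2.1 + w 1 p.1 * p.2.2))) =
            Real.exp (-(w 0 p.1 * p.2.1 + w 1 p.1 * p.2.2)) -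
            Real.exp (-(u 0 p.1 * p.2.1 + u 1 p.1 * p.2.2)) := by ring
        rw [Real.norm_eq_abs, e1]
        have e2 := myExpLip haw hau
        have e3 : |(w 0 p.1 * p.2.1 + w 1 p.1 * p.2.2) -
            (u 0 p.1 * p.2.1 + u 1 p.1 * p.2.2)| ≤
            |d 0 p.1| * p.2.1 + |d 1 p.1| * p.2.2 := by
          have e4 : (w 0 p.1 * p.2.1 + w 1 p.1 * p.2.2) -
              (u 0 p.1 * p.2.1 + u 1 p.1 * p.2.2) =
              (w 0 p.1 - u 0 p.1) * p.2.1 + (w 1 p.1 - u 1 p.1) * p.2.2 := by ring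
          rw [e4]
          calc |(w 0 p.1 - u 0 p.1) * p.2.1 + (w 1 p.1 - u 1 p.1) * p.2.2|
              ≤ |(w 0 p.1 - u 0 p.1) * p.2.1| + |(w 1 p.1 - u 1 p.1) * p.2.2| := abs_add_le _ _
            _ = |w 0 p.1 - u 0 p.1| * p.2.1 + |w 1 p.1 - u 1 p.1| * p.2.2 := by
                rw [abs_mul, abs_mul, abs_of_nonneg hz1, abs_of_nonneg hz2]
            _ = |d 0 p.1| * p.2.1 + |d 1 p.1| * p.2.2 := by
                simp only [hd]
                rw [abs_sub_comm (w 0 p.1), abs_sub_comm (w 1 p.1)]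
        have e5 : |d 0 p.1| * p.2.1 + |d 1 p.1| * p.2.2 ≤ max (p.2.1 + p.2.2) 0 * D p.1 := by
          rw [max_eq_left (by linarith)]
          simp only [hDdef]
          nlinarith [mul_nonneg (abs_nonneg (d 0 p.1)) hz2,
            mul_nonneg (abs_nonneg (d 1 p.1)) hz1]
        exact le_trans (le_trans e2 e3) e5
      have heq : d i r =
          ((∫ s in Set.Ioc r t, u i s ∂(gp i).measure) -
            ∫ s in Set.Ioc r t, w i s ∂(gp i).measure)
          - ((∫ s in Set.Ioc r t, u i s ∂(gn i).measure) -
            ∫ s in Set.Ioc r t, w i s ∂(gn i).measure)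
          + ((∫ s in Set.Ioc r t, u j s ∂(gam i j).measure) -
            ∫ s in Set.Ioc r t, w j s ∂(gam i j).measure)
          + ((∫ p in Set.Ioc r t ×ˢ (Set.univ : Set (ℝ × ℝ)),
              (1 - Real.exp (-(u 0 p.1 * p.2.1 + u 1 p.1 * p.2.2))) ∂(μ i)) -
             (∫ p in Set.Ioc r t ×ˢ (Set.univ : Set (ℝ × ℝ)),
              (1 - Real.exp (-(w 0 p.1 * p.2.1 + w 1 p.1 * p.2.2))) ∂(μ i))) := by
        simp only [hd]
        rw [hui, hwi]; ring
      have T1 : |(∫ s in Set.Ioc r t, u i s ∂(gp i).measure) -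
          ∫ s in Set.Ioc r t, w i s ∂(gp i).measure| ≤
          ∫ s in Set.Ioc r t, D s ∂(gp i).measure := by
        rw [← integral_sub (Iu (gp i) i) (Iw (gp i) i)]
        calc |∫ s in Set.Ioc r t, (u i s - w i s) ∂(gp i).measure|
            ≤ ∫ s in Set.Ioc r t, |u i s - w i s| ∂(gp i).measure := by
              simpa [Real.norm_eq_abs] using
                norm_integral_le_integral_norm
                  (μ := (gp i).measure.restrict (Set.Ioc r t)) (fun s => u i s - w i s)
          _ ≤ ∫ s in Set.Ioc r t, D s ∂(gp i).measure :=
              integral_mono ((Idd (gp i) i).abs) (ID (gp i)) (fun s => hdleD i s)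
      have T2 : |(∫ s in Set.Ioc r t, u i s ∂(gn i).measure) -
          ∫ s in Set.Ioc r t, w i s ∂(gn i).measure| ≤
          ∫ s in Set.Ioc r t, D s ∂(gn i).measure := by
        rw [← integral_sub (Iu (gn i) i) (Iw (gn i) i)]
        calc |∫ s in Set.Ioc r t, (u i s - w i s) ∂(gn i).measure|
            ≤ ∫ s in Set.Ioc r t, |u i s - w i s| ∂(gn i).measure := by
              simpa [Real.norm_eq_abs] using
                norm_integral_le_integral_norm
                  (μ := (gn i).measure.restrict (Set.Ioc r t)) (fun s => u i s - w i s)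
          _ ≤ ∫ s in Set.Ioc r t, D s ∂(gn i).measure :=
              integral_mono ((Idd (gn i) i).abs) (ID (gn i)) (fun s => hdleD i s)
      have T3 : |(∫ s in Set.Ioc r t, u j s ∂(gam i j).measure) -
          ∫ s in Set.Ioc r t, w j s ∂(gam i j).measure| ≤
          ∫ s in Set.Ioc r t, D s ∂(gam i j).measure := by
        rw [← integral_sub (Iu (gam i j) j) (Iw (gam i j) j)]
        calc |∫ s in Set.Ioc r t, (u j s - w j s) ∂(gam i j).measure|
            ≤ ∫ s in Set.Ioc r t, |u j s - w j s| ∂(gam i j).measure := by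
              simpa [Real.norm_eq_abs] using
                norm_integral_le_integral_norm
                  (μ := (gam i j).measure.restrict (Set.Ioc r t)) (fun s => u j s - w j s)
          _ ≤ ∫ s in Set.Ioc r t, D s ∂(gam i j).measure :=
              integral_mono ((Idd (gam i j) j).abs) (ID (gam i j)) (fun s => hdleD j s)
      have T4 : |(∫ p in Set.Ioc r t ×ˢ (Set.univ : Set (ℝ × ℝ)),
            (1 - Real.exp (-(u 0 p.1 * p.2.1 + u 1 p.1 * p.2.2))) ∂(μ i)) -
          (∫ p in Set.Ioc r t ×ˢ (Set.univ : Set (ℝ × ℝ)),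
            (1 - Real.exp (-(w 0 p.1 * p.2.1 + w 1 p.1 * p.2.2))) ∂(μ i))| ≤
          ∫ s in Set.Ioc r t, D s ∂(κ i) := by
        rw [← integral_sub IFu IFw, hE i]
        calc |∫ p in Set.Ioc r t ×ˢ (Set.univ : Set (ℝ × ℝ)),
              ((1 - Real.exp (-(u 0 p.1 * p.2.1 + u 1 p.1 * p.2.2))) -
               (1 - Real.exp (-(w 0 p.1 * p.2.1 + w 1 p.1 * p.2.2)))) ∂(μ i)|
            ≤ ∫ p in Set.Ioc r t ×ˢ (Set.univ : Set (ℝ × ℝ)),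
              ‖(1 - Real.exp (-(u 0 p.1 * p.2.1 + u 1 p.1 * p.2.2))) -
               (1 - Real.exp (-(w 0 p.1 * p.2.1 + w 1 p.1 * p.2.2)))‖ ∂(μ i) := by
              simpa [Real.norm_eq_abs] using
                norm_integral_le_integral_norm
                  (μ := (μ i).restrict (Set.Ioc r t ×ˢ (Set.univ : Set (ℝ × ℝ))))
                  (fun p => (1 - Real.exp (-(u 0 p.1 * p.2.1 + u 1 p.1 * p.2.2))) -
                    (1 - Real.exp (-(w 0 p.1 * p.2.1 + w 1 p.1 * p.2.2))))
          _ ≤ ∫ p in Set.Ioc r t ×ˢ (Set.univ : Set (ℝ × ℝ)),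
              max (p.2.1 + p.2.2) 0 * D p.1 ∂(μ i) :=
              integral_mono_ae ((IFu.sub IFw).norm) IG hae
      have habs4 : ∀ x1 x2 x3 x4 : ℝ, |x1 - x2 + x3 + x4| ≤ |x1| + |x2| + |x3| + |x4| := by
        intro x1 x2 x3 x4
        calc |x1 - x2 + x3 + x4| ≤ |x1 - x2 + x3| + |x4| := abs_add_le _ _
          _ ≤ (|x1 - x2| + |x3|) + |x4| := add_le_add_left (abs_add_le _ _) _
          _ ≤ ((|x1| + |x2|) + |x3|) + |x4| :=
              add_le_add_left (add_le_add_left (abs_sub _ _) _) _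
          _ = |x1| + |x2| + |x3| + |x4| := by ring
      rw [heq]
      exact le_trans (habs4 _ _ _ _)
        (add_le_add (add_le_add (add_le_add T1 T2) T3) T4)
    have h0 := perI 0 1 (by decide)
    have h1 := perI 1 0 (by decide)
    have Ia : Integrable D ((gp 0).measure.restrict (Set.Ioc r t)) :=
      hSt_int (gp 0) D hD_meas hb_D
    have Ib : Integrable D ((gn 0).measure.restrict (Set.Ioc r t)) :=
      hSt_int (gn 0) D hD_meas hb_D
    have Ic : Integrable D ((gam 0 1).measure.restrict (Set.Ioc r t)) :=
      hSt_int (gam 0 1) D hD_meas hb_D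
    have Id0 : Integrable D ((κ 0).restrict (Set.Ioc r t)) := hIκ 0
    have Ie : Integrable D ((gp 1).measure.restrict (Set.Ioc r t)) :=
      hSt_int (gp 1) D hD_meas hb_D
    have If : Integrable D ((gn 1).measure.restrict (Set.Ioc r t)) :=
      hSt_int (gn 1) D hD_meas hb_D
    have Ig : Integrable D ((gam 1 0).measure.restrict (Set.Ioc r t)) :=
      hSt_int (gam 1 0) D hD_meas hb_D
    have Ih : Integrable D ((κ 1).restrict (Set.Ioc r t)) := hIκ 1
    have L1 := Ia.add_measure Ib
    have L2 := L1.add_measure Ic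
    have L3 := L2.add_measure Id0
    have R1 := Ie.add_measure If
    have R2 := R1.add_measure Ig
    have R3 := R2.add_measure Ih
    have hνeq : ∫ s in Set.Ioc r t, D s ∂ν =
        (∫ s in Set.Ioc r t, D s ∂(gp 0).measure) + (∫ s in Set.Ioc r t, D s ∂(gn 0).measure) +
        (∫ s in Set.Ioc r t, D s ∂(gam 0 1).measure) + (∫ s in Set.Ioc r t, D s ∂(κ 0)) +
        ((∫ s in Set.Ioc r t, D s ∂(gp 1).measure) + (∫ s in Set.Ioc r t, D s ∂(gn 1).measure) +
        (∫ s in Set.Ioc r t, D s ∂(gam 1 0).measure) + (∫ s in Set.Ioc r t, D s ∂(κ 1))) := by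
      simp only [hν, Measure.restrict_add]
      rw [integral_add_measure L3 R3, integral_add_measure L2 Id0, integral_add_measure L1 Ic,
        integral_add_measure Ia Ib, integral_add_measure R2 Ih, integral_add_measure R1 Ig,
        integral_add_measure Ie If]
    have hDr : D r = |d 0 r| + |d 1 r| := by simp only [hDdef]
    rw [hνeq]
    linarith [h0, h1, hDr.le, hDr.ge]
  have hgron := myGronwall t (le_of_lt ht) ν hν_fin D hD_meas hD0 (2*B) hDM hkey
  intro i r hr
  have h1 := hgron r hr
  have h2 : |d i r| ≤ 0 := by rw [← h1]; exact hdleD i r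
  have h3 : d i r = 0 := abs_eq_zero.1 (le_antisymm h2 (abs_nonneg _))
  have h4 : u i r - w i r = 0 := by simpa [hd] using h3
  linarith
end

section
/- Moment formula via differentiation of the Laplace transform: let Q be a probability measure on ℝ₊² such that ∫ e^{-⟨λ,y⟩} Q(dy) = e^{-⟨x, v(λ)⟩} for all λ ∈ ℝ₊², where x ∈ ℝ₊² and v : ℝ₊² → ℝ₊² is such that a ↦ v(aλ) is differentiable at 0 with v(0) = 0 and derivative π(λ), and ∫ ⟨λ,y⟩ Q(dy) < ∞. Then ∫ ⟨λ,y⟩ Q(dy) = ⟨x, π(λ)⟩ for all λ ∈ ℝ₊². -/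
open Real MeasureTheory

/-- moment formula via differentiation of the Laplace transform.
If `Q` is a probability measure on `ℝ₊²` with `∫ e^{-⟨λ,y⟩} Q(dy) = e^{-⟨x,v(λ)⟩}`
for all `λ ∈ ℝ₊²`, `v(0) = 0`, for each `λ ∈ ℝ₊²` the map `a ↦ ⟨x, v(aλ)⟩` is
differentiable (from the right) at `0` with derivative `⟨x, pi(λ)⟩`, and the first
moment of `Q` is finite, then `∫ ⟨λ,y⟩ Q(dy) = ⟨x, pi(λ)⟩` for all `λ ∈ ℝ₊²`. -/
theorem stmt19 (Q : Measure (ℝ × ℝ)) [IsProbabilityMeasure Q]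
    (hsupp : ∀ᵐ y ∂Q, 0 ≤ y.1 ∧ 0 ≤ y.2)
    (x1 x2 : ℝ) (hx1 : 0 ≤ x1) (hx2 : 0 ≤ x2)
    (v : ℝ × ℝ → ℝ × ℝ)
    (hvpos : ∀ l : ℝ × ℝ, 0 ≤ l.1 → 0 ≤ l.2 → 0 ≤ (v l).1 ∧ 0 ≤ (v l).2)
    (hLaplace : ∀ l : ℝ × ℝ, 0 ≤ l.1 → 0 ≤ l.2 →
      ∫ y, Real.exp (-(l.1 * y.1 + l.2 * y.2)) ∂Q =
        Real.exp (-(x1 * (v l).1 + x2 * (v l).2)))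
    (hv0 : v (0, 0) = (0, 0))
    (pi : ℝ × ℝ → ℝ × ℝ)
    (hderiv : ∀ l : ℝ × ℝ, 0 ≤ l.1 → 0 ≤ l.2 →
      HasDerivWithinAt (fun a : ℝ => x1 * (v (a * l.1, a * l.2)).1 +
          x2 * (v (a * l.1, a * l.2)).2)
        (x1 * (pi l).1 + x2 * (pi l).2) (Set.Ici (0 : ℝ)) 0)
    (hmom : Integrable (fun y : ℝ × ℝ => y.1 + y.2) Q) :
    ∀ l : ℝ × ℝ, 0 ≤ l.1 → 0 ≤ l.2 →
      ∫ y, (l.1 * y.1 + l.2 * y.2) ∂Q = x1 * (pi l).1 + x2 * (pi l).2 := by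
  intro l hl1 hl2
  set g : ℝ × ℝ → ℝ := fun y => l.1 * y.1 + l.2 * y.2 with hg
  have hgmeas : Measurable g := by
    exact ((measurable_fst.const_mul l.1).add (measurable_snd.const_mul l.2))
  have hg0 : ∀ᵐ y ∂Q, 0 ≤ g y := by
    filter_upwards [hsupp] with y hy
    exact add_nonneg (mul_nonneg hl1 hy.1) (mul_nonneg hl2 hy.2)
  have hint1 : Integrable (fun y : ℝ × ℝ => y.1) Q := by
    refine hmom.mono measurable_fst.aestronglyMeasurable ?_
    filter_upwards [hsupp] with y hy
    rw [Real.norm_eq_abs, Real.norm_eq_abs, abs_of_nonneg hy.1,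
      abs_of_nonneg (add_nonneg hy.1 hy.2)]
    linarith
  have hint2 : Integrable (fun y : ℝ × ℝ => y.2) Q := by
    refine hmom.mono measurable_snd.aestronglyMeasurable ?_
    filter_upwards [hsupp] with y hy
    rw [Real.norm_eq_abs, Real.norm_eq_abs, abs_of_nonneg hy.2,
      abs_of_nonneg (add_nonneg hy.1 hy.2)]
    linarith
  have hgint : Integrable g Q := by
    exact (hint1.const_mul l.1).add (hint2.const_mul l.2)
  set d : ℝ := x1 * (pi l).1 + x2 * (pi l).2 with hd
  set f : ℝ → ℝ := fun a => x1 * (v (a * l.1, a * l.2)).1 + x2 * (v (a * l.1, a * l.2)).2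
    with hf
  have hf0 : f 0 = 0 := by
    show x1 * (v (0 * l.1, 0 * l.2)).1 + x2 * (v (0 * l.1, 0 * l.2)).2 = 0
    rw [zero_mul, zero_mul, hv0]
    simp
  have hfd : HasDerivWithinAt f d (Set.Ici 0) 0 := hderiv l hl1 hl2
  have hE : HasDerivWithinAt (fun a => Real.exp (-(f a))) (-d) (Set.Ici 0) 0 := by
    have := (hfd.neg).exp
    simpa [hf0] using this
  have hslopeE : Filter.Tendsto (slope (fun a => Real.exp (-(f a))) 0)
      (nhdsWithin 0 (Set.Ioi 0)) (nhds (-d)) := by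
    have h := hasDerivWithinAt_iff_tendsto_slope.mp hE
    rwa [Set.Ici_sdiff_left] at h
  set F : ℝ → ℝ := fun a => ∫ y, Real.exp (-(a * g y)) ∂Q with hF
  have hFeq : ∀ a : ℝ, 0 ≤ a → F a = Real.exp (-(f a)) := by
    intro a ha
    have h := hLaplace (a * l.1, a * l.2) (mul_nonneg ha hl1) (mul_nonneg ha hl2)
    simp only at h
    have h2 : (∫ y, Real.exp (-(a * g y)) ∂Q) =
        ∫ y, Real.exp (-(a * l.1 * y.1 + a * l.2 * y.2)) ∂Q := by
      congr 1
      funext y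
      congr 1
      simp only [hg]
      ring
    exact h2.trans h
  have hF0 : F 0 = 1 := by
    simp [hF]
  have hexpint : ∀ a : ℝ, 0 ≤ a → Integrable (fun y => Real.exp (-(a * g y))) Q := by
    intro a ha
    refine Integrable.mono' (integrable_const 1)
      ((hgmeas.const_mul a).neg.exp.aestronglyMeasurable) ?_
    filter_upwards [hg0] with y hy
    rw [Real.norm_eq_abs, abs_of_pos (Real.exp_pos _)]
    exact Real.exp_le_one_iff.mpr (by nlinarith)
  have hFslope : ∀ a ∈ Set.Ioi (0:ℝ),
      slope F 0 a = ∫ y, (Real.exp (-(a * g y)) - 1) / a ∂Q := by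
    intro a ha
    rw [slope_def_field, hF0, sub_zero]
    rw [show F a - 1 = ∫ y, (Real.exp (-(a * g y)) - 1) ∂Q by
      rw [integral_sub (hexpint a ha.le) (integrable_const 1)]
      simp [hF]]
    rw [integral_div]
  have hDC : Filter.Tendsto (fun a : ℝ => ∫ y, (Real.exp (-(a * g y)) - 1) / a ∂Q)
      (nhdsWithin 0 (Set.Ioi 0)) (nhds (∫ y, -g y ∂Q)) := by
    refine tendsto_integral_filter_of_dominated_convergence g ?_ ?_ hgint ?_
    · filter_upwards [self_mem_nhdsWithin] with a _
      exact (((hgmeas.const_mul a).neg.exp.sub measurable_const).div_const a).aestronglyMeasurable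
    · filter_upwards [self_mem_nhdsWithin] with a (ha : a ∈ Set.Ioi (0:ℝ))
      filter_upwards [hg0] with y hy
      have hag : 0 ≤ a * g y := mul_nonneg ha.le hy
      have h1 : Real.exp (-(a * g y)) ≤ 1 := Real.exp_le_one_iff.mpr (by linarith)
      have h2 : 1 - a * g y ≤ Real.exp (-(a * g y)) := by
        have := Real.add_one_le_exp (-(a * g y))
        linarith
      rw [Real.norm_eq_abs, abs_div, abs_of_pos (show (0:ℝ) < a from ha), abs_of_nonpos (by linarith),
        div_le_iff₀ (show (0:ℝ) < a from ha)]
      nlinarith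
    · filter_upwards [hg0] with y hy
      have hD : HasDerivAt (fun a : ℝ => Real.exp (-(a * g y))) (-g y) 0 := by
        have h1 : HasDerivAt (fun a : ℝ => a * g y) (g y) 0 := hasDerivAt_mul_const _
        simpa using (h1.neg).exp
      have h := hasDerivAt_iff_tendsto_slope.mp hD
      have h2 := h.mono_left (nhdsWithin_mono 0 (fun a (ha : a ∈ Set.Ioi (0:ℝ)) =>
        (ne_of_gt ha : a ≠ 0)))
      refine h2.congr (fun a => ?_)
      rw [slope_def_field]
      simp
  have hslopeF1 : Filter.Tendsto (slope F 0) (nhdsWithin 0 (Set.Ioi 0)) (nhds (-d)) := by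
    refine hslopeE.congr' ?_
    filter_upwards [self_mem_nhdsWithin] with a (ha : a ∈ Set.Ioi (0:ℝ))
    rw [slope_def_field, slope_def_field, hFeq a ha.le, hFeq 0 le_rfl]
  have hslopeF2 : Filter.Tendsto (slope F 0) (nhdsWithin 0 (Set.Ioi 0))
      (nhds (∫ y, -g y ∂Q)) := by
    refine hDC.congr' ?_
    filter_upwards [self_mem_nhdsWithin] with a ha
    exact (hFslope a ha).symm
  have huniq : ∫ y, -g y ∂Q = -d := tendsto_nhds_unique hslopeF2 hslopeF1
  rw [integral_neg] at huniq
  have : ∫ y, g y ∂Q = d := by linarith [neg_injective huniq]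
  simpa [hg, hd] using this
end
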